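/- arXiv:2108.08564 — 13 statements merged into one kernel-verified Lean document; each statement's English description precedes it below -/
import Mathlib

section
/- Let I be a nonzero proper homogeneous ideal of R = K[X_1,...,X_s], minimally generated by homogeneous polynomials f_1,...,f_t, let p(I) = max{deg(f_i) : f_i^n ∉ mI^n for all n ≥ 1}, J = (f_i : deg(f_i) ≤ p(I)), and r(I) the reduction number of I with respect to J. Then the degree excess function ε(I;n) = d(I^n) − p(I)n satisfies ε(I;n) ≥ n for all n ≤ r(I). -/
open MvPolynomial

/-- The maximal generating degree `d(I)` of a homogeneous ideal: the least `d` such that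
`I` is generated by its elements of degree at most `d`. -/
noncomputable def maxGenDeg {K : Type*} [Field K] {σ : Type*}
    (I : Ideal (MvPolynomial σ K)) : ℕ :=
  sInf {d | I = Ideal.span {f | f ∈ I ∧ f.totalDegree ≤ d}}

namespace KodiyalamAux

attribute [local instance] MvPolynomial.gradedAlgebra

variable {K : Type*} [Field K] {σ : Type*} [DecidableEq σ]

/-- Property: all monomials of `g` have degree at least `D`. -/
def LowZero (D : ℕ) (g : MvPolynomial σ K) : Prop :=
  ∀ μ : σ →₀ ℕ, coeff μ g ≠ 0 → D ≤ μ.degree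

omit [DecidableEq σ] in
lemma lowZero_zero (D : ℕ) : LowZero D (0 : MvPolynomial σ K) := by
  intro μ h; simp at h

omit [DecidableEq σ] in
lemma lowZero_add {D : ℕ} {a b : MvPolynomial σ K} (ha : LowZero D a) (hb : LowZero D b) :
    LowZero D (a + b) := by
  intro μ h
  rw [coeff_add] at h
  by_cases h1 : coeff μ a ≠ 0
  · exact ha μ h1
  · push_neg at h1
    exact hb μ (by simpa [h1] using h)

lemma lowZero_mul {D1 D2 : ℕ} {a b : MvPolynomial σ K} (ha : LowZero D1 a) (hb : LowZero D2 b) :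
    LowZero (D1 + D2) (a * b) := by
  intro μ h
  rw [coeff_mul] at h
  obtain ⟨x, hx, hne⟩ := Finset.exists_ne_zero_of_sum_ne_zero h
  rw [Finset.HasAntidiagonal.mem_antidiagonal] at hx
  have h1 : coeff x.1 a ≠ 0 := fun h0 => hne (by simp [h0])
  have h2 : coeff x.2 b ≠ 0 := fun h0 => hne (by simp [h0])
  calc D1 + D2 ≤ x.1.degree + x.2.degree := Nat.add_le_add (ha _ h1) (hb _ h2)
    _ = μ.degree := by
        simp only [Finsupp.degree_eq_weight_one]
        rw [← hx, map_add]

lemma lowZero_mul_left {D : ℕ} (c : MvPolynomial σ K) {b : MvPolynomial σ K}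
    (hb : LowZero D b) : LowZero D (c * b) := by
  have h0 : LowZero 0 c := fun μ _ => Nat.zero_le _
  have := lowZero_mul h0 hb
  simpa using this

/-- Bundled ideal of polynomials all of whose monomials have degree ≥ D. -/
def lowZeroIdeal (σ : Type*) [DecidableEq σ] (K : Type*) [Field K] (D : ℕ) :
    Ideal (MvPolynomial σ K) where
  carrier := {g | LowZero D g}
  zero_mem' := lowZero_zero D
  add_mem' := lowZero_add
  smul_mem' := fun c _ hb => lowZero_mul_left c hb

lemma mem_lowZeroIdeal {D : ℕ} {g : MvPolynomial σ K} :
    g ∈ lowZeroIdeal σ K D ↔ LowZero D g := Iff.rfl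

lemma pow_le_lowZeroIdeal {Q : Ideal (MvPolynomial σ K)} {D : ℕ}
    (hQ : Q ≤ lowZeroIdeal σ K D) (n : ℕ) :
    Q ^ (n + 1) ≤ lowZeroIdeal σ K ((n + 1) * D) := by
  induction n with
  | zero => simpa using hQ
  | succ n ih =>
    have h2 : Q ^ (n + 2) = Q ^ (n + 1) * Q := by ring
    rw [h2]
    refine Ideal.mul_le.2 fun a ha b hb => ?_
    have h3 : ((n + 2) : ℕ) * D = (n + 1) * D + D := by ring
    rw [mem_lowZeroIdeal, h3]
    exact lowZero_mul (ih ha) (hQ hb)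

omit [DecidableEq σ] in
lemma decompose_coe_eq (g : MvPolynomial σ K) (d : ℕ) :
    (DirectSum.decompose (homogeneousSubmodule σ K) g d : MvPolynomial σ K)
      = homogeneousComponent d g := by
  rw [← DirectSum.Decomposition.decompose'_eq]
  exact MvPolynomial.decomposition.decompose'_apply g d

omit [DecidableEq σ] in
lemma homComp_mem {I : Ideal (MvPolynomial σ K)}
    (hI : I.IsHomogeneous (homogeneousSubmodule σ K)) {g : MvPolynomial σ K}
    (hg : g ∈ I) (d : ℕ) : homogeneousComponent d g ∈ I := by
  have := hI d hg
  rwa [decompose_coe_eq] at this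

omit [DecidableEq σ] in
lemma isHomog_pow {I : Ideal (MvPolynomial σ K)}
    (hI : I.IsHomogeneous (homogeneousSubmodule σ K)) (n : ℕ) :
    (I ^ n).IsHomogeneous (homogeneousSubmodule σ K) := by
  induction n with
  | zero => simpa [Ideal.one_eq_top] using Ideal.IsHomogeneous.top (homogeneousSubmodule σ K)
  | succ n ih => rw [pow_succ]; exact ih.mul hI

omit [DecidableEq σ] in
lemma span_low_eq {I : Ideal (MvPolynomial σ K)}
    (hI : I.IsHomogeneous (homogeneousSubmodule σ K)) (p : ℕ) :
    Ideal.span {g : MvPolynomial σ K | g ∈ I ∧ g.totalDegree ≤ p}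
      = Ideal.span {g : MvPolynomial σ K |
          (g ∈ I ∧ g.totalDegree ≤ p) ∧ ∃ d, g.IsHomogeneous d} := by
  apply le_antisymm
  · rw [Ideal.span_le]
    rintro g ⟨hgI, hgp⟩
    have hmem : (∑ i ∈ Finset.range (g.totalDegree + 1), homogeneousComponent i g)
        ∈ Ideal.span {g : MvPolynomial σ K |
          (g ∈ I ∧ g.totalDegree ≤ p) ∧ ∃ d, g.IsHomogeneous d} := by
      refine Ideal.sum_mem _ fun i hi => ?_
      refine Ideal.subset_span ⟨⟨homComp_mem hI hgI i, ?_⟩, i,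
        homogeneousComponent_isHomogeneous i g⟩
      refine (homogeneousComponent_isHomogeneous i g).totalDegree_le.trans ?_
      exact le_trans (Nat.lt_succ_iff.mp (Finset.mem_range.mp hi)) hgp
    rwa [sum_homogeneousComponent] at hmem
  · exact Ideal.span_mono fun g hg => hg.1

omit [DecidableEq σ] in
lemma span_low_isHomog {I : Ideal (MvPolynomial σ K)}
    (hI : I.IsHomogeneous (homogeneousSubmodule σ K)) (p : ℕ) :
    (Ideal.span {g : MvPolynomial σ K | g ∈ I ∧ g.totalDegree ≤ p}).IsHomogeneous
      (homogeneousSubmodule σ K) := by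
  rw [span_low_eq hI p]
  refine Ideal.homogeneous_span _ _ fun x hx => ?_
  obtain ⟨_, d, hd⟩ := hx
  exact ⟨d, (mem_homogeneousSubmodule d x).2 hd⟩

end KodiyalamAux

attribute [local instance] MvPolynomial.gradedAlgebra

open KodiyalamAux in
/-- with Kodiyalam's construction, the degree excess function
`ε(I;n) = d(I^n) − p(I)·n` satisfies `ε(I;n) ≥ n` for all `n ≤ r(I)`. -/
theorem degree_excess_ge_n_up_to_reduction_number
    {K : Type*} [Field K] (s t : ℕ) (f : Fin t → MvPolynomial (Fin s) K)
    (deg : Fin t → ℕ) (hhom : ∀ i, (f i).IsHomogeneous (deg i))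
    (I : Ideal (MvPolynomial (Fin s) K)) (hI : I = Ideal.span (Set.range f))
    (hne : I ≠ ⊥) (hpr : I ≠ ⊤)
    (hmin : ∀ i, f i ∉ Ideal.span (f '' {j | j ≠ i}))
    (m : Ideal (MvPolynomial (Fin s) K)) (hm : m = Ideal.span (Set.range X))
    (p : ℕ) (hp : p = sSup {d | ∃ i, deg i = d ∧ ∀ n ≥ 1, f i ^ n ∉ m * I ^ n})
    (J : Ideal (MvPolynomial (Fin s) K))
    (hJ : J = Ideal.span {g | g ∈ I ∧ g.totalDegree ≤ p})
    (r : ℕ) (hr : r = sInf {n | I ^ (n + 1) = J * I ^ n}) :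
    ∀ n ≤ r, p * n + n ≤ maxGenDeg (I ^ n) := by
  classical
  -- homogeneity of `I`
  have hIhom : I.IsHomogeneous (homogeneousSubmodule (Fin s) K) := by
    rw [hI]
    refine Ideal.homogeneous_span _ _ ?_
    rintro x ⟨i, rfl⟩
    exact ⟨deg i, (mem_homogeneousSubmodule _ _).2 (hhom i)⟩
  have hJhom : J.IsHomogeneous (homogeneousSubmodule (Fin s) K) := hJ ▸ span_low_isHomog hIhom p
  -- the ideal generated by the high-degree generators
  set Q : Ideal (MvPolynomial (Fin s) K) := Ideal.span (f '' {i | p < deg i}) with hQ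
  have hJleI : J ≤ I := by
    rw [hJ]
    exact Ideal.span_le.2 fun g hg => hg.1
  have hQleI : Q ≤ I := by
    rw [hQ, hI]
    exact Ideal.span_mono (Set.image_subset_range f _)
  have hsplit : I ≤ J ⊔ Q := by
    rw [hI]
    refine Ideal.span_le.2 ?_
    rintro x ⟨i, rfl⟩
    by_cases hdeg : deg i ≤ p
    · refine le_sup_left (α := Ideal (MvPolynomial (Fin s) K)) ?_
      rw [hJ]
      exact Ideal.subset_span ⟨hI ▸ Ideal.subset_span ⟨i, rfl⟩,
        (hhom i).totalDegree_le.trans hdeg⟩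
    · refine le_sup_right (α := Ideal (MvPolynomial (Fin s) K)) ?_
      exact Ideal.subset_span ⟨i, not_le.mp hdeg, rfl⟩
  have hQpowleI : ∀ k : ℕ, Q ^ k ≤ I ^ k := by
    intro k
    induction k with
    | zero => exact le_rfl
    | succ k ih => rw [pow_succ, pow_succ]; exact Ideal.mul_mono ih hQleI
  -- the power decomposition
  have hpow : ∀ n : ℕ, I ^ (n + 1) ≤ J * I ^ n ⊔ Q ^ (n + 1) := by
    intro n
    induction n with
    | zero =>
      simpa [Ideal.mul_top] using hsplit
    | succ n ih =>
      have h1 : I ^ (n + 2) = I * I ^ (n + 1) := by ring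
      rw [h1]
      calc I * I ^ (n + 1) ≤ I * (J * I ^ n ⊔ Q ^ (n + 1)) := Ideal.mul_mono_right ih
        _ = I * (J * I ^ n) ⊔ I * Q ^ (n + 1) := Ideal.mul_sup _ _ _
        _ ≤ J * I ^ (n + 1) ⊔ Q ^ (n + 2) := by
            refine sup_le ?_ ?_
            · refine le_sup_of_le_left (le_of_eq ?_)
              ring
            · calc I * Q ^ (n + 1) ≤ (J ⊔ Q) * Q ^ (n + 1) := Ideal.mul_mono_left hsplit
                _ = J * Q ^ (n + 1) ⊔ Q * Q ^ (n + 1) := Ideal.sup_mul _ _ _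
                _ ≤ J * I ^ (n + 1) ⊔ Q ^ (n + 2) := by
                    refine sup_le (le_sup_of_le_left ?_) (le_sup_of_le_right (le_of_eq ?_))
                    · exact Ideal.mul_mono_right (hQpowleI (n + 1))
                    · ring
  -- all monomials in `Q` have degree ≥ p + 1
  have hQlow : Q ≤ lowZeroIdeal (Fin s) K (p + 1) := by
    rw [hQ]
    refine Ideal.span_le.2 ?_
    rintro x ⟨i, hi, rfl⟩
    intro μ hμ
    have := (hhom i) hμ
    have h2 : (Finsupp.weight fun _ => (1 : ℕ)) μ = deg i := this
    rw [Finsupp.degree_eq_weight_one, h2]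
    exact hi
  -- the key containment
  have key : ∀ n : ℕ, ∀ g ∈ I ^ (n + 1), g.totalDegree < (n + 1) * (p + 1) →
      g ∈ J * I ^ n := by
    intro n g hg hdeg
    obtain ⟨a, ha, b, hb, hab⟩ := Submodule.mem_sup.mp (hpow n hg)
    have hJIhom : (J * I ^ n).IsHomogeneous (homogeneousSubmodule (Fin s) K) := hJhom.mul (isHomog_pow hIhom n)
    have hblow : LowZero ((n + 1) * (p + 1)) b := pow_le_lowZeroIdeal hQlow n hb
    have hball : ∀ d, d < (n + 1) * (p + 1) → homogeneousComponent d b = 0 := by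
      intro d hd
      apply MvPolynomial.ext
      intro μ
      rw [coeff_homogeneousComponent, coeff_zero]
      split_ifs with hμ
      · by_contra hc
        have := hblow μ hc
        omega
      · rfl
    have hcomp : ∀ d, homogeneousComponent d g ∈ J * I ^ n := by
      intro d
      by_cases hd : d < (n + 1) * (p + 1)
      · have heq : homogeneousComponent d g = homogeneousComponent d a := by
          rw [← hab, map_add, hball d hd, add_zero]
        rw [heq]
        exact homComp_mem hJIhom ha d
      · push_neg at hd
        rw [homogeneousComponent_eq_zero d g (lt_of_lt_of_le hdeg hd)]
        exact zero_mem _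
    have hsum : (∑ i ∈ Finset.range (g.totalDegree + 1), homogeneousComponent i g)
        ∈ J * I ^ n := Ideal.sum_mem _ fun i _ => hcomp i
    rwa [sum_homogeneousComponent] at hsum
  -- conclude
  intro n hn
  cases n with
  | zero => exact Nat.zero_le _
  | succ n =>
    unfold maxGenDeg
    apply le_csInf
    · obtain ⟨G, hG⟩ : (I ^ (n + 1)).FG := IsNoetherian.noetherian _
      refine ⟨G.sup totalDegree, le_antisymm ?_ (Ideal.span_le.2 fun g hg => hg.1)⟩
      conv_lhs => rw [← hG]
      refine Ideal.span_le.2 fun x hx => Ideal.subset_span ?_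
      exact ⟨hG ▸ Ideal.subset_span hx, Finset.le_sup hx⟩
    · intro d hd
      by_contra hlt
      push_neg at hlt
      have hdlt : d < (n + 1) * (p + 1) := by
        have : (n + 1) * (p + 1) = p * (n + 1) + (n + 1) := by ring
        omega
      have hle : I ^ (n + 1) ≤ J * I ^ n := by
        rw [hd]
        refine Ideal.span_le.2 fun g hg => ?_
        exact key n g hg.1 (lt_of_le_of_lt hg.2 hdlt)
      have hge : J * I ^ n ≤ I ^ (n + 1) := by
        calc J * I ^ n ≤ I * I ^ n := Ideal.mul_mono_left hJleI
          _ = I ^ (n + 1) := by ring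
      have hmem : n ∈ {k | I ^ (k + 1) = J * I ^ k} := le_antisymm hle hge
      have : r ≤ n := hr ▸ Nat.sInf_le hmem
      omega
end

section
/- Let I be a nonzero proper homogeneous ideal of R = K[X_1,...,X_s], J the Kodiyalam reduction of I with d(J) = p(I), and r(I) the reduction number of I with respect to J. Then ε(I;n) ≤ min{n, r(I)}·(d(I) − p(I)) for all n ≥ 1, where ε(I;n) = d(I^n) − p(I)n. -/
open MvPolynomial Pointwise

section helpers
variable {K : Type*} [Field K] {s : ℕ}

lemma my_span_pow {A : Type*} [CommSemiring A] (S : Set A) (n : ℕ) :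
    Ideal.span S ^ n = Ideal.span (S ^ n) := by
  induction n with
  | zero => simp [Ideal.one_eq_top]
  | succ n ih => rw [pow_succ, ih, Ideal.span_mul_span', ← pow_succ]

lemma maxGenDeg_spec (A : Ideal (MvPolynomial (Fin s) K)) :
    A = Ideal.span {g | g ∈ A ∧ g.totalDegree ≤ maxGenDeg A} := by
  have hne : ({d | A = Ideal.span {g | g ∈ A ∧ g.totalDegree ≤ d}}).Nonempty := by
    obtain ⟨G, hG⟩ := IsNoetherian.noetherian A
    refine ⟨G.sup fun g => g.totalDegree, le_antisymm ?_ ?_⟩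
    · rw [← hG]
      refine Ideal.span_le.mpr fun g hg => ?_
      exact Ideal.subset_span ⟨Ideal.subset_span hg, Finset.le_sup hg⟩
    · exact Ideal.span_le.mpr fun g hg => hg.1
  exact Nat.sInf_mem hne

lemma maxGenDeg_le {A : Ideal (MvPolynomial (Fin s) K)} {d : ℕ}
    (h : A = Ideal.span {g | g ∈ A ∧ g.totalDegree ≤ d}) : maxGenDeg A ≤ d :=
  Nat.sInf_le h

lemma maxGenDeg_mul_le (A B : Ideal (MvPolynomial (Fin s) K)) :
    maxGenDeg (A * B) ≤ maxGenDeg A + maxGenDeg B := by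
  apply maxGenDeg_le
  apply le_antisymm
  · conv_lhs => rw [maxGenDeg_spec A, maxGenDeg_spec B]
    rw [Ideal.span_mul_span']
    refine Ideal.span_le.mpr ?_
    rintro g ⟨a, ⟨haA, hada⟩, b, ⟨hbB, hbdb⟩, rfl⟩
    refine Ideal.subset_span ⟨Ideal.mul_mem_mul haA hbB, ?_⟩
    exact le_trans (totalDegree_mul a b) (add_le_add hada hbdb)
  · exact Ideal.span_le.mpr fun g hg => hg.1

lemma maxGenDeg_top : maxGenDeg (⊤ : Ideal (MvPolynomial (Fin s) K)) = 0 := by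
  have h : (⊤ : Ideal (MvPolynomial (Fin s) K)) =
      Ideal.span {g : MvPolynomial (Fin s) K | g ∈ (⊤ : Ideal (MvPolynomial (Fin s) K)) ∧ g.totalDegree ≤ 0} := by
    symm
    rw [Ideal.eq_top_iff_one]
    exact Ideal.subset_span ⟨trivial, by simp⟩
  exact Nat.le_zero.mp (maxGenDeg_le h)

lemma maxGenDeg_pow_le (A : Ideal (MvPolynomial (Fin s) K)) (n : ℕ) :
    maxGenDeg (A ^ n) ≤ n * maxGenDeg A := by
  induction n with
  | zero => simp [maxGenDeg_top]
  | succ n ih =>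
      calc maxGenDeg (A ^ (n+1)) ≤ maxGenDeg (A ^ n) + maxGenDeg A := by
            rw [pow_succ]; exact maxGenDeg_mul_le _ _
      _ ≤ n * maxGenDeg A + maxGenDeg A := by omega
      _ = (n+1) * maxGenDeg A := by ring

/-- An ideal is closed under taking homogeneous components. -/
def HomCl (A : Ideal (MvPolynomial (Fin s) K)) : Prop :=
  ∀ (e : ℕ) (g : MvPolynomial (Fin s) K), g ∈ A → homogeneousComponent e g ∈ A

lemma homCl_span {S : Set (MvPolynomial (Fin s) K)}
    (hS : ∀ g ∈ S, ∃ e, g.IsHomogeneous e) : HomCl (Ideal.span S) := by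
  intro e g hg
  have key : ∀ g ∈ Ideal.span S, ∀ (c : MvPolynomial (Fin s) K) (e : ℕ),
      homogeneousComponent e (c * g) ∈ Ideal.span S := by
    intro g hg
    induction hg using Submodule.span_induction with
    | mem x hx =>
        intro c e
        obtain ⟨d, hd⟩ := hS x hx
        have hcx : c * x = ∑ a ∈ Finset.range (c.totalDegree + 1),
            homogeneousComponent a c * x := by
          rw [← Finset.sum_mul, sum_homogeneousComponent]
        rw [hcx, map_sum]
        refine Ideal.sum_mem _ fun a _ => ?_
        rw [homogeneousComponent_of_mem ((homogeneousComponent_isHomogeneous a c).mul hd)]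
        split
        · exact Ideal.mul_mem_left _ _ (Ideal.subset_span hx)
        · exact Ideal.zero_mem _
    | zero => intro c e; rw [mul_zero, map_zero]; exact Ideal.zero_mem _
    | add x y _ _ hx hy =>
        intro c e
        rw [mul_add, map_add]
        exact Ideal.add_mem _ (hx c e) (hy c e)
    | smul c' x _ hx =>
        intro c e
        rw [smul_eq_mul, ← mul_assoc]
        exact hx (c * c') e
  simpa using key g hg 1 e

lemma homCl_eq_span_homogeneous {A : Ideal (MvPolynomial (Fin s) K)} (hA : HomCl A) :
    A = Ideal.span {g | g ∈ A ∧ ∃ e, g.IsHomogeneous e} := by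
  apply le_antisymm
  · intro g hg
    have : g = ∑ i ∈ Finset.range (g.totalDegree + 1), homogeneousComponent i g :=
      (sum_homogeneousComponent g).symm
    rw [this]
    refine Ideal.sum_mem _ fun i _ => Ideal.subset_span ?_
    exact ⟨hA i g hg, i, homogeneousComponent_isHomogeneous i g⟩
  · exact Ideal.span_le.mpr fun g hg => hg.1

lemma homCl_mul {A B : Ideal (MvPolynomial (Fin s) K)} (hA : HomCl A) (hB : HomCl B) :
    HomCl (A * B) := by
  rw [homCl_eq_span_homogeneous hA, homCl_eq_span_homogeneous hB, Ideal.span_mul_span']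
  apply homCl_span
  rintro g ⟨a, ⟨-, da, hda⟩, b, ⟨-, db, hdb⟩, rfl⟩
  exact ⟨da + db, hda.mul hdb⟩

lemma homCl_top : HomCl (⊤ : Ideal (MvPolynomial (Fin s) K)) := fun _ _ _ => trivial

lemma homCl_pow {A : Ideal (MvPolynomial (Fin s) K)} (hA : HomCl A) (n : ℕ) :
    HomCl (A ^ n) := by
  induction n with
  | zero => simpa using homCl_top
  | succ n ih => rw [pow_succ]; exact homCl_mul ih hA

lemma homCl_degLE {A : Ideal (MvPolynomial (Fin s) K)} (hA : HomCl A) (p : ℕ) :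
    HomCl (Ideal.span {g | g ∈ A ∧ g.totalDegree ≤ p}) := by
  have hset : Ideal.span {g | g ∈ A ∧ g.totalDegree ≤ p}
      = Ideal.span {g : MvPolynomial (Fin s) K |
          (g ∈ A ∧ g.totalDegree ≤ p) ∧ ∃ e, g.IsHomogeneous e} := by
    apply le_antisymm
    · refine Ideal.span_le.mpr ?_
      rintro g ⟨hgA, hgd⟩
      have hsum : g = ∑ i ∈ Finset.range (g.totalDegree + 1), homogeneousComponent i g :=
        (sum_homogeneousComponent g).symm
      rw [SetLike.mem_coe, hsum]
      refine Ideal.sum_mem _ fun i hi => Ideal.subset_span ?_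
      refine ⟨⟨hA i g hgA, ?_⟩, i, homogeneousComponent_isHomogeneous i g⟩
      refine le_trans (homogeneousComponent_isHomogeneous i g).totalDegree_le ?_
      have := Finset.mem_range.mp hi
      omega
    · exact Ideal.span_mono fun g hg => hg.1
  rw [hset]
  exact homCl_span fun g hg => hg.2

lemma nakayama {T U : Ideal (MvPolynomial (Fin s) K)} (hT : HomCl T) (hU : HomCl U)
    (h : T ≤ U + Ideal.span (Set.range (X : Fin s → MvPolynomial (Fin s) K)) * T) :
    T ≤ U := by
  set M := Ideal.span (Set.range (X : Fin s → MvPolynomial (Fin s) K)) with hM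
  have key : ∀ e : ℕ, ∀ g ∈ T, g.IsHomogeneous e → g ∈ U := by
    intro e
    induction e using Nat.strong_induction_on with
    | _ e IH =>
    intro g hgT hge
    obtain ⟨u, huU, v, hvMT, hguv⟩ := Submodule.mem_sup.mp (h hgT)
    have hcomp : ∀ w ∈ M * T, homogeneousComponent e w ∈ U := by
      intro w hw
      refine Submodule.mul_induction_on hw (fun m hm t ht => ?_)
        (fun x y hx hy => by rw [map_add]; exact Ideal.add_mem _ hx hy)
      induction hm using Submodule.span_induction generalizing t with
      | mem x hx =>
          obtain ⟨j, rfl⟩ := hx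
          have hxt : X j * t = ∑ b ∈ Finset.range (t.totalDegree + 1),
              X j * homogeneousComponent b t := by
            rw [← Finset.mul_sum, sum_homogeneousComponent]
          rw [hxt, map_sum]
          refine Ideal.sum_mem _ fun b _ => ?_
          rw [homogeneousComponent_of_mem ((isHomogeneous_X K j).mul
            (homogeneousComponent_isHomogeneous b t))]
          split_ifs with he
          · exact Ideal.mul_mem_left _ _ (IH b (by omega) _ (hT b t ht)
              (homogeneousComponent_isHomogeneous b t))
          · exact Ideal.zero_mem _
      | zero => rw [zero_mul, map_zero]; exact Ideal.zero_mem _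
      | add x y hxM hyM hx hy =>
          rw [add_mul, map_add]
          exact Ideal.add_mem _ (hx t ht) (hy t ht)
      | smul c m hmM hmind =>
          rw [smul_eq_mul]
          have hrw : c * m * t = m * (c * t) := by ring
          rw [hrw]
          exact hmind (c * t) (Ideal.mul_mem_left _ c ht)
    have hg : g = homogeneousComponent e g := by
      rw [homogeneousComponent_of_mem hge, if_pos rfl]
    rw [hg, ← hguv, map_add]
    exact Ideal.add_mem _ (hU e u huU) (hcomp v hvMT)
  intro g hgT
  have hsum : g = ∑ i ∈ Finset.range (g.totalDegree + 1), homogeneousComponent i g :=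
    (sum_homogeneousComponent g).symm
  rw [hsum]
  exact Ideal.sum_mem _ fun i _ => key i _ (hT i g hgT)
    (homogeneousComponent_isHomogeneous i g)

end helpers

/-- `ε(I;n) ≤ min{n, r(I)}·(d(I) − p(I))` for all `n ≥ 1`. -/
theorem degree_excess_upper_bound
    {K : Type*} [Field K] (s t : ℕ) (f : Fin t → MvPolynomial (Fin s) K)
    (deg : Fin t → ℕ) (hhom : ∀ i, (f i).IsHomogeneous (deg i))
    (I : Ideal (MvPolynomial (Fin s) K)) (hI : I = Ideal.span (Set.range f))
    (hne : I ≠ ⊥) (hpr : I ≠ ⊤)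
    (hmin : ∀ i, f i ∉ Ideal.span (f '' {j | j ≠ i}))
    (M : Ideal (MvPolynomial (Fin s) K)) (hM : M = Ideal.span (Set.range X))
    (p : ℕ) (hp : p = sSup {d | ∃ i, deg i = d ∧ ∀ n ≥ 1, f i ^ n ∉ M * I ^ n})
    (J : Ideal (MvPolynomial (Fin s) K))
    (hJ : J = Ideal.span {g | g ∈ I ∧ g.totalDegree ≤ p})
    (hdJ : maxGenDeg J = p)
    (r : ℕ) (hr : r = sInf {n | I ^ (n + 1) = J * I ^ n}) :
    ∀ n : ℕ, 1 ≤ n →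
      maxGenDeg (I ^ n) ≤ p * n + min n r * (maxGenDeg I - p) := by
  -- basic facts
  have hfI : ∀ j, f j ∈ I := fun j => hI ▸ Ideal.subset_span ⟨j, rfl⟩
  have hJI : J ≤ I := by
    rw [hJ]; exact Ideal.span_le.mpr fun g hg => hg.1
  have hIhom : HomCl I := hI ▸ homCl_span (by rintro g ⟨i, rfl⟩; exact ⟨deg i, hhom i⟩)
  have hJhom : HomCl J := hJ ▸ homCl_degLE hIhom p
  -- step A: generators of degree > p are "nilpotent mod M"
  have hA : ∀ i, p < deg i → ∃ n, 1 ≤ n ∧ f i ^ n ∈ M * I ^ n := by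
    intro i hi
    by_contra hcon
    push_neg at hcon
    have hbdd : BddAbove {d | ∃ i, deg i = d ∧ ∀ n ≥ 1, f i ^ n ∉ M * I ^ n} := by
      refine ⟨Finset.univ.sup deg, fun d hd => ?_⟩
      obtain ⟨i', rfl, -⟩ := hd
      exact Finset.le_sup (Finset.mem_univ i')
    have hmem : deg i ∈ {d | ∃ i, deg i = d ∧ ∀ n ≥ 1, f i ^ n ∉ M * I ^ n} :=
      ⟨i, rfl, fun n hn => hcon n hn⟩
    have := le_csSup hbdd hmem
    omega
  -- step B: a uniform exponent
  choose nfun hn1 hn2 using hA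
  set m : ℕ := 1 + Finset.univ.sup (fun i : Fin t =>
      if h : p < deg i then nfun i h else 0) with hm_def
  have hm1 : 1 ≤ m := by omega
  have hpm : ∀ i (h : p < deg i), ∀ c, m ≤ c → f i ^ c ∈ M * I ^ c := by
    intro i h c hc
    have hle : nfun i h ≤ m := by
      have h1 : (if h' : p < deg i then nfun i h' else 0) ≤
          Finset.univ.sup (fun i : Fin t => if h' : p < deg i then nfun i h' else 0) :=
        Finset.le_sup (f := fun i : Fin t => if h' : p < deg i then nfun i h' else 0)
          (Finset.mem_univ i)
      rw [dif_pos h] at h1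
      omega
    have hsplit : f i ^ c = f i ^ nfun i h * f i ^ (c - nfun i h) := by
      rw [← pow_add]
      congr 1
      omega
    have hmem : f i ^ nfun i h * f i ^ (c - nfun i h) ∈
        (M * I ^ nfun i h) * I ^ (c - nfun i h) :=
      Ideal.mul_mem_mul (hn2 i h) (Ideal.pow_mem_pow (hfI i) _)
    rw [hsplit]
    have hid : (M * I ^ nfun i h) * I ^ (c - nfun i h) = M * I ^ c := by
      rw [mul_assoc, ← pow_add]
      congr 2
      omega
    rwa [hid] at hmem
  -- step C: for n ≥ t * m, I^(n+1) ≤ J*I^n + M*I^(n+1)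
  have hC : ∀ n, t * m ≤ n → I ^ (n + 1) ≤ J * I ^ n + M * I ^ (n + 1) := by
    intro n hn
    conv_lhs => rw [hI, my_span_pow]
    refine Ideal.span_le.mpr fun g hg => ?_
    rw [Set.mem_pow] at hg
    obtain ⟨c, hc⟩ := hg
    -- choose indices
    have hidx : ∀ k : Fin (n + 1), ∃ i : Fin t, f i = (c k : MvPolynomial (Fin s) K) :=
      fun k => (c k).2
    choose idx hidx' using hidx
    have hgprod : g = ∏ k : Fin (n + 1), f (idx k) := by
      rw [← hc, List.prod_ofFn]
      exact Finset.prod_congr rfl fun k _ => (hidx' k).symm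
    by_cases hcase : ∃ k, deg (idx k) ≤ p
    · -- a factor lies in J
      obtain ⟨k, hk⟩ := hcase
      have hsplit : g = f (idx k) * ∏ k' ∈ Finset.univ.erase k, f (idx k') := by
        rw [hgprod, ← Finset.mul_prod_erase Finset.univ _ (Finset.mem_univ k)]
      have h1 : f (idx k) ∈ J := by
        rw [hJ]
        exact Ideal.subset_span ⟨hfI _, le_trans (hhom _).totalDegree_le hk⟩
      have h2 : (∏ k' ∈ Finset.univ.erase k, f (idx k')) ∈ I ^ n := by
        have := Ideal.prod_mem_prod (s := Finset.univ.erase k)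
          (I := fun _ => I) (x := fun k' => f (idx k')) (fun k' _ => hfI _)
        rwa [Finset.prod_const, Finset.card_erase_of_mem (Finset.mem_univ k),
          Finset.card_univ, Fintype.card_fin, Nat.add_sub_cancel] at this
      rw [SetLike.mem_coe, hsplit]
      exact Submodule.mem_sup_left (Ideal.mul_mem_mul h1 h2)
    · -- all factors have degree > p : pigeonhole
      push_neg at hcase
      have ht0 : 0 < t := (idx 0).pos
      -- counting
      have hsum : (Finset.univ : Finset (Fin (n + 1))).card =
          ∑ j : Fin t, ((Finset.univ : Finset (Fin (n + 1))).filter fun k => idx k = j).card :=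
        Finset.card_eq_sum_card_fiberwise fun k _ => Finset.mem_univ (idx k)
      have hex : ∃ j : Fin t,
          m ≤ ((Finset.univ : Finset (Fin (n + 1))).filter fun k => idx k = j).card := by
        by_contra hcon
        push_neg at hcon
        have hle : ∑ j : Fin t,
            ((Finset.univ : Finset (Fin (n + 1))).filter fun k => idx k = j).card
            ≤ t * (m - 1) := by
          calc _ ≤ ∑ _j : Fin t, (m - 1) :=
                Finset.sum_le_sum fun j _ => by have := hcon j; omega
          _ = t * (m - 1) := by
                rw [Finset.sum_const, Finset.card_univ, Fintype.card_fin, smul_eq_mul]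
        have hcard : (Finset.univ : Finset (Fin (n + 1))).card = n + 1 := by
          rw [Finset.card_univ, Fintype.card_fin]
        have hm' : m = (m - 1) + 1 := by omega
        have htm : t * (m - 1) + t = t * m := by
          conv_rhs => rw [hm']
          ring
        omega
      obtain ⟨j, hj⟩ := hex
      set cnt := ((Finset.univ : Finset (Fin (n + 1))).filter fun k => idx k = j).card with hcnt
      -- j has degree > p
      have hjdeg : p < deg j := by
        have hpos : 0 < cnt := by omega
        rw [hcnt, Finset.card_pos] at hpos
        obtain ⟨k, hk⟩ := hpos
        have := (Finset.mem_filter.mp hk).2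
        rw [← this]
        exact hcase k
      -- split the product
      have hsplit : (∏ k ∈ Finset.univ.filter (fun k => idx k = j), f (idx k)) *
          ∏ k ∈ Finset.univ.filter (fun k => ¬ idx k = j), f (idx k)
          = ∏ k : Fin (n + 1), f (idx k) :=
        Finset.prod_filter_mul_prod_filter_not Finset.univ _ _
      have h1 : (∏ k ∈ Finset.univ.filter (fun k => idx k = j), f (idx k)) = f j ^ cnt := by
        calc (∏ k ∈ Finset.univ.filter (fun k => idx k = j), f (idx k))
            = ∏ _k ∈ Finset.univ.filter (fun k => idx k = j), f j :=
              Finset.prod_congr rfl fun k hk => by rw [(Finset.mem_filter.mp hk).2]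
        _ = f j ^ cnt := by rw [Finset.prod_const]
      set cnt2 := ((Finset.univ : Finset (Fin (n + 1))).filter fun k => ¬ idx k = j).card
        with hcnt2_def
      have h2 : (∏ k ∈ Finset.univ.filter (fun k => ¬ idx k = j), f (idx k)) ∈ I ^ cnt2 := by
        have := Ideal.prod_mem_prod (s := Finset.univ.filter (fun k => ¬ idx k = j))
          (I := fun _ => I) (x := fun k' => f (idx k')) (fun k' _ => hfI _)
        rwa [Finset.prod_const] at this
      have hcc : cnt + cnt2 = n + 1 := by
        have h4 := Finset.card_filter_add_card_filter_not
          (s := (Finset.univ : Finset (Fin (n + 1)))) (p := fun k => idx k = j)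
        rw [Finset.card_univ, Fintype.card_fin] at h4
        exact h4
      have hmem1 : f j ^ cnt ∈ M * I ^ cnt := hpm j hjdeg cnt hj
      have hmem : g ∈ (M * I ^ cnt) * I ^ cnt2 := by
        rw [hgprod, ← hsplit, h1]
        exact Ideal.mul_mem_mul hmem1 h2
      have hid : (M * I ^ cnt) * I ^ cnt2 = M * I ^ (n + 1) := by
        rw [mul_assoc, ← pow_add, hcc]
      rw [hid] at hmem
      exact Submodule.mem_sup_right hmem
  -- the reduction property
  have hred_ex : I ^ (t * m + 1) = J * I ^ (t * m) := by
    have hT : HomCl (I ^ (t * m + 1)) := homCl_pow hIhom _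
    have hU : HomCl (J * I ^ (t * m)) := homCl_mul hJhom (homCl_pow hIhom _)
    have hUT : J * I ^ (t * m) ≤ I ^ (t * m + 1) := by
      rw [pow_succ']
      exact Ideal.mul_mono_left hJI
    refine le_antisymm ?_ hUT
    refine nakayama hT hU ?_
    have := hC (t * m) le_rfl
    rwa [hM] at this
  have hrmem : I ^ (r + 1) = J * I ^ r := by
    have hne2 : {n | I ^ (n + 1) = J * I ^ n}.Nonempty := ⟨t * m, hred_ex⟩
    have h5 := Nat.sInf_mem hne2
    rw [hr]
    exact h5
  -- final assembly
  intro n hn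
  set dI := maxGenDeg I with hdI
  rcases le_or_gt n r with hcase | hcase
  · have h1 : maxGenDeg (I ^ n) ≤ n * dI := maxGenDeg_pow_le I n
    have h2 : n * dI ≤ p * n + n * (dI - p) := by
      have h3 : dI ≤ p + (dI - p) := by omega
      calc n * dI ≤ n * (p + (dI - p)) := Nat.mul_le_mul_left n h3
      _ = p * n + n * (dI - p) := by ring
    rw [min_eq_left hcase]
    omega
  · have hstep : ∀ k, r ≤ k → I ^ (k + 1) = J * I ^ k := by
      intro k hk
      have h1 : I ^ (k + 1) = I ^ (k - r) * I ^ (r + 1) := by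
        rw [← pow_add]
        congr 1
        omega
      rw [h1, hrmem, ← mul_assoc, mul_comm (I ^ (k - r)) J, mul_assoc, ← pow_add]
      congr 2
      omega
    have hpow : ∀ k, I ^ (r + k) = J ^ k * I ^ r := by
      intro k
      induction k with
      | zero => simp
      | succ k ih =>
          have h1 : r + (k + 1) = (r + k) + 1 := by omega
          rw [h1, hstep (r + k) (by omega), ih, ← mul_assoc, ← pow_succ']
    have hIn : I ^ n = J ^ (n - r) * I ^ r := by
      have := hpow (n - r)
      rwa [Nat.add_sub_cancel' hcase.le] at this
    have hb : maxGenDeg (I ^ n) ≤ (n - r) * p + r * dI := by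
      calc maxGenDeg (I ^ n) ≤ maxGenDeg (J ^ (n - r)) + maxGenDeg (I ^ r) := by
            rw [hIn]; exact maxGenDeg_mul_le _ _
      _ ≤ (n - r) * p + r * dI :=
            add_le_add ((maxGenDeg_pow_le J _).trans (by rw [hdJ])) (maxGenDeg_pow_le I r)
    have hfin : (n - r) * p + r * dI ≤ p * n + r * (dI - p) := by
      have h3 : dI ≤ p + (dI - p) := by omega
      calc (n - r) * p + r * dI ≤ (n - r) * p + r * (p + (dI - p)) := by
            have := Nat.mul_le_mul_left r h3
            omega
      _ = ((n - r) + r) * p + r * (dI - p) := by ring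
      _ = p * n + r * (dI - p) := by
            rw [Nat.sub_add_cancel hcase.le]
            ring
    rw [min_eq_right hcase.le]
    omega
end

section
/- Let a be a monomial ideal that is a reduction of a monomial ideal I, and f a monomial such that I = (a, f). Then the reduction number r_a(I) = min{t ≥ 1 : f^t ∈ a^t} − 1. -/
open MvPolynomial Pointwise

section helpers

variable {K : Type*} [Field K] {σ : Type*}

/-- iterated sumset -/
def iterSum {M : Type*} [AddMonoid M] (S : Set M) : ℕ → Set M
  | 0 => {0}
  | (n+1) => iterSum S n + S

lemma span_mon_mul (S T : Set (σ →₀ ℕ)) :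
    Ideal.span ((fun α => monomial α (1:K)) '' S) * Ideal.span ((fun α => monomial α (1:K)) '' T)
    = Ideal.span ((fun α => monomial α (1:K)) '' (S + T)) := by
  rw [Ideal.span_mul_span']
  congr 1
  ext x
  simp only [Set.mem_mul, Set.mem_image, Set.mem_add]
  constructor
  · rintro ⟨-, ⟨u, hu, rfl⟩, -, ⟨v, hv, rfl⟩, rfl⟩
    exact ⟨u + v, ⟨u, hu, v, hv, rfl⟩, by simp [monomial_mul]⟩
  · rintro ⟨-, ⟨u, hu, v, hv, rfl⟩, rfl⟩
    exact ⟨_, ⟨u, hu, rfl⟩, _, ⟨v, hv, rfl⟩, by simp [monomial_mul]⟩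

lemma pow_span_mon (S : Set (σ →₀ ℕ)) (j : ℕ) :
    (Ideal.span ((fun α => monomial α (1:K)) '' S)) ^ j
    = Ideal.span ((fun α => monomial α (1:K)) '' iterSum S j) := by
  induction j with
  | zero =>
      simp [iterSum, Ideal.one_eq_top, Set.image_singleton, monomial_zero']
  | succ n ih =>
      rw [pow_succ, ih, span_mon_mul, iterSum]

lemma ideal_sum_le {R : Type*} [CommRing R] {ι : Type*} (s : Finset ι) (f : ι → Ideal R)
    (J : Ideal R) (h : ∀ i ∈ s, f i ≤ J) : ∑ i ∈ s, f i ≤ J := by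
  classical
  induction s using Finset.induction with
  | empty => simpa using bot_le
  | insert _ _ hns ih =>
      rw [Finset.sum_insert hns, Submodule.add_eq_sup]
      exact sup_le (h _ (Finset.mem_insert_self _ _))
        (ih fun i hi => h i (Finset.mem_insert_of_mem hi))

lemma le_ideal_sum {R : Type*} [CommRing R] {ι : Type*} (s : Finset ι) (f : ι → Ideal R)
    {i : ι} (hi : i ∈ s) : f i ≤ ∑ j ∈ s, f j := by
  classical
  rw [← Finset.add_sum_erase _ _ hi, Submodule.add_eq_sup]
  exact le_sup_left

lemma sum_span_mon {ι : Type*} (s : Finset ι) (U : ι → Set (σ →₀ ℕ)) :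
    (∑ k ∈ s, Ideal.span ((fun α => monomial α (1:K)) '' U k))
    = Ideal.span ((fun α => monomial α (1:K)) '' ⋃ k ∈ s, U k) := by
  classical
  induction s using Finset.induction with
  | empty => simp
  | insert _ _ hns ih =>
      rw [Finset.sum_insert hns, ih, Finset.set_biUnion_insert, Set.image_union,
        Ideal.span_union, Submodule.add_eq_sup]

lemma ideal_pow_mono {R : Type*} [CommRing R] {a b : Ideal R} (h : a ≤ b) (n : ℕ) :
    a ^ n ≤ b ^ n := by
  induction n with
  | zero => simp
  | succ m ih => rw [pow_succ, pow_succ]; exact Ideal.mul_mono ih h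

lemma pow_sup_le_sum {R : Type*} [CommRing R] (a F : Ideal R) (n : ℕ) :
    (a ⊔ F) ^ n ≤ ∑ k ∈ Finset.range (n+1), a ^ (n - k) * F ^ k := by
  induction n with
  | zero => simp
  | succ n ih =>
      rw [pow_succ']
      calc (a ⊔ F) * (a ⊔ F) ^ n ≤ (a ⊔ F) * ∑ k ∈ Finset.range (n+1), a ^ (n - k) * F ^ k :=
            Ideal.mul_mono le_rfl ih
        _ ≤ ∑ k ∈ Finset.range (n+2), a ^ (n + 1 - k) * F ^ k := by
            rw [Ideal.sup_mul]
            apply sup_le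
            · rw [Finset.mul_sum]
              apply ideal_sum_le
              intro k hk
              have hk' : k ≤ n := Nat.lt_succ_iff.mp (Finset.mem_range.mp hk)
              have : a * (a ^ (n - k) * F ^ k) = a ^ (n + 1 - k) * F ^ k := by
                rw [show n + 1 - k = (n - k) + 1 from by omega, pow_succ', mul_assoc]
              rw [this]
              exact le_ideal_sum (Finset.range (n+2)) (fun j => a ^ (n + 1 - j) * F ^ j)
                (i := k) (Finset.mem_range.mpr (by omega))
            · rw [Finset.mul_sum]
              apply ideal_sum_le
              intro k hk
              have hk' : k ≤ n := Nat.lt_succ_iff.mp (Finset.mem_range.mp hk)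
              have : F * (a ^ (n - k) * F ^ k) = a ^ (n + 1 - (k+1)) * F ^ (k+1) := by
                rw [mul_left_comm, show n + 1 - (k+1) = n - k from by omega, ← pow_succ']
              rw [this]
              exact le_ideal_sum (Finset.range (n+2)) (fun j => a ^ (n + 1 - j) * F ^ j)
                (i := k + 1) (Finset.mem_range.mpr (by omega))

end helpers

section key
variable {K : Type*} [Field K] {σ : Type*}

lemma iterSum_singleton {M : Type*} [AddCommMonoid M] (α : M) (k : ℕ) :
    iterSum ({α} : Set M) k = {k • α} := by
  induction k with
  | zero => simp [iterSum]
  | succ m ih =>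
      rw [iterSum, ih, Set.singleton_add_singleton, succ_nsmul]

lemma key_iff (a I : Ideal (MvPolynomial σ K)) (f : MvPolynomial σ K)
    (S : Set (σ →₀ ℕ)) (hS : a = Ideal.span ((fun α => monomial α (1:K)) '' S))
    (α : σ →₀ ℕ) (hf : f = monomial α (1 : K))
    (hIa : I = a ⊔ Ideal.span {f}) (n : ℕ) :
    I ^ (n + 1) = a * I ^ n ↔ ∃ t, (1 ≤ t ∧ f ^ t ∈ a ^ t) ∧ t ≤ n + 1 := by
  classical
  set F := Ideal.span {f} with hF
  have haI : a ≤ I := hIa ▸ le_sup_left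
  have hFI : F ≤ I := hIa ▸ le_sup_right
  have hfpow : ∀ m : ℕ, f ^ m = monomial (m • α) (1 : K) := by
    intro m; rw [hf, monomial_pow, one_pow]
  have hFspan : ∀ k : ℕ, F ^ k
      = Ideal.span ((fun β => monomial β (1:K)) '' ({k • α} : Set (σ →₀ ℕ))) := by
    intro k
    rw [hF, hf, Ideal.span_singleton_pow, ← hf, hfpow k, Set.image_singleton]
  constructor
  · intro h
    have hfI : f ∈ I := hFI (Ideal.mem_span_singleton_self f)
    have h1 : f ^ (n + 1) ∈ a * I ^ n := h ▸ Ideal.pow_mem_pow hfI (n + 1)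
    have h2 : a * I ^ n ≤ ∑ k ∈ Finset.range (n + 1), a ^ (n + 1 - k) * F ^ k := by
      calc a * I ^ n ≤ a * ∑ k ∈ Finset.range (n + 1), a ^ (n - k) * F ^ k := by
            refine Ideal.mul_mono le_rfl ?_
            calc I ^ n = (a ⊔ F) ^ n := by rw [hIa]
              _ ≤ _ := pow_sup_le_sum a F n
        _ ≤ _ := by
            rw [Finset.mul_sum]
            apply ideal_sum_le
            intro k hk
            have hk' : k ≤ n := Nat.lt_succ_iff.mp (Finset.mem_range.mp hk)
            have : a * (a ^ (n - k) * F ^ k) = a ^ (n + 1 - k) * F ^ k := by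
              rw [show n + 1 - k = (n - k) + 1 from by omega, pow_succ', mul_assoc]
            rw [this]
            exact le_ideal_sum (Finset.range (n + 1))
              (fun j => a ^ (n + 1 - j) * F ^ j) (i := k) hk
    have h3 : f ^ (n + 1) ∈ Ideal.span ((fun β => monomial β (1:K)) ''
        ⋃ k ∈ Finset.range (n + 1), (iterSum S (n + 1 - k) + ({k • α} : Set (σ →₀ ℕ)))) := by
      rw [← sum_span_mon]
      refine (le_trans h2 ?_) h1
      apply ideal_sum_le
      intro k hk
      rw [hS, pow_span_mon, hFspan k, span_mon_mul]
      exact le_ideal_sum (Finset.range (n+1))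
        (fun k => Ideal.span ((fun β => monomial β (1:K)) ''
          (iterSum S (n + 1 - k) + ({k • α} : Set (σ →₀ ℕ))))) (i := k) hk
    rw [mem_ideal_span_monomial_image] at h3
    have hsupp : (f ^ (n + 1)).support = {(n + 1) • α} := by
      rw [hfpow, support_monomial, if_neg one_ne_zero]
    obtain ⟨β, hβmem, hβle⟩ := h3 ((n + 1) • α) (by rw [hsupp]; exact Finset.mem_singleton_self _)
    rw [Set.mem_iUnion₂] at hβmem
    obtain ⟨k, hk, hβk⟩ := hβmem
    have hk' : k ≤ n := Nat.lt_succ_iff.mp (Finset.mem_range.mp hk)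
    rw [Set.mem_add] at hβk
    obtain ⟨γ, hγ, z, hz, hzγ⟩ := hβk
    rw [Set.mem_singleton_iff] at hz
    subst hz
    rw [← hzγ] at hβle
    have hγle : γ ≤ (n + 1 - k) • α := by
      intro i
      have := hβle i
      simp only [Finsupp.add_apply, Finsupp.smul_apply, smul_eq_mul] at this ⊢
      have hkn : k ≤ n + 1 := by omega
      nlinarith [Nat.sub_add_cancel hkn, this]
    refine ⟨n + 1 - k, ⟨by omega, ?_⟩, by omega⟩
    rw [hS, pow_span_mon, mem_ideal_span_monomial_image]
    intro xi hxi
    rw [hfpow, support_monomial, if_neg one_ne_zero, Finset.mem_singleton] at hxi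
    subst hxi
    exact ⟨γ, hγ, hγle⟩
  · rintro ⟨t, ⟨ht1, hft⟩, htn⟩
    apply le_antisymm
    · calc I ^ (n + 1) = (a ⊔ F) ^ (n + 1) := by rw [hIa]
        _ ≤ ∑ k ∈ Finset.range (n + 2), a ^ (n + 1 - k) * F ^ k := pow_sup_le_sum a F (n + 1)
        _ ≤ a * I ^ n := by
            apply ideal_sum_le
            intro k hk
            have hk2 : k ≤ n + 1 := Nat.lt_succ_iff.mp (Finset.mem_range.mp hk)
            rcases Nat.lt_or_ge k (n + 1) with hkn | hkn
            · have hk' : k ≤ n := by omega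
              have : a ^ (n + 1 - k) * F ^ k = a * (a ^ (n - k) * F ^ k) := by
                rw [show n + 1 - k = (n - k) + 1 from by omega, pow_succ', mul_assoc]
              rw [this]
              refine Ideal.mul_mono le_rfl ?_
              calc a ^ (n - k) * F ^ k ≤ I ^ (n - k) * I ^ k :=
                    Ideal.mul_mono (ideal_pow_mono haI _) (ideal_pow_mono hFI _)
                _ = I ^ n := by rw [← pow_add]; congr 1; omega
            · have hk1 : k = n + 1 := by omega
              subst hk1
              rw [Nat.sub_self, pow_zero, one_mul]
              have hfe : f ^ t * f ^ (n + 1 - t) = f ^ (n + 1) := by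
                rw [← pow_add, Nat.add_sub_cancel' htn]
              have hsplit : F ^ (n + 1) = Ideal.span {f ^ t} * F ^ (n + 1 - t) := by
                rw [hF, Ideal.span_singleton_pow, Ideal.span_singleton_pow,
                  Ideal.span_singleton_mul_span_singleton, hfe]
              rw [hsplit]
              calc Ideal.span {f ^ t} * F ^ (n + 1 - t) ≤ a ^ t * I ^ (n + 1 - t) :=
                    Ideal.mul_mono ((Ideal.span_singleton_le_iff_mem _).mpr hft)
                      (ideal_pow_mono hFI _)
                _ = a * (a ^ (t - 1) * I ^ (n + 1 - t)) := by
                    have hsp : a ^ t = a * a ^ (t - 1) := by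
                      conv_lhs => rw [show t = t - 1 + 1 from by omega]
                      rw [pow_succ']
                    rw [hsp, mul_assoc]
                _ ≤ a * I ^ n := by
                    refine Ideal.mul_mono le_rfl ?_
                    calc a ^ (t - 1) * I ^ (n + 1 - t) ≤ I ^ (t - 1) * I ^ (n + 1 - t) :=
                          Ideal.mul_mono (ideal_pow_mono haI _) le_rfl
                      _ = I ^ n := by rw [← pow_add]; congr 1; omega
    · calc a * I ^ n ≤ I * I ^ n := Ideal.mul_mono haI le_rfl
        _ = I ^ (n + 1) := (pow_succ' I n).symm

end key

/-- An ideal of a polynomial ring is a monomial ideal if it is generated by monomials. -/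
def IsMonomialIdeal {K : Type*} [Field K] {σ : Type*}
    (I : Ideal (MvPolynomial σ K)) : Prop :=
  ∃ S : Set (σ →₀ ℕ), I = Ideal.span ((fun α => monomial α (1 : K)) '' S)

/-- if the monomial ideal `a` is a reduction of `I = (a, f)` with `f` a
monomial, then `r_a(I) = min{t ≥ 1 : f^t ∈ a^t} − 1`. -/
theorem reduction_number_of_monomial_adjunction
    {K : Type*} [Field K] (s : ℕ)
    (a I : Ideal (MvPolynomial (Fin s) K)) (f : MvPolynomial (Fin s) K)
    (ha : IsMonomialIdeal a) (hI : IsMonomialIdeal I)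
    (hf : ∃ α : Fin s →₀ ℕ, f = monomial α (1 : K))
    (hIa : I = a ⊔ Ideal.span {f})
    (hred : ∃ N : ℕ, ∀ n ≥ N, I ^ (n + 1) = a * I ^ n) :
    sInf {n | I ^ (n + 1) = a * I ^ n} + 1 = sInf {t | 1 ≤ t ∧ f ^ t ∈ a ^ t} := by
  obtain ⟨S, hS⟩ := ha
  obtain ⟨α, hfα⟩ := hf
  have key : ∀ n : ℕ, I ^ (n + 1) = a * I ^ n ↔ ∃ t, (1 ≤ t ∧ f ^ t ∈ a ^ t) ∧ t ≤ n + 1 :=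
    fun n => key_iff a I f S hS α hfα hIa n
  obtain ⟨N, hN⟩ := hred
  have hn0 : N ∈ {n | I ^ (n + 1) = a * I ^ n} := hN N le_rfl
  obtain ⟨t1, ht1B, -⟩ := (key N).mp hn0
  have hBne : {t | 1 ≤ t ∧ f ^ t ∈ a ^ t}.Nonempty := ⟨t1, ht1B⟩
  set t0 := sInf {t | 1 ≤ t ∧ f ^ t ∈ a ^ t} with ht0
  have ht0B : t0 ∈ {t | 1 ≤ t ∧ f ^ t ∈ a ^ t} := Nat.sInf_mem hBne
  have ht01 : 1 ≤ t0 := ht0B.1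
  have hmemA : t0 - 1 ∈ {n | I ^ (n + 1) = a * I ^ n} :=
    (key (t0 - 1)).mpr ⟨t0, ht0B, by omega⟩
  have hlb : ∀ n ∈ {n | I ^ (n + 1) = a * I ^ n}, t0 - 1 ≤ n := by
    intro n hn
    obtain ⟨t, htB, htle⟩ := (key n).mp hn
    have : t0 ≤ t := Nat.sInf_le (show t ∈ {t | 1 ≤ t ∧ f ^ t ∈ a ^ t} from htB)
    omega
  have hA : sInf {n | I ^ (n + 1) = a * I ^ n} = t0 - 1 :=
    le_antisymm (Nat.sInf_le hmemA) (hlb _ (Nat.sInf_mem ⟨_, hmemA⟩))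
  rw [hA]
  omega
end

section
/- Let p ≥ 4 and 2 ≤ a ≤ p−2 be integers with a not dividing p−1, and set m_i = X_1^{p−i}X_2^i. Let J = (m_0, m_p, m_{p−1}) and m = X_1^{p−1}X_2^a in K[X_1,X_2]. Then m^t ∉ J^t for all integers t with 0 < t ≤ ⌊(p−1)/a⌋, while m^{r+1} ∈ J^{r+1} for r = ⌊(p−1)/a⌋. -/
open MvPolynomial

private lemma sup_pow_le_aux {R : Type*} [CommRing R] (A P : Ideal R) (t : ℕ) :
    (A ⊔ P) ^ t ≤ A ^ t ⊔ P := by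
  induction t with
  | zero => simp
  | succ t ih =>
    rw [pow_succ, pow_succ]
    calc (A ⊔ P) ^ t * (A ⊔ P) ≤ (A ^ t ⊔ P) * (A ⊔ P) := Ideal.mul_mono_left ih
    _ ≤ A ^ t * A ⊔ P := by
        rw [Ideal.sup_mul, Ideal.mul_sup, Ideal.mul_sup]
        refine sup_le (sup_le le_sup_left (Ideal.mul_le_right.trans le_sup_right))
          ((sup_le Ideal.mul_le_left Ideal.mul_le_left).trans le_sup_right)

/-- for `p ≥ 4`, `2 ≤ a ≤ p−2` with `a ∤ p−1`, the monomial
`m = X₁^{p−1}X₂^a` satisfies `m^t ∉ J^t` for `0 < t ≤ ⌊(p−1)/a⌋` and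
`m^{r+1} ∈ J^{r+1}` for `r = ⌊(p−1)/a⌋`, where `J = (X₁^p, X₂^p, X₁X₂^{p−1})`. -/
theorem monomial_powers_and_reduction
    {K : Type*} [Field K] (p a : ℕ) (hp : 4 ≤ p) (ha2 : 2 ≤ a) (hap : a ≤ p - 2)
    (hnd : ¬ a ∣ (p - 1))
    (J : Ideal (MvPolynomial (Fin 2) K))
    (hJ : J = Ideal.span {X 0 ^ p, X 1 ^ p, X 0 * X 1 ^ (p - 1)})
    (m : MvPolynomial (Fin 2) K) (hm : m = X 0 ^ (p - 1) * X 1 ^ a)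
    (r : ℕ) (hr : r = (p - 1) / a) :
    (∀ t : ℕ, 0 < t → t ≤ r → m ^ t ∉ J ^ t) ∧ m ^ (r + 1) ∈ J ^ (r + 1) := by
  classical
  have hmod : (p - 1) % a ≠ 0 := fun h => hnd (Nat.dvd_of_mod_eq_zero h)
  have hltm : (p - 1) % a < a := Nat.mod_lt _ (by omega)
  have hdm : a * r + (p - 1) % a = p - 1 := by rw [hr]; exact Nat.div_add_mod _ _
  clear hr
  -- arithmetic facts
  have hra : a * r ≤ p - 2 := by omega
  have hrar : r ≤ a * r := Nat.le_mul_of_pos_left r (by omega)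
  have hrle : r ≤ p - 2 := by omega
  constructor
  · -- non-membership
    intro t ht htr hmem
    -- J^t ≤ span {X0^(p*t), X1^(p-1)}
    have hJle : J ≤ Ideal.span {X 0 ^ p} ⊔ Ideal.span {(X 1 : MvPolynomial (Fin 2) K) ^ (p - 1)} := by
      rw [hJ, Ideal.span_le]
      intro x hx
      simp only [Set.mem_insert_iff, Set.mem_singleton_iff] at hx
      rw [SetLike.mem_coe]
      rcases hx with rfl | rfl | rfl
      · exact Ideal.mem_sup_left (Ideal.subset_span rfl)
      · refine Ideal.mem_sup_right ?_
        rw [Ideal.mem_span_singleton]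
        exact ⟨X 1, by rw [← pow_succ]; congr 1; omega⟩
      · refine Ideal.mem_sup_right ?_
        rw [Ideal.mem_span_singleton]
        exact ⟨X 0, mul_comm _ _⟩
    have hpow : J ^ t ≤ Ideal.span {(X 0 : MvPolynomial (Fin 2) K) ^ p} ^ t ⊔
        Ideal.span {(X 1 : MvPolynomial (Fin 2) K) ^ (p - 1)} :=
      le_trans (Ideal.pow_right_mono hJle t) (sup_pow_le_aux _ _ t)
    have hmem2 := hpow hmem
    rw [Ideal.span_singleton_pow, ← pow_mul, sup_comm, ← Ideal.span_union,
      Set.singleton_union] at hmem2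
    -- rewrite as monomial ideal
    have hset : (insert ((X 1 : MvPolynomial (Fin 2) K) ^ (p - 1)) {X 0 ^ (p * t)}) =
        (fun s => monomial s (1 : K)) ''
          {Finsupp.single 1 (p - 1), Finsupp.single 0 (p * t)} := by
      simp [Set.image_insert_eq, X_pow_eq_monomial]
    rw [hset, mem_ideal_span_monomial_image] at hmem2
    have hmpow : m ^ t = monomial (Finsupp.single 0 ((p - 1) * t) + Finsupp.single 1 (a * t)) (1 : K) := by
      rw [hm, mul_pow, ← pow_mul, ← pow_mul, X_pow_eq_monomial, X_pow_eq_monomial,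
        monomial_mul, one_mul]
    rw [hmpow] at hmem2
    have hsupp : (Finsupp.single (0 : Fin 2) ((p - 1) * t) + Finsupp.single 1 (a * t)) ∈
        (monomial (Finsupp.single (0 : Fin 2) ((p - 1) * t) + Finsupp.single 1 (a * t)) (1 : K)).support := by
      rw [support_monomial, if_neg one_ne_zero]; exact Finset.mem_singleton_self _
    obtain ⟨si, hsi, hle⟩ := hmem2 _ hsupp
    have hta : a * t ≤ p - 2 := by
      have := Nat.mul_le_mul_left a htr
      omega
    rcases hsi with rfl | rfl
    · have := hle 1
      simp [Finsupp.single_apply] at this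
      omega
    · have h0 := hle 0
      simp [Finsupp.single_apply] at h0
      have hpt : (p - 1) * t + t = p * t := by
        rw [← Nat.succ_mul]
        congr 1
        omega
      omega
  · -- membership
    have h1 : (X 0 : MvPolynomial (Fin 2) K) ^ p ∈ J := hJ ▸ Ideal.subset_span (by simp)
    have h3 : (X 0 : MvPolynomial (Fin 2) K) * X 1 ^ (p - 1) ∈ J :=
      hJ ▸ Ideal.subset_span (by simp)
    have hbase : ((X 0 : MvPolynomial (Fin 2) K) ^ p) ^ r * (X 0 * X 1 ^ (p - 1)) ∈ J ^ (r + 1) := by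
      rw [pow_succ]
      exact Ideal.mul_mem_mul (Ideal.pow_mem_pow h1 r) h3
    have key : m ^ (r + 1) =
        (X 0 ^ (p - 2 - r) * X 1 ^ ((r + 1) * a - (p - 1))) *
          (((X 0 : MvPolynomial (Fin 2) K) ^ p) ^ r * (X 0 * X 1 ^ (p - 1))) := by
      rw [hm, mul_pow, ← pow_mul, ← pow_mul, ← pow_mul]
      have a1 : (p - 1) * (r + 1) = (p - 1) * r + (p - 1) := Nat.mul_succ _ _
      have a2 : p * r = (p - 1) * r + r := by
        conv_lhs => rw [show p = (p - 1) + 1 by omega, Nat.succ_mul]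
      have a3 : a * (r + 1) = a * r + a := Nat.mul_succ _ _
      have a4 : (r + 1) * a = a * r + a := by rw [mul_comm]; exact Nat.mul_succ _ _
      have e1 : (p - 1) * (r + 1) = (p - 2 - r) + (p * r + 1) := by omega
      have e2 : a * (r + 1) = ((r + 1) * a - (p - 1)) + (p - 1) := by omega
      rw [e1, e2, pow_add, pow_add, pow_add, pow_one]
      ring
    rw [key]
    exact Ideal.mul_mem_left _ _ hbase
end

section
/- Let p ≥ 4 and 2 ≤ a ≤ p−2 with a not dividing p−1, and let J_{p,a} = (X_1^p, X_2^p, X_1 X_2^{p−1}, X_1^{p−1} X_2^a) ⊂ K[X_1,X_2]. Then the maximal generating degree satisfies d(J_{p,a}^n) = pn + n(a−1) for 1 ≤ n ≤ r−1 and d(J_{p,a}^n) = pn + r(a−1) for n ≥ r, where r = ⌊(p−1)/a⌋. -/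
open MvPolynomial Pointwise

namespace JpaAux

/-- combine two exponents into a `Fin 2 →₀ ℕ`. -/
noncomputable def f2 (u v : ℕ) : Fin 2 →₀ ℕ := Finsupp.single 0 u + Finsupp.single 1 v

@[simp] lemma f2_apply0 (u v : ℕ) : f2 u v 0 = u := by
  simp [f2, Finsupp.single_apply]

@[simp] lemma f2_apply1 (u v : ℕ) : f2 u v 1 = v := by
  simp [f2, Finsupp.single_apply]

lemma f2_add (u v u' v' : ℕ) : f2 u v + f2 u' v' = f2 (u + u') (v + v') := by
  ext i
  fin_cases i <;> simp

lemma f2_zero : f2 0 0 = 0 := by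
  simp [f2]

lemma f2_le_f2 {u v u' v' : ℕ} : f2 u v ≤ f2 u' v' ↔ u ≤ u' ∧ v ≤ v' := by
  rw [Finsupp.le_def, Fin.forall_fin_two]
  simp

lemma f2_le_iff {u v : ℕ} {m : Fin 2 →₀ ℕ} : f2 u v ≤ m ↔ u ≤ m 0 ∧ v ≤ m 1 := by
  rw [Finsupp.le_def, Fin.forall_fin_two]
  simp

lemma sum_fin2 (m : Fin 2 →₀ ℕ) : (m.sum fun _ e => e) = m 0 + m 1 := by
  rw [Finsupp.sum_fintype _ _ (fun _ => rfl), Fin.sum_univ_two]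

lemma f2_sum (u v : ℕ) : ((f2 u v).sum fun _ e => e) = u + v := by
  rw [sum_fin2]; simp

lemma monomial_f2 {K : Type*} [Field K] (u v : ℕ) :
    (X 0 ^ u * X 1 ^ v : MvPolynomial (Fin 2) K) = monomial (f2 u v) 1 := by
  rw [X_pow_eq_monomial, X_pow_eq_monomial, monomial_mul, one_mul]
  rfl

/-- exponents of the generators of `Jpa ^ n`. -/
def Sg (p a n : ℕ) : Set (Fin 2 →₀ ℕ) :=
  {e | ∃ i j k l : ℕ, i + j + k + l = n ∧
    e = f2 (p * i + k + (p - 1) * l) (p * j + (p - 1) * k + a * l)}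

section Ideals

variable {K : Type*} [Field K] (p a : ℕ) (Jpa : Ideal (MvPolynomial (Fin 2) K))
  (hJ : Jpa = Ideal.span
      {X 0 ^ p, X 1 ^ p, X 0 * X 1 ^ (p - 1), X 0 ^ (p - 1) * X 1 ^ a})

include hJ

lemma monomial_mem {n i j k l : ℕ} (hs : i + j + k + l = n) :
    monomial (f2 (p * i + k + (p - 1) * l) (p * j + (p - 1) * k + a * l)) (1 : K)
      ∈ Jpa ^ n := by
  have h0 : (X 0 ^ p : MvPolynomial (Fin 2) K) ∈ Jpa := by
    rw [hJ]; exact Ideal.subset_span (by simp)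
  have h1 : (X 1 ^ p : MvPolynomial (Fin 2) K) ∈ Jpa := by
    rw [hJ]; exact Ideal.subset_span (by simp)
  have h2 : (X 0 * X 1 ^ (p - 1) : MvPolynomial (Fin 2) K) ∈ Jpa := by
    rw [hJ]; exact Ideal.subset_span (by simp)
  have h3 : (X 0 ^ (p - 1) * X 1 ^ a : MvPolynomial (Fin 2) K) ∈ Jpa := by
    rw [hJ]; exact Ideal.subset_span (by simp)
  have key : monomial (f2 (p * i + k + (p - 1) * l) (p * j + (p - 1) * k + a * l)) (1 : K)
      = (X 0 ^ p) ^ i * (X 1 ^ p) ^ j * (X 0 * X 1 ^ (p - 1)) ^ k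
        * (X 0 ^ (p - 1) * X 1 ^ a) ^ l := by
    rw [← monomial_f2]
    ring
  have hpow : Jpa ^ n = Jpa ^ i * Jpa ^ j * Jpa ^ k * Jpa ^ l := by
    rw [← pow_add, ← pow_add, ← pow_add, hs]
  rw [key, hpow]
  exact Ideal.mul_mem_mul (Ideal.mul_mem_mul (Ideal.mul_mem_mul
    (Ideal.pow_mem_pow h0 i) (Ideal.pow_mem_pow h1 j)) (Ideal.pow_mem_pow h2 k))
    (Ideal.pow_mem_pow h3 l)

lemma spanJ (n : ℕ) :
    Jpa ^ n = Ideal.span ((fun e => monomial e (1 : K)) '' Sg p a n) := by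
  refine le_antisymm ?_ ?_
  · induction n with
    | zero =>
      rw [pow_zero, Ideal.one_eq_top, top_le_iff, Ideal.eq_top_iff_one]
      have h1 : (1 : MvPolynomial (Fin 2) K) = monomial (f2 0 0) 1 := by
        rw [f2_zero, monomial_zero', C_1]
      rw [h1]
      exact Ideal.subset_span ⟨f2 0 0, ⟨0, 0, 0, 0, rfl, by norm_num⟩, rfl⟩
    | succ n ih =>
      have hbase : Jpa ≤ Ideal.span ((fun e => monomial e (1 : K)) '' Sg p a 1) := by
        rw [hJ, Ideal.span_le]
        rintro x hx
        simp only [Set.mem_insert_iff, Set.mem_singleton_iff] at hx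
        rcases hx with rfl | rfl | rfl | rfl
        · rw [show (X 0 ^ p : MvPolynomial (Fin 2) K) = X 0 ^ p * X 1 ^ 0 by ring,
            monomial_f2]
          exact Ideal.subset_span ⟨f2 p 0, ⟨1, 0, 0, 0, rfl, by norm_num⟩, rfl⟩
        · rw [show (X 1 ^ p : MvPolynomial (Fin 2) K) = X 0 ^ 0 * X 1 ^ p by ring,
            monomial_f2]
          exact Ideal.subset_span ⟨f2 0 p, ⟨0, 1, 0, 0, rfl, by norm_num⟩, rfl⟩
        · rw [show (X 0 * X 1 ^ (p - 1) : MvPolynomial (Fin 2) K)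
              = X 0 ^ 1 * X 1 ^ (p - 1) by ring, monomial_f2]
          exact Ideal.subset_span ⟨f2 1 (p - 1), ⟨0, 0, 1, 0, rfl, by norm_num⟩, rfl⟩
        · rw [monomial_f2]
          exact Ideal.subset_span ⟨f2 (p - 1) a, ⟨0, 0, 0, 1, rfl, by norm_num⟩, rfl⟩
      calc Jpa ^ (n + 1) = Jpa ^ n * Jpa := pow_succ Jpa n
        _ ≤ Ideal.span ((fun e => monomial e (1 : K)) '' Sg p a n)
            * Ideal.span ((fun e => monomial e (1 : K)) '' Sg p a 1) :=
          Ideal.mul_mono ih hbase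
        _ = Ideal.span (((fun e => monomial e (1 : K)) '' Sg p a n)
            * ((fun e => monomial e (1 : K)) '' Sg p a 1)) := Ideal.span_mul_span' _ _
        _ ≤ Ideal.span ((fun e => monomial e (1 : K)) '' Sg p a (n + 1)) := by
          rw [Ideal.span_le]
          rintro z hz
          rw [Set.mem_mul] at hz
          obtain ⟨x, ⟨e, ⟨i, j, k, l, hsum, rfl⟩, rfl⟩, y,
            ⟨e', ⟨i', j', k', l', hsum', rfl⟩, rfl⟩, rfl⟩ := hz
          refine Ideal.subset_span ⟨_, ⟨i + i', j + j', k + k', l + l', by omega, rfl⟩, ?_⟩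
          simp only [monomial_mul, one_mul, f2_add]
          congr 2 <;> ring
  · rw [Ideal.span_le]
    rintro x ⟨e, ⟨i, j, k, l, hsum, rfl⟩, rfl⟩
    exact monomial_mem p a Jpa hJ hsum

lemma mem_pow_iff (n : ℕ) (x : MvPolynomial (Fin 2) K) :
    x ∈ Jpa ^ n ↔ ∀ xi ∈ x.support, ∃ e ∈ Sg p a n, e ≤ xi := by
  rw [spanJ p a Jpa hJ n]
  exact mem_ideal_span_monomial_image

end Ideals

end JpaAux

-- ARITHMETIC LEMMAS

namespace JpaAux

/-- degree bound for a generator with at most `c` copies of the last generator. -/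
lemma deg_bound {p a n c i j k l : ℕ} (hp : 4 ≤ p) (ha2 : 2 ≤ a)
    (hs : i + j + k + l = n) (hl : l ≤ c) :
    p * i + k + (p - 1) * l + (p * j + (p - 1) * k + a * l) ≤ p * n + c * (a - 1) := by
  obtain ⟨q, rfl⟩ : ∃ q, p = q + 1 := ⟨p - 1, by omega⟩
  obtain ⟨b, rfl⟩ : ∃ b, a = b + 1 := ⟨a - 1, by omega⟩
  simp only [Nat.add_sub_cancel]
  have key : (q + 1) * i + k + q * l + ((q + 1) * j + q * k + (b + 1) * l)
      = (q + 1) * n + l * b := by rw [← hs]; ring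
  rw [key]
  have : l * b ≤ c * b := Nat.mul_le_mul hl (le_refl b)
  omega

lemma upperX {p r i k m l l' : ℕ} (hrp : r + 2 ≤ p) (hl : l = (r + 1) * m + l') :
    p * (i + m * r) + (k + m) + (p - 1) * l' ≤ p * i + k + (p - 1) * l := by
  obtain ⟨q, rfl⟩ : ∃ q, p = q + 1 := ⟨p - 1, by omega⟩
  simp only [Nat.add_sub_cancel]
  subst hl
  have h : m * (q * r + r + 1) ≤ m * (q * r + q) :=
    Nat.mul_le_mul (le_refl m) (by omega)
  calc (q + 1) * (i + m * r) + (k + m) + q * l'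
      = (q + 1) * i + k + q * l' + m * (q * r + r + 1) := by ring
    _ ≤ (q + 1) * i + k + q * l' + m * (q * r + q) := Nat.add_le_add_left h _
    _ = (q + 1) * i + k + q * ((r + 1) * m + l') := by ring

lemma upperY {p a r j k m l l' : ℕ} (hp : 4 ≤ p) (hq : p - 1 ≤ a * (r + 1))
    (hl : l = (r + 1) * m + l') :
    p * j + (p - 1) * (k + m) + a * l' ≤ p * j + (p - 1) * k + a * l := by
  obtain ⟨q, rfl⟩ : ∃ q, p = q + 1 := ⟨p - 1, by omega⟩
  simp only [Nat.add_sub_cancel] at hq ⊢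
  subst hl
  have h : q * m ≤ (a * (r + 1)) * m := Nat.mul_le_mul hq (le_refl m)
  calc (q + 1) * j + q * (k + m) + a * l'
      = (q + 1) * j + q * k + a * l' + q * m := by ring
    _ ≤ (q + 1) * j + q * k + a * l' + (a * (r + 1)) * m := Nat.add_le_add_left h _
    _ = (q + 1) * j + q * k + a * ((r + 1) * m + l') := by ring

lemma lower_ge {p a r n i j k l d : ℕ} (hp : 4 ≤ p) (ha2 : 2 ≤ a)
    (hnd : ¬ a ∣ (p - 1)) (hr : r = (p - 1) / a) (hrn : r ≤ n)
    (hs : i + j + k + l = n)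
    (hX : p * i + k + (p - 1) * l ≤ p * n - r)
    (hY : p * j + (p - 1) * k + a * l ≤ r * a)
    (hd : p * i + k + (p - 1) * l + (p * j + (p - 1) * k + a * l) ≤ d)
    (hdD : d < p * n + r * (a - 1)) : False := by
  obtain ⟨q, rfl⟩ : ∃ q, p = q + 1 := ⟨p - 1, by omega⟩
  obtain ⟨b, rfl⟩ : ∃ b, a = b + 1 := ⟨a - 1, by omega⟩
  simp only [Nat.add_sub_cancel] at hX hY hd hdD hnd hr
  have hb1 : 1 ≤ b := by omega
  have hmod := Nat.div_add_mod q (b + 1)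
  have hmodlt : q % (b + 1) < b + 1 := Nat.mod_lt _ (by omega)
  have hmodne : q % (b + 1) ≠ 0 := fun h => hnd (Nat.dvd_of_mod_eq_zero h)
  rw [← hr] at hmod
  have har : (b + 1) * r + 1 ≤ q := by omega
  have hid : (q + 1) * i + k + q * l + ((q + 1) * j + q * k + (b + 1) * l)
      = (q + 1) * n + b * l := by rw [← hs]; ring
  have hcomm : r * (b + 1) = (b + 1) * r := mul_comm _ _
  have hln : l < r := by
    by_contra hc
    push_neg at hc
    have h1 : b * r ≤ b * l := Nat.mul_le_mul (le_refl b) hc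
    have h2 : r * b = b * r := mul_comm _ _
    linarith
  have hrn' : r ≤ (q + 1) * n := le_trans hrn (Nat.le_mul_of_pos_left n (by omega))
  have hX' : (q + 1) * i + k + q * l + r ≤ (q + 1) * n :=
    (Nat.le_sub_iff_add_le hrn').1 hX
  have hj : j = 0 := by
    by_contra hc
    have h1 : q + 1 ≤ (q + 1) * j := Nat.le_mul_of_pos_right _ (by omega)
    linarith [Nat.zero_le (q * k), Nat.zero_le ((b + 1) * l)]
  have hk : k = 0 := by
    by_contra hc
    have h1 : q ≤ q * k := Nat.le_mul_of_pos_right _ (by omega)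
    linarith [Nat.zero_le ((q + 1) * j), Nat.zero_le ((b + 1) * l)]
  subst hj hk
  have hexp : (q + 1) * n = (q + 1) * i + q * l + l := by rw [← hs]; ring
  linarith

lemma lower_lt {p a r n i j k l d : ℕ} (hp : 4 ≤ p) (ha2 : 2 ≤ a)
    (hnd : ¬ a ∣ (p - 1)) (hr : r = (p - 1) / a) (hn1 : 1 ≤ n) (hnr : n ≤ r - 1)
    (hs : i + j + k + l = n)
    (hX : p * i + k + (p - 1) * l ≤ (p - 1) * n)
    (hY : p * j + (p - 1) * k + a * l ≤ a * n)
    (hd : p * i + k + (p - 1) * l + (p * j + (p - 1) * k + a * l) ≤ d)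
    (hdD : d < p * n + n * (a - 1)) : False := by
  obtain ⟨q, rfl⟩ : ∃ q, p = q + 1 := ⟨p - 1, by omega⟩
  obtain ⟨b, rfl⟩ : ∃ b, a = b + 1 := ⟨a - 1, by omega⟩
  simp only [Nat.add_sub_cancel] at hX hY hd hdD hnd hr
  have hb1 : 1 ≤ b := by omega
  have hmod := Nat.div_add_mod q (b + 1)
  have hmodlt : q % (b + 1) < b + 1 := Nat.mod_lt _ (by omega)
  have hmodne : q % (b + 1) ≠ 0 := fun h => hnd (Nat.dvd_of_mod_eq_zero h)
  rw [← hr] at hmod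
  have har : (b + 1) * r + 1 ≤ q := by omega
  have hr1 : 1 ≤ r := by omega
  have hnr' : n + 1 ≤ r := by omega
  have han : (b + 1) * (n + 1) ≤ (b + 1) * r := Nat.mul_le_mul (le_refl _) hnr'
  have han' : (b + 1) * (n + 1) = (b + 1) * n + (b + 1) := by ring
  have hid : (q + 1) * i + k + q * l + ((q + 1) * j + q * k + (b + 1) * l)
      = (q + 1) * n + b * l := by rw [← hs]; ring
  have hln : l < n := by
    by_contra hc
    push_neg at hc
    have h1 : b * n ≤ b * l := Nat.mul_le_mul (le_refl b) hc
    have h2 : n * b = b * n := mul_comm _ _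
    linarith
  have hj : j = 0 := by
    by_contra hc
    have h1 : q + 1 ≤ (q + 1) * j := Nat.le_mul_of_pos_right _ (by omega)
    linarith [Nat.zero_le (q * k), Nat.zero_le ((b + 1) * l)]
  have hk : k = 0 := by
    by_contra hc
    have h1 : q ≤ q * k := Nat.le_mul_of_pos_right _ (by omega)
    linarith [Nat.zero_le ((q + 1) * j), Nat.zero_le ((b + 1) * l)]
  subst hj hk
  have hexp : q * n = q * i + q * l := by rw [← hs]; ring
  have hi : i = 0 := by
    by_contra hc
    have h1 : (q + 1) * i = q * i + i := by ring
    have h2 : 1 ≤ i := by omega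
    linarith [Nat.zero_le (q * l)]
  subst hi
  omega

lemma witnessX {p r n : ℕ} (hp : 4 ≤ p) (hn : r ≤ n) :
    p * (n - r) + 0 + (p - 1) * r = p * n - r := by
  obtain ⟨q, rfl⟩ : ∃ q, p = q + 1 := ⟨p - 1, by omega⟩
  obtain ⟨c, rfl⟩ : ∃ c, n = r + c := ⟨n - r, by omega⟩
  simp only [Nat.add_sub_cancel, Nat.add_sub_cancel_left]
  symm
  apply Nat.sub_eq_of_eq_add
  ring

end JpaAux

open JpaAux

-- MAIN UPPER AND LOWER BOUND LEMMAS

section Main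

variable {K : Type*} [Field K]

lemma spanD (p a r : ℕ) (hp : 4 ≤ p) (ha2 : 2 ≤ a) (hap : a ≤ p - 2)
    (hnd : ¬ a ∣ (p - 1)) (hr : r = (p - 1) / a)
    (Jpa : Ideal (MvPolynomial (Fin 2) K))
    (hJ : Jpa = Ideal.span
      {X 0 ^ p, X 1 ^ p, X 0 * X 1 ^ (p - 1), X 0 ^ (p - 1) * X 1 ^ a})
    (n : ℕ) :
    Jpa ^ n = Ideal.span {f | f ∈ Jpa ^ n ∧ f.totalDegree ≤ p * n + min n r * (a - 1)} := by
  -- basic arithmetic facts about r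
  have hmod := Nat.div_add_mod (p - 1) a
  have hmodlt : (p - 1) % a < a := Nat.mod_lt _ (by omega)
  have hmodne : (p - 1) % a ≠ 0 := fun h => hnd (Nat.dvd_of_mod_eq_zero h)
  rw [← hr] at hmod
  have har1 : a * r + 1 ≤ p - 1 := by omega
  have hra : a * (r + 1) = a * r + a := by ring
  have har2 : p - 1 ≤ a * (r + 1) := by omega
  have h2r : 2 * r ≤ a * r := Nat.mul_le_mul ha2 (le_refl r)
  have hrp : r + 2 ≤ p := by omega
  refine le_antisymm ?_ (Ideal.span_le.2 fun f hf => hf.1)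
  conv_lhs => rw [spanJ p a Jpa hJ n]
  rw [Ideal.span_le]
  rintro x ⟨e, ⟨i, j, k, l, hsum, rfl⟩, rfl⟩
  beta_reduce
  by_cases hl : l ≤ min n r
  · apply Ideal.subset_span
    refine ⟨monomial_mem p a Jpa hJ hsum, ?_⟩
    rw [totalDegree_monomial _ (one_ne_zero), f2_sum]
    exact deg_bound hp ha2 hsum hl
  · push_neg at hl
    have hlr : r < l := by
      rcases le_total n r with h | h
      · rw [min_eq_left h] at hl; omega
      · rw [min_eq_right h] at hl; exact hl
    have hrn : r ≤ n := by omega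
    have hmin : min n r = r := min_eq_right hrn
    obtain ⟨m, l', hdm, hl'r⟩ : ∃ m l', l = (r + 1) * m + l' ∧ l' ≤ r := by
      refine ⟨l / (r + 1), l % (r + 1), ?_, ?_⟩
      · rw [Nat.div_add_mod]
      · have := Nat.mod_lt l (show 0 < r + 1 by omega); omega
    set e' := f2 (p * (i + m * r) + (k + m) + (p - 1) * l')
      (p * j + (p - 1) * (k + m) + a * l') with he'def
    have hmr : (r + 1) * m = m * r + m := by ring
    have hsum' : (i + m * r) + j + (k + m) + l' = n := by omega
    have he'mem : monomial e' (1 : K) ∈ Jpa ^ n := monomial_mem p a Jpa hJ hsum'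
    have he'deg : (monomial e' (1 : K)).totalDegree ≤ p * n + min n r * (a - 1) := by
      rw [totalDegree_monomial _ (one_ne_zero), f2_sum, hmin]
      exact deg_bound hp ha2 hsum' (by omega)
    have hle : e' ≤ f2 (p * i + k + (p - 1) * l) (p * j + (p - 1) * k + a * l) := by
      rw [he'def, f2_le_f2]
      exact ⟨upperX hrp hdm, upperY hp har2 hdm⟩
    have hsplit : monomial (f2 (p * i + k + (p - 1) * l) (p * j + (p - 1) * k + a * l)) (1 : K)
        = monomial (f2 (p * i + k + (p - 1) * l) (p * j + (p - 1) * k + a * l) - e') 1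
          * monomial e' 1 := by
      rw [monomial_mul, one_mul, tsub_add_cancel_of_le hle]
    rw [SetLike.mem_coe, hsplit]
    exact Ideal.mul_mem_left _ _ (Ideal.subset_span ⟨he'mem, he'deg⟩)

lemma not_mem_span_low (p a : ℕ)
    (Jpa : Ideal (MvPolynomial (Fin 2) K))
    (hJ : Jpa = Ideal.span
      {X 0 ^ p, X 1 ^ p, X 0 * X 1 ^ (p - 1), X 0 ^ (p - 1) * X 1 ^ a})
    (n d : ℕ) (w : Fin 2 →₀ ℕ)
    (hno : ∀ i j k l : ℕ, i + j + k + l = n →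
      f2 (p * i + k + (p - 1) * l) (p * j + (p - 1) * k + a * l) ≤ w →
      p * i + k + (p - 1) * l + (p * j + (p - 1) * k + a * l) ≤ d → False) :
    monomial w (1 : K) ∉ Ideal.span {f | f ∈ Jpa ^ n ∧ f.totalDegree ≤ d} := by
  intro hmem
  have step : Ideal.span {f | f ∈ Jpa ^ n ∧ f.totalDegree ≤ d}
      ≤ Ideal.span ((fun e => monomial e (1 : K)) ''
        {m : Fin 2 →₀ ℕ | (∃ e ∈ Sg p a n, e ≤ m) ∧ m 0 + m 1 ≤ d}) := by
    rw [Ideal.span_le]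
    rintro f ⟨hfI, hfd⟩
    rw [SetLike.mem_coe, mem_ideal_span_monomial_image]
    intro xi hxi
    refine ⟨xi, ⟨(mem_pow_iff p a Jpa hJ n f).1 hfI xi hxi, ?_⟩, le_refl _⟩
    have h1 := le_totalDegree hxi
    rw [sum_fin2] at h1
    exact le_trans h1 hfd
  have h2 := step hmem
  rw [mem_ideal_span_monomial_image] at h2
  classical
  have hw : w ∈ (monomial w (1 : K)).support := by
    rw [support_monomial, if_neg (one_ne_zero)]
    exact Finset.mem_singleton_self w
  obtain ⟨m, ⟨⟨e, ⟨i, j, k, l, hsum, rfl⟩, hem⟩, hmd⟩, hmw⟩ := h2 w hw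
  refine hno i j k l hsum (le_trans hem hmw) ?_
  have h0 := (Finsupp.le_def.1 hem) 0
  have h1 := (Finsupp.le_def.1 hem) 1
  rw [f2_apply0] at h0
  rw [f2_apply1] at h1
  omega

end Main

/-- for `J_{p,a} = (X₁^p, X₂^p, X₁X₂^{p−1}, X₁^{p−1}X₂^a)` with `p ≥ 4`,
`2 ≤ a ≤ p−2` and `a ∤ p−1`, one has `d(J_{p,a}^n) = pn + n(a−1)` for `1 ≤ n ≤ r−1`
and `d(J_{p,a}^n) = pn + r(a−1)` for `n ≥ r`, where `r = ⌊(p−1)/a⌋`. -/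
theorem maxGenDeg_of_Jpa_powers
    {K : Type*} [Field K] (p a : ℕ) (hp : 4 ≤ p) (ha2 : 2 ≤ a) (hap : a ≤ p - 2)
    (hnd : ¬ a ∣ (p - 1))
    (Jpa : Ideal (MvPolynomial (Fin 2) K))
    (hJpa : Jpa = Ideal.span
      {X 0 ^ p, X 1 ^ p, X 0 * X 1 ^ (p - 1), X 0 ^ (p - 1) * X 1 ^ a})
    (r : ℕ) (hr : r = (p - 1) / a) :
    (∀ n : ℕ, 1 ≤ n → n ≤ r - 1 → maxGenDeg (Jpa ^ n) = p * n + n * (a - 1)) ∧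
    (∀ n : ℕ, r ≤ n → maxGenDeg (Jpa ^ n) = p * n + r * (a - 1)) := by
  have hmod := Nat.div_add_mod (p - 1) a
  have hmodlt : (p - 1) % a < a := Nat.mod_lt _ (by omega)
  have hmodne : (p - 1) % a ≠ 0 := fun h => hnd (Nat.dvd_of_mod_eq_zero h)
  rw [← hr] at hmod
  have har1 : a * r + 1 ≤ p - 1 := by omega
  have hr1 : 1 ≤ r := by
    rcases Nat.eq_zero_or_pos r with h | h
    · rw [h] at hmod; omega
    · exact h
  constructor
  · -- case 1 ≤ n ≤ r - 1
    intro n hn1 hnr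
    have hnr' : n ≤ r := by omega
    set D := p * n + n * (a - 1) with hD
    have hmin : min n r = n := min_eq_left hnr'
    have hSD : Jpa ^ n = Ideal.span {f | f ∈ Jpa ^ n ∧ f.totalDegree ≤ D} := by
      have := spanD p a r hp ha2 hap hnd hr Jpa hJpa n
      rwa [hmin] at this
    -- witness
    set w := f2 ((p - 1) * n) (a * n) with hw
    have hwmem : monomial w (1 : K) ∈ Jpa ^ n := by
      have h := monomial_mem p a Jpa hJpa (show 0 + 0 + 0 + n = n by omega)
      have heq : f2 (p * 0 + 0 + (p - 1) * n) (p * 0 + (p - 1) * 0 + a * n)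
          = f2 ((p - 1) * n) (a * n) := by norm_num
      rwa [heq] at h
    have hlow : ∀ d, d < D → Jpa ^ n ≠
        Ideal.span {f | f ∈ Jpa ^ n ∧ f.totalDegree ≤ d} := by
      intro d hd heq
      have hwin : monomial w (1 : K) ∈
          Ideal.span {f | f ∈ Jpa ^ n ∧ f.totalDegree ≤ d} := heq ▸ hwmem
      refine not_mem_span_low p a Jpa hJpa n d w ?_ hwin
      intro i j k l hsum hle hdle
      rw [hw, f2_le_f2] at hle
      exact lower_lt hp ha2 hnd hr hn1 hnr hsum hle.1 hle.2 hdle hd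
    refine le_antisymm (Nat.sInf_le hSD) ?_
    refine le_csInf ⟨D, hSD⟩ fun b hb => ?_
    by_contra hlt
    push_neg at hlt
    exact hlow b hlt hb
  · -- case n ≥ r
    intro n hn
    set D := p * n + r * (a - 1) with hD
    have hmin : min n r = r := min_eq_right hn
    have hSD : Jpa ^ n = Ideal.span {f | f ∈ Jpa ^ n ∧ f.totalDegree ≤ D} := by
      have := spanD p a r hp ha2 hap hnd hr Jpa hJpa n
      rwa [hmin] at this
    set w := f2 (p * n - r) (r * a) with hw
    have hwmem : monomial w (1 : K) ∈ Jpa ^ n := by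
      have h := monomial_mem p a Jpa hJpa (show (n - r) + 0 + 0 + r = n by omega)
      have heq : f2 (p * (n - r) + 0 + (p - 1) * r) (p * 0 + (p - 1) * 0 + a * r)
          = f2 (p * n - r) (r * a) := by
        rw [witnessX hp hn]
        norm_num [mul_comm a r]
      rwa [heq] at h
    have hlow : ∀ d, d < D → Jpa ^ n ≠
        Ideal.span {f | f ∈ Jpa ^ n ∧ f.totalDegree ≤ d} := by
      intro d hd heq
      have hwin : monomial w (1 : K) ∈
          Ideal.span {f | f ∈ Jpa ^ n ∧ f.totalDegree ≤ d} := heq ▸ hwmem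
      refine not_mem_span_low p a Jpa hJpa n d w ?_ hwin
      intro i j k l hsum hle hdle
      rw [hw, f2_le_f2] at hle
      exact lower_ge hp ha2 hnd hr hn hsum hle.1 hle.2 hdle hd
    refine le_antisymm (Nat.sInf_le hSD) ?_
    refine le_csInf ⟨D, hSD⟩ fun b hb => ?_
    by_contra hlt
    push_neg at hlt
    exact hlow b hlt hb
end

section
/- Let p ≥ 4 and set m_i = X_1^{p−i}X_2^i, I_p = (m_0, m_p, m_1, m_{p−1}) ⊂ K[X_1,X_2]. Then for all n ≥ p−2, I_p^n equals the ideal generated by all monomials of degree pn, i.e., I_p^n = (X_1^{α_1}X_2^{α_2} : α_1 + α_2 = pn). -/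
open MvPolynomial

private noncomputable def Jd (K : Type*) [Field K] (m : ℕ) : Ideal (MvPolynomial (Fin 2) K) :=
  Ideal.span
    ((fun ab : ℕ × ℕ => (X 0 : MvPolynomial (Fin 2) K) ^ ab.1 * X 1 ^ ab.2) ''
      {ab | ab.1 + ab.2 = m})

private lemma mem_Jd {K : Type*} [Field K] {a b m : ℕ} (h : a + b = m) :
    (X 0 : MvPolynomial (Fin 2) K) ^ a * X 1 ^ b ∈ Jd K m :=
  Ideal.subset_span ⟨(a, b), h, rfl⟩

private lemma Jd_mul_le {K : Type*} [Field K] (m k : ℕ) :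
    Jd K m * Jd K k ≤ Jd K (m + k) := by
  rw [Jd, Jd, Ideal.span_mul_span]
  rw [Ideal.span_le]
  rintro x hx
  simp only [Set.mem_mul, Set.mem_iUnion, Set.mem_image, Set.mem_singleton_iff, Set.mem_setOf_eq,
    Prod.exists] at hx
  obtain ⟨y, ⟨a, b, hab, rfl⟩, z, ⟨c, d, hcd, rfl⟩, rfl⟩ := hx
  have he : (X 0 : MvPolynomial (Fin 2) K) ^ a * X 1 ^ b * (X 0 ^ c * X 1 ^ d)
      = X 0 ^ (a + c) * X 1 ^ (b + d) := by ring
  rw [he]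
  exact mem_Jd (by omega)

private lemma nat_decomp (p n a : ℕ) (hp : 4 ≤ p) (hn : p - 2 ≤ n) (ha : a ≤ p * n) :
    ∃ c0 c1 c2 c3 : ℕ, c0 + c1 + c2 + c3 = n ∧ p * c0 + (p - 1) * c1 + c2 = a := by
  have hqr : p * (a / p) + a % p = a := Nat.div_add_mod a p
  set q := a / p with hq
  set r := a % p with hr
  have hrp : r < p := Nat.mod_lt _ (by omega)
  have hpq : p * q ≤ p * n := le_trans (le_trans (Nat.le_add_right _ _) hqr.le) ha
  by_cases h : q + r ≤ n
  · exact ⟨q, 0, r, n - (q + r), by omega, by simpa using hqr⟩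
  · push_neg at h
    have hr1 : 1 ≤ r := by
      rcases Nat.eq_zero_or_pos r with h0 | h0
      · have : q ≤ n := Nat.le_of_mul_le_mul_left hpq (by omega)
        omega
      · exact h0
    have hq1 : q + 1 ≤ n := by
      have h2 : p * q < p * n := by omega
      have := Nat.lt_of_mul_lt_mul_left h2
      omega
    have hqrp : p ≤ q + r + 1 := by omega
    refine ⟨q + r + 1 - p, p - r, 0, n - (q + 1), by omega, ?_⟩
    have hz : (p : ℤ) * q + r = a := by exact_mod_cast hqr
    zify [hqrp, hrp.le, show (1 : ℕ) ≤ p by omega]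
    linear_combination hz

private lemma Ip_le_Jd {K : Type*} [Field K] (p : ℕ) (hp : 4 ≤ p) :
    Ideal.span {(X 0 : MvPolynomial (Fin 2) K) ^ p, X 1 ^ p,
      X 0 ^ (p - 1) * X 1, X 0 * X 1 ^ (p - 1)} ≤ Jd K p := by
  rw [Ideal.span_le]
  rintro x hx
  simp only [Set.mem_insert_iff, Set.mem_singleton_iff] at hx
  rcases hx with rfl | rfl | rfl | rfl
  · simpa using mem_Jd (K := K) (a := p) (b := 0) (by omega)
  · simpa using mem_Jd (K := K) (a := 0) (b := p) (by omega)
  · simpa using mem_Jd (K := K) (a := p - 1) (b := 1) (by omega)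
  · simpa using mem_Jd (K := K) (a := 1) (b := p - 1) (by omega)

/-- for `p ≥ 4` and `I_p = (X₁^p, X₂^p, X₁^{p−1}X₂, X₁X₂^{p−1})`, for all
`n ≥ p−2` the ideal `I_p^n` equals the ideal generated by all monomials of degree `pn`. -/
theorem power_equals_all_monomials_of_degree
    {K : Type*} [Field K] (p : ℕ) (hp : 4 ≤ p)
    (Ip : Ideal (MvPolynomial (Fin 2) K))
    (hIp : Ip = Ideal.span
      {X 0 ^ p, X 1 ^ p, X 0 ^ (p - 1) * X 1, X 0 * X 1 ^ (p - 1)}) :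
    ∀ n : ℕ, p - 2 ≤ n →
      Ip ^ n = Ideal.span
        ((fun ab : ℕ × ℕ => (X 0 : MvPolynomial (Fin 2) K) ^ ab.1 * X 1 ^ ab.2) ''
          {ab | ab.1 + ab.2 = p * n}) := by
  intro n hn
  suffices h : Ip ^ n = Jd K (p * n) from h
  apply le_antisymm
  · -- holds for all n
    clear hn
    induction n with
    | zero =>
      have h1 : (1 : MvPolynomial (Fin 2) K) ∈ Jd K (p * 0) := by
        simpa using mem_Jd (K := K) (a := 0) (b := 0) (by omega)
      rw [pow_zero, Ideal.one_eq_top, (Ideal.eq_top_iff_one _).mpr h1]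
    | succ m ih =>
      rw [pow_succ]
      calc Ip ^ m * Ip ≤ Jd K (p * m) * Jd K p :=
            Ideal.mul_mono ih (hIp ▸ Ip_le_Jd p hp)
        _ ≤ Jd K (p * m + p) := Jd_mul_le _ _
        _ = Jd K (p * (m + 1)) := by rw [Nat.mul_succ]
  · rw [Jd, Ideal.span_le]
    rintro x ⟨⟨a, b⟩, hab, rfl⟩
    simp only [Set.mem_setOf_eq] at hab
    obtain ⟨t, rfl⟩ : ∃ t, p = t + 1 := ⟨p - 1, by omega⟩
    obtain ⟨c0, c1, c2, c3, hsum, hA⟩ :=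
      nat_decomp (t + 1) n a hp hn (by omega)
    simp only [Nat.add_sub_cancel] at hA ⊢
    have hB : b = c1 + t * c2 + (t + 1) * c3 := by
      have h1 : ((t : ℤ) + 1) * c0 + t * c1 + c2 = a := by exact_mod_cast hA
      have h2 : (c0 : ℤ) + c1 + c2 + c3 = n := by exact_mod_cast hsum
      have h3 : (a : ℤ) + b = (t + 1) * n := by exact_mod_cast hab
      have : (b : ℤ) = c1 + t * c2 + (t + 1) * c3 := by
        linear_combination h3 + h1 - ((t : ℤ) + 1) * h2
      exact_mod_cast this
    have hx : (X 0 : MvPolynomial (Fin 2) K) ^ a * X 1 ^ b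
        = (X 0 ^ (t + 1)) ^ c0 * ((X 0 ^ t * X 1) ^ c1 *
          ((X 0 * X 1 ^ t) ^ c2 * (X 1 ^ (t + 1)) ^ c3)) := by
      rw [← hA, hB]; ring
    have hm0 : (X 0 : MvPolynomial (Fin 2) K) ^ (t + 1) ∈ Ip := by
      rw [hIp]; exact Ideal.subset_span (by simp)
    have hm1 : (X 0 : MvPolynomial (Fin 2) K) ^ t * X 1 ∈ Ip := by
      rw [hIp]
      apply Ideal.subset_span
      simp only [Nat.add_sub_cancel, Set.mem_insert_iff, Set.mem_singleton_iff]
      tauto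
    have hm2 : (X 0 : MvPolynomial (Fin 2) K) * X 1 ^ t ∈ Ip := by
      rw [hIp]
      apply Ideal.subset_span
      simp only [Nat.add_sub_cancel, Set.mem_insert_iff, Set.mem_singleton_iff]
      tauto
    have hm3 : (X 1 : MvPolynomial (Fin 2) K) ^ (t + 1) ∈ Ip := by
      rw [hIp]; exact Ideal.subset_span (by simp)
    have hmem : (X 0 ^ (t + 1)) ^ c0 * ((X 0 ^ t * X 1) ^ c1 *
        ((X 0 * X 1 ^ t) ^ c2 * ((X 1 : MvPolynomial (Fin 2) K) ^ (t + 1)) ^ c3))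
        ∈ Ip ^ c0 * (Ip ^ c1 * (Ip ^ c2 * Ip ^ c3)) :=
      Ideal.mul_mem_mul (Ideal.pow_mem_pow hm0 c0)
        (Ideal.mul_mem_mul (Ideal.pow_mem_pow hm1 c1)
          (Ideal.mul_mem_mul (Ideal.pow_mem_pow hm2 c2) (Ideal.pow_mem_pow hm3 c3)))
    have hpow : Ip ^ c0 * (Ip ^ c1 * (Ip ^ c2 * Ip ^ c3)) = Ip ^ n := by
      rw [← pow_add, ← pow_add, ← pow_add]
      congr 1
      omega
    rw [hx]
    rw [hpow] at hmem
    exact hmem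
end

section
/- Let p ≥ 4, 2 ≤ i ≤ ⌊p/2⌋, m_j = X_1^{p−j}X_2^j, and I_p = (m_0, m_p, m_1, m_{p−1}) ⊂ K[X_1,X_2]. Then for all integers u ≤ i−2 and v ≤ p−i−2, the monomial m_i m_0^u m_p^v does not belong to I_p^{1+u+v}. -/
open MvPolynomial

namespace MonomialNotInPowerAux

/-- iterated sumsets -/
def T (S : Set (Fin 2 →₀ ℕ)) : ℕ → Set (Fin 2 →₀ ℕ)
  | 0 => {0}
  | n + 1 => Set.image2 (· + ·) S (T S n)

lemma pow_span {K : Type*} [Field K] (S : Set (Fin 2 →₀ ℕ)) :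
    ∀ n : ℕ, (Ideal.span ((fun a => (monomial a (1 : K) : MvPolynomial (Fin 2) K)) '' S)) ^ n
      = Ideal.span ((fun a => (monomial a (1 : K) : MvPolynomial (Fin 2) K)) '' T S n) := by
  intro n
  induction n with
  | zero =>
      simp [T, pow_zero, Set.image_singleton, monomial_zero', Ideal.span_singleton_one]
  | succ n ih =>
      rw [pow_succ', ih, Ideal.span_mul_span']
      congr 1
      rw [show T S (n+1) = Set.image2 (· + ·) S (T S n) from rfl]
      rw [← Set.image2_mul, Set.image2_image_left, Set.image2_image_right,
        Set.image_image2]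
      simp [monomial_mul]

lemma mem_T_char (p : ℕ) (n : ℕ) (t : Fin 2 →₀ ℕ)
    (ht : t ∈ T ({Finsupp.single 0 p, Finsupp.single 1 p,
      Finsupp.single 0 (p-1) + Finsupp.single 1 1,
      Finsupp.single 0 1 + Finsupp.single 1 (p-1)} : Set (Fin 2 →₀ ℕ)) n) :
    ∃ c0 c1 c2 c3 : ℕ, c0 + c1 + c2 + c3 = n ∧
      t 0 = c0 * p + c1 * (p-1) + c2 ∧ t 1 = c1 + c2 * (p-1) + c3 * p := by
  induction n generalizing t with
  | zero =>
      refine ⟨0, 0, 0, 0, by simp, ?_, ?_⟩ <;>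
        · simp [T] at ht; simp [ht]
  | succ n ih =>
      rw [show ∀ S, T S (n+1) = Set.image2 (· + ·) S (T S n) from fun _ => rfl] at ht
      obtain ⟨s, hs, t', ht', rfl⟩ := ht
      obtain ⟨c0, c1, c2, c3, hc, h0, h1⟩ := ih t' ht'
      simp only [Set.mem_insert_iff, Set.mem_singleton_iff] at hs
      rcases hs with rfl | rfl | rfl | rfl
      · exact ⟨c0 + 1, c1, c2, c3, by omega, by
          simp [Finsupp.add_apply, Finsupp.single_apply, h0]; ring, by
          simp [Finsupp.add_apply, Finsupp.single_apply, h1]⟩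
      · exact ⟨c0, c1, c2, c3 + 1, by omega, by
          simp [Finsupp.add_apply, Finsupp.single_apply, h0], by
          simp [Finsupp.add_apply, Finsupp.single_apply, h1]; ring⟩
      · exact ⟨c0, c1 + 1, c2, c3, by omega, by
          simp [Finsupp.add_apply, Finsupp.single_apply, h0]; ring, by
          simp [Finsupp.add_apply, Finsupp.single_apply, h1]; ring⟩
      · exact ⟨c0, c1, c2 + 1, c3, by omega, by
          simp [Finsupp.add_apply, Finsupp.single_apply, h0]; ring, by
          simp [Finsupp.add_apply, Finsupp.single_apply, h1]; ring⟩

lemma arith (p i u v c0 c1 c2 c3 : ℕ) (hp : 4 ≤ p) (hi2 : 2 ≤ i) (hip : 2 * i ≤ p)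
    (hu : u + 2 ≤ i) (hv : v + 2 + i ≤ p)
    (hn : c0 + c1 + c2 + c3 = 1 + u + v)
    (h0 : c0 * p + c1 * (p - 1) + c2 ≤ p - i + p * u)
    (h1 : c1 + c2 * (p - 1) + c3 * p ≤ i + p * v) : False := by
  have hip' : i ≤ p := by omega
  have h1p : 1 ≤ p := by omega
  zify [hip', h1p] at h0 h1
  have hn' : (c0 : ℤ) + c1 + c2 + c3 = 1 + u + v := by exact_mod_cast hn
  have hsum : (c0:ℤ) * p + c1 * ((p:ℤ)-1) + c2 + ((c1:ℤ) + c2 * ((p:ℤ)-1) + c3 * p)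
      = ((p:ℤ) - i + p * u) + ((i:ℤ) + p * v) := by
    linear_combination (p : ℤ) * hn'
  have e0 : (c0:ℤ) * p + c1 * ((p:ℤ)-1) + c2 = (p:ℤ) - i + p * u := by linarith
  have e1 : (c1:ℤ) + c2 * ((p:ℤ)-1) + c3 * p = (i:ℤ) + p * v := by linarith
  have hs : (p:ℤ) * ((c0:ℤ) + c1 - u - 1) = (c1:ℤ) - c2 - i := by linear_combination e0
  have hb : (1:ℤ) + u + v ≤ (p:ℤ) - 3 := by
    have : 1 + u + v ≤ p - 3 := by omega
    omega
  have hc1 : (c1:ℤ) ≤ 1 + u + v := by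
    have : c1 ≤ 1 + u + v := by omega
    exact_mod_cast this
  have hc2 : (c2:ℤ) ≤ 1 + u + v := by
    have : c2 ≤ 1 + u + v := by omega
    exact_mod_cast this
  have hi2' : (2:ℤ) ≤ i := by exact_mod_cast hi2
  have hipz : (i:ℤ) ≤ p - 2 := by
    have : i ≤ p - 2 := by omega
    omega
  have hc0 : (0:ℤ) ≤ c0 := Int.natCast_nonneg _
  have hc2' : (0:ℤ) ≤ c2 := Int.natCast_nonneg _
  have hc1' : (0:ℤ) ≤ c1 := Int.natCast_nonneg _
  have hc3' : (0:ℤ) ≤ c3 := Int.natCast_nonneg _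
  set s : ℤ := (c0:ℤ) + c1 - u - 1 with hsdef
  have hsle : s ≤ 0 := by
    by_contra hcon
    push_neg at hcon
    have h1s : 1 ≤ s := hcon
    have : (p:ℤ) * 1 ≤ (p:ℤ) * s :=
      mul_le_mul_of_nonneg_left h1s (by positivity)
    linarith
  have hsge : -1 ≤ s := by
    by_contra hcon
    push_neg at hcon
    have h2s : s ≤ -2 := by omega
    have : (p:ℤ) * s ≤ (p:ℤ) * (-2) :=
      mul_le_mul_of_nonneg_left h2s (by positivity)
    linarith
  have hcase : s = 0 ∨ s = -1 := by omega
  have huz : (u:ℤ) + 2 ≤ i := by exact_mod_cast hu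
  have hvz : (v:ℤ) + 2 + i ≤ p := by exact_mod_cast hv
  rcases hcase with h | h
  · rw [h, mul_zero] at hs
    have : (c0:ℤ) + c1 - u - 1 = 0 := h
    linarith
  · rw [h] at hs
    have hA : (c0:ℤ) + c1 - u - 1 = -1 := h
    -- c2 + c3 = v + 1, c2 = c1 + p - i
    linarith

end MonomialNotInPowerAux

open MonomialNotInPowerAux in
/-- for `p ≥ 4`, `2 ≤ i ≤ ⌊p/2⌋`, `u ≤ i−2` and `v ≤ p−i−2`, the monomial
`m_i m_0^u m_p^v` does not belong to `I_p^{1+u+v}`, where `m_j = X₁^{p−j}X₂^j` and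
`I_p = (m_0, m_p, m_1, m_{p−1})`. -/
theorem monomial_not_in_power
    {K : Type*} [Field K] (p i : ℕ) (hp : 4 ≤ p) (hi2 : 2 ≤ i) (hip : i ≤ p / 2)
    (Ip : Ideal (MvPolynomial (Fin 2) K))
    (hIp : Ip = Ideal.span
      {X 0 ^ p, X 1 ^ p, X 0 ^ (p - 1) * X 1, X 0 * X 1 ^ (p - 1)}) :
    ∀ u v : ℕ, u ≤ i - 2 → v ≤ p - i - 2 →
      (X 0 ^ (p - i) * X 1 ^ i) * (X 0 ^ p) ^ u * ((X 1 : MvPolynomial (Fin 2) K) ^ p) ^ v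
        ∉ Ip ^ (1 + u + v) := by
  intro u v hu hv hmem
  subst hIp
  set S : Set (Fin 2 →₀ ℕ) := {Finsupp.single 0 p, Finsupp.single 1 p,
      Finsupp.single 0 (p-1) + Finsupp.single 1 1,
      Finsupp.single 0 1 + Finsupp.single 1 (p-1)} with hS
  have hgen : ({X 0 ^ p, X 1 ^ p, X 0 ^ (p - 1) * X 1, X 0 * X 1 ^ (p - 1)} :
      Set (MvPolynomial (Fin 2) K)) = (fun a => monomial a (1 : K)) '' S := by
    rw [hS]
    simp only [Set.image_insert_eq, Set.image_singleton]
    congr 1 <;> [skip; congr 1] <;> [skip; skip; congr 1]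
    · rw [X_pow_eq_monomial]
    · rw [X_pow_eq_monomial]
    · rw [show (X 1 : MvPolynomial (Fin 2) K) = X 1 ^ 1 from (pow_one _).symm,
        X_pow_eq_monomial, X_pow_eq_monomial, monomial_mul, one_mul]
    · rw [show (X 0 : MvPolynomial (Fin 2) K) = X 0 ^ 1 from (pow_one _).symm,
        X_pow_eq_monomial, X_pow_eq_monomial, monomial_mul, one_mul]
  rw [hgen, pow_span] at hmem
  -- rewrite the monomial
  set m : Fin 2 →₀ ℕ := Finsupp.single 0 (p - i + p * u) + Finsupp.single 1 (i + p * v)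
    with hm
  have hmono : (X 0 ^ (p - i) * X 1 ^ i) * (X 0 ^ p) ^ u *
      ((X 1 : MvPolynomial (Fin 2) K) ^ p) ^ v = monomial m (1 : K) := by
    rw [hm, ← pow_mul, ← pow_mul, X_pow_eq_monomial, X_pow_eq_monomial,
      X_pow_eq_monomial, X_pow_eq_monomial]
    rw [monomial_mul, monomial_mul, monomial_mul]
    simp only [one_mul]
    congr 1
    rw [Finsupp.single_add, Finsupp.single_add]
    abel_nf
  rw [hmono, mem_ideal_span_monomial_image] at hmem
  classical
  have hsupp : m ∈ (monomial m (1 : K)).support := by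
    rw [support_monomial, if_neg one_ne_zero]; exact Finset.mem_singleton_self m
  obtain ⟨t, ht, hle⟩ := hmem m hsupp
  obtain ⟨c0, c1, c2, c3, hc, h0, h1⟩ := mem_T_char p _ t ht
  have hle0 : t 0 ≤ m 0 := hle 0
  have hle1 : t 1 ≤ m 1 := hle 1
  have hm0 : m 0 = p - i + p * u := by
    rw [hm]; simp [Finsupp.single_apply]
  have hm1 : m 1 = i + p * v := by
    rw [hm]; simp [Finsupp.single_apply]
  rw [h0, hm0] at hle0
  rw [h1, hm1] at hle1
  exact arith p i u v c0 c1 c2 c3 hp hi2 (by omega) (by omega) (by omega) hc hle0 hle1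
end

section
/- Let p ≥ 4, 2 ≤ i ≤ ⌊p/2⌋, and I_p = (X_1^p, X_2^p, X_1^{p−1}X_2, X_1X_2^{p−1}) ⊂ K[X_1,X_2]. Then (X_1^{p−i}X_2^i)^t ∉ I_p^t for all integers t with 1 ≤ t < (p−1)/i. -/
open MvPolynomial

open Pointwise

/-- for `p ≥ 4`, `2 ≤ i ≤ ⌊p/2⌋` and `1 ≤ t < (p−1)/i`, the power
`(X₁^{p−i}X₂^i)^t` does not belong to `I_p^t`. -/
theorem middle_monomial_power_not_in_power
    {K : Type*} [Field K] (p i : ℕ) (hp : 4 ≤ p) (hi2 : 2 ≤ i) (hip : i ≤ p / 2)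
    (Ip : Ideal (MvPolynomial (Fin 2) K))
    (hIp : Ip = Ideal.span
      {X 0 ^ p, X 1 ^ p, X 0 ^ (p - 1) * X 1, X 0 * X 1 ^ (p - 1)}) :
    ∀ t : ℕ, 1 ≤ t → t * i < p - 1 →
      ((X 0 : MvPolynomial (Fin 2) K) ^ (p - i) * X 1 ^ i) ^ t ∉ Ip ^ t := by
  have hip' : i ≤ p := le_trans hip (Nat.div_le_self p 2)
  set T : ℕ → Set (Fin 2 →₀ ℕ) := fun t =>
    {d | ∃ a b c e : ℕ, a + b + c + e = t ∧
      d 0 = a * p + c * (p - 1) + e ∧ d 1 = b * p + c + e * (p - 1)} with hT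
  have key : ∀ t : ℕ, Ip ^ t ≤ Ideal.span ((fun s => monomial s (1 : K)) '' T t) := by
    intro t
    induction t with
    | zero =>
      have h1 : (1 : MvPolynomial (Fin 2) K) ∈
          Ideal.span ((fun s => monomial s (1:K)) '' T 0) :=
        Ideal.subset_span ⟨0, ⟨0, 0, 0, 0, by simp, by simp, by simp⟩, by simp⟩
      simpa [pow_zero, Ideal.one_eq_top, top_le_iff, Ideal.eq_top_iff_one] using h1
    | succ t ih =>
      have h1 : Ip ≤ Ideal.span ((fun s => monomial s (1:K)) '' T 1) := by
        rw [hIp, Ideal.span_le]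
        intro x hx
        simp only [Set.mem_insert_iff, Set.mem_singleton_iff] at hx
        rcases hx with rfl | rfl | rfl | rfl
        · exact Ideal.subset_span ⟨Finsupp.single 0 p,
            ⟨1, 0, 0, 0, by omega, by simp, by simp⟩, X_pow_eq_monomial.symm⟩
        · exact Ideal.subset_span ⟨Finsupp.single 1 p,
            ⟨0, 1, 0, 0, by omega, by simp, by simp⟩, X_pow_eq_monomial.symm⟩
        · refine Ideal.subset_span ⟨Finsupp.single 0 (p-1) + Finsupp.single 1 1,
            ⟨0, 0, 1, 0, by omega, by simp, by simp⟩, ?_⟩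
          have : (X 0 : MvPolynomial (Fin 2) K) ^ (p-1) * X 1 ^ 1 =
              monomial (Finsupp.single 0 (p-1) + Finsupp.single 1 1) 1 := by
            rw [X_pow_eq_monomial, X_pow_eq_monomial, monomial_mul, one_mul]
          simpa using this.symm
        · refine Ideal.subset_span ⟨Finsupp.single 0 1 + Finsupp.single 1 (p-1),
            ⟨0, 0, 0, 1, by omega, by simp, by simp⟩, ?_⟩
          have : (X 0 : MvPolynomial (Fin 2) K) ^ 1 * X 1 ^ (p-1) =
              monomial (Finsupp.single 0 1 + Finsupp.single 1 (p-1)) 1 := by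
            rw [X_pow_eq_monomial, X_pow_eq_monomial, monomial_mul, one_mul]
          simpa using this.symm
      calc Ip ^ (t+1) = Ip ^ t * Ip := pow_succ Ip t
        _ ≤ Ideal.span ((fun s => monomial s (1:K)) '' T t) *
            Ideal.span ((fun s => monomial s (1:K)) '' T 1) := Ideal.mul_mono ih h1
        _ = Ideal.span (((fun s => monomial s (1:K)) '' T t) *
            ((fun s => monomial s (1:K)) '' T 1)) := Ideal.span_mul_span' _ _
        _ ≤ Ideal.span ((fun s => monomial s (1:K)) '' T (t+1)) := by
          apply Ideal.span_mono
          intro x hx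
          rw [Set.mem_mul] at hx
          obtain ⟨y, hy, z, hz, rfl⟩ := hx
          obtain ⟨sy, hsy, rfl⟩ := hy
          obtain ⟨sz, hsz, rfl⟩ := hz
          obtain ⟨a, b, c, e, hab, hy0, hy1⟩ := hsy
          obtain ⟨a', b', c', e', hab', hz0, hz1⟩ := hsz
          refine ⟨sy + sz, ⟨a+a', b+b', c+c', e+e', by omega, ?_, ?_⟩, ?_⟩
          · simp only [Finsupp.add_apply, hy0, hz0]; ring
          · simp only [Finsupp.add_apply, hy1, hz1]; ring
          · simp [monomial_mul]
  intro t ht hti hmem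
  have hmem' := key t hmem
  set D : Fin 2 →₀ ℕ := Finsupp.single 0 ((p-i)*t) + Finsupp.single 1 (i*t) with hD
  have heq : ((X 0 : MvPolynomial (Fin 2) K) ^ (p - i) * X 1 ^ i) ^ t = monomial D 1 := by
    rw [mul_pow, ← pow_mul, ← pow_mul, X_pow_eq_monomial, X_pow_eq_monomial,
      monomial_mul, one_mul]
  rw [heq, mem_ideal_span_monomial_image] at hmem'
  have hDsupp : D ∈ (monomial D (1:K)).support := by
    rw [mem_support_iff, coeff_monomial]
    simp
  obtain ⟨si, ⟨a, b, c, e, habce, h0, h1⟩, hle⟩ := hmem' D hDsupp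
  have hle0 : si 0 ≤ (p-i)*t := by
    have := hle 0
    simpa [hD, Finsupp.add_apply, Finsupp.single_apply] using this
  have hle1 : si 1 ≤ i*t := by
    have := hle 1
    simpa [hD, Finsupp.add_apply, Finsupp.single_apply] using this
  rw [h0] at hle0
  rw [h1] at hle1
  -- arithmetic contradiction
  subst habce
  obtain ⟨q, rfl⟩ : ∃ q, p = q + 1 := ⟨p - 1, by omega⟩
  simp only [Nat.add_sub_cancel] at hle0 hle1 hti
  have hsum : (a*(q+1) + c*q + e) + (b*(q+1) + c + e*q) = (a+b+c+e)*(q+1) := by ring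
  have hsplit : (q+1-i)*(a+b+c+e) + i*(a+b+c+e) = (a+b+c+e)*(q+1) := by
    have : (q+1-i) + i = q+1 := by omega
    calc (q+1-i)*(a+b+c+e) + i*(a+b+c+e) = ((q+1-i)+i)*(a+b+c+e) := by ring
      _ = (a+b+c+e)*(q+1) := by rw [this, mul_comm]
  have h2 : i*(a+b+c+e) ≤ b*(q+1) + c + e*q := by linarith
  have hbeq : b*(q+1) + c + e*q = i*(a+b+c+e) := le_antisymm hle1 h2
  have hti' : i*(a+b+c+e) < q := by linarith
  have hb : b = 0 := by
    rcases Nat.eq_zero_or_pos b with h | h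
    · exact h
    · exfalso
      have hq : q+1 ≤ b*(q+1) := Nat.le_mul_of_pos_left _ h
      have h3 : b * (q+1) ≤ i * (a+b+c+e) := by
        calc b*(q+1) ≤ b*(q+1) + (c + e*q) := Nat.le_add_right _ _
          _ = b*(q+1) + c + e*q := by ring
          _ = i*(a+b+c+e) := hbeq
      exact absurd (lt_of_le_of_lt (hq.trans h3) hti') (by omega)
  have he : e = 0 := by
    rcases Nat.eq_zero_or_pos e with h | h
    · exact h
    · exfalso
      have hq : q ≤ e*q := Nat.le_mul_of_pos_left _ h
      have h3 : e*q ≤ i * (a+b+c+e) := by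
        calc e*q ≤ (b*(q+1) + c) + e*q := Nat.le_add_left _ _
          _ = b*(q+1) + c + e*q := by ring
          _ = i*(a+b+c+e) := hbeq
      exact absurd (lt_of_le_of_lt (hq.trans h3) hti') (lt_irrefl q)
  subst hb; subst he
  simp only [Nat.zero_mul, Nat.mul_zero, Nat.add_zero, Nat.zero_add] at hbeq
  -- hbeq : c = i*(a+0+c+0) = i*(a+c)
  have hcle : c ≤ a + 0 + c + 0 := by omega
  have : i * (a + 0 + c + 0) ≥ 2 * (a + 0 + c + 0) := Nat.mul_le_mul_right _ hi2
  omega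
end

section
/- Let p ≥ 4 be even, p = 2q, and a ≥ 1. Let I = (X_1^p, X_2^p, X_1^{p−1}X_2, X_1X_2^{p−1}, X_1^{q}X_2^{q}X_3^a) ⊂ K[X_1,X_2,X_3]. Then (X_1^q X_2^q X_3^a)^2 ∈ (X_1^p, X_2^p, X_1^{p−1}X_2, X_1X_2^{p−1})^2, and hence I^{n+1} = (X_1^p, X_2^p, X_1^{p−1}X_2, X_1X_2^{p−1}) I^n for all n ≥ 1. -/
open MvPolynomial

/-- for even `p = 2q ≥ 4` and `a ≥ 1`, with
`I = (X₁^p, X₂^p, X₁^{p−1}X₂, X₁X₂^{p−1}, X₁^qX₂^qX₃^a)` in `K[X₁,X₂,X₃]`,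
one has `(X₁^qX₂^qX₃^a)² ∈ (X₁^p, X₂^p, X₁^{p−1}X₂, X₁X₂^{p−1})²` and hence
`I^{n+1} = (X₁^p, X₂^p, X₁^{p−1}X₂, X₁X₂^{p−1})·I^n` for all `n ≥ 1`. -/
theorem reduction_number_one_even_case
    {K : Type*} [Field K] (p q a : ℕ) (hp : 4 ≤ p) (hpq : p = 2 * q) (ha : 1 ≤ a)
    (Ip I : Ideal (MvPolynomial (Fin 3) K))
    (hIp : Ip = Ideal.span
      {X 0 ^ p, X 1 ^ p, X 0 ^ (p - 1) * X 1, X 0 * X 1 ^ (p - 1)})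
    (hI : I = Ideal.span
      {X 0 ^ p, X 1 ^ p, X 0 ^ (p - 1) * X 1, X 0 * X 1 ^ (p - 1),
        X 0 ^ q * X 1 ^ q * X 2 ^ a}) :
    ((X 0 : MvPolynomial (Fin 3) K) ^ q * X 1 ^ q * X 2 ^ a) ^ 2 ∈ Ip ^ 2 ∧
    ∀ n : ℕ, 1 ≤ n → I ^ (n + 1) = Ip * I ^ n := by
  set f : MvPolynomial (Fin 3) K := X 0 ^ q * X 1 ^ q * X 2 ^ a with hf
  have h1 : (X 0 : MvPolynomial (Fin 3) K) ^ p ∈ Ip := by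
    rw [hIp]; exact Ideal.subset_span (by simp)
  have h2 : (X 1 : MvPolynomial (Fin 3) K) ^ p ∈ Ip := by
    rw [hIp]; exact Ideal.subset_span (by simp)
  have hf2 : f ^ 2 ∈ Ip ^ 2 := by
    have heq : f ^ 2 = X 2 ^ (2 * a) * (X 0 ^ p * X 1 ^ p) := by
      rw [hf, hpq]; ring
    rw [heq, sq Ip]
    exact Ideal.mul_mem_left _ _ (Ideal.mul_mem_mul h1 h2)
  refine ⟨hf2, ?_⟩
  -- I = Ip ⊔ span {f}
  have hsum : I = Ip ⊔ Ideal.span {f} := by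
    rw [hI, hIp, ← Ideal.span_union]
    congr 1
    ext x
    simp only [Set.mem_union, Set.mem_insert_iff, Set.mem_singleton_iff]
    tauto
  have hIpI : Ip ≤ I := by rw [hsum]; exact le_sup_left
  have hfI : Ideal.span {f} ≤ I := by rw [hsum]; exact le_sup_right
  have key : I ^ 2 = Ip * I := by
    apply le_antisymm
    · conv_lhs => rw [sq, hsum, Ideal.sup_mul, Ideal.mul_sup, Ideal.mul_sup]
      have hff : Ideal.span {f} * Ideal.span {f} ≤ Ip * I := by
        rw [Ideal.span_singleton_mul_span_singleton, Ideal.span_singleton_le_iff_mem]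
        have hf2' : f * f ∈ Ip * Ip := by rw [← sq, ← sq]; exact hf2
        exact Ideal.mul_mono_right hIpI hf2'
      refine sup_le (sup_le ?_ ?_) (sup_le ?_ hff)
      · exact Ideal.mul_mono_right hIpI
      · exact Ideal.mul_mono_right hfI
      · rw [mul_comm]; exact Ideal.mul_mono_right hfI
    · rw [sq]; exact Ideal.mul_mono_left hIpI
  intro n hn
  induction n, hn using Nat.le_induction with
  | base => rw [key, pow_one]
  | succ m hm ih =>
    rw [pow_succ, ih, mul_assoc, ← pow_succ, ih]
end

section
/- Let I ⊂ K[X] and J ⊂ K[Y] be nonzero proper homogeneous ideals in polynomial rings over disjoint sets of variables X and Y, with minimal homogeneous generating sets {f_1,...,f_t} and {g_1,...,g_u} respectively. Then {f_i g_j : 1 ≤ i ≤ t, 1 ≤ j ≤ u} is a minimal generating set of the product ideal I·J·K[X,Y]. In particular, μ(IJ) = μ(I)μ(J) and d(IJ) = d(I) + d(J). -/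
open MvPolynomial

/-- The minimal number of generators `μ(I)` of an ideal. -/
noncomputable def mu {K : Type*} [Field K] {σ : Type*}
    (I : Ideal (MvPolynomial σ K)) : ℕ :=
  sInf {n | ∃ g : Fin n → MvPolynomial σ K, I = Ideal.span (Set.range g)}

section Auxiliary

variable {K : Type*} [Field K] {σ : Type*}

lemma homogComp_mul {a q : MvPolynomial σ K} {k : ℕ} (hq : q.IsHomogeneous k) (e : ℕ) :
    homogeneousComponent e (a * q) =
      if k ≤ e then homogeneousComponent (e - k) a * q else 0 := by
  conv_lhs => rw [← sum_homogeneousComponent a]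
  rw [Finset.sum_mul, map_sum]
  have key : ∀ j, homogeneousComponent e (homogeneousComponent j a * q)
      = if e = j + k then homogeneousComponent j a * q else 0 := fun j =>
    homogeneousComponent_of_mem ((homogeneousComponent_isHomogeneous j a).mul hq)
  simp_rw [key]
  by_cases hk : k ≤ e
  · rw [if_pos hk]
    by_cases hm : e - k ∈ Finset.range (a.totalDegree + 1)
    · rw [Finset.sum_eq_single_of_mem (e - k) hm, if_pos (by omega)]
      intro j _ hj; rw [if_neg (by omega)]
    · simp only [Finset.mem_range, not_lt] at hm
      rw [homogeneousComponent_eq_zero _ _ (by omega), zero_mul]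
      exact Finset.sum_eq_zero fun j hj => by
        simp only [Finset.mem_range] at hj
        rw [if_neg (by omega)]
  · rw [if_neg hk]
    exact Finset.sum_eq_zero fun j _ => by rw [if_neg (by omega)]

/-- representation of elements of `m * span(range f)` with coefficients in `m`. -/
lemma mem_maxIdeal_mul_span {ι : Type*} [Fintype ι] (f : ι → MvPolynomial σ K)
    {z : MvPolynomial σ K}
    (hz : z ∈ RingHom.ker (constantCoeff (σ := σ) (R := K)) * Ideal.span (Set.range f)) :
    ∃ b : ι → MvPolynomial σ K, (∀ j, constantCoeff (b j) = 0) ∧ z = ∑ j, b j * f j := by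
  refine Submodule.mul_induction_on hz ?_ ?_
  · intro m hm y hy
    obtain ⟨c, rfl⟩ := (Ideal.mem_span_range_iff_exists_fun).mp hy
    exact ⟨fun j => m * c j, fun j => by
      simp [RingHom.mem_ker.mp hm], by rw [Finset.mul_sum]; ring_nf⟩
  · rintro x y ⟨b, hb, rfl⟩ ⟨b', hb', rfl⟩
    exact ⟨fun j => b j + b' j, fun j => by simp [hb j, hb' j], by
      rw [← Finset.sum_add_distrib]; exact Finset.sum_congr rfl fun j _ => by ring⟩

/-- membership in span of image gives a finite representation -/
lemma mem_span_image_rep {ι : Type*} (f : ι → MvPolynomial σ K)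
    (s : Set ι) [Fintype s] {y : MvPolynomial σ K} (hy : y ∈ Ideal.span (f '' s)) :
    ∃ a : s → MvPolynomial σ K, y = ∑ x : s, a x * f x := by
  rw [Set.image_eq_range, Ideal.mem_span_range_iff_exists_fun] at hy
  obtain ⟨c, hc⟩ := hy
  exact ⟨c, by rw [← hc]⟩

/-- strengthened minimality: minimal homogeneous generators are not in
`span(others) + m·I`. -/
lemma strong_min {ι : Type*} [Fintype ι] (f : ι → MvPolynomial σ K) (d : ι → ℕ)
    (hf : ∀ i, (f i).IsHomogeneous (d i))
    (hfmin : ∀ i, f i ∉ Ideal.span (f '' {i' | i' ≠ i})) (i : ι) :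
    f i ∉ Ideal.span (f '' {i' | i' ≠ i}) +
      RingHom.ker (constantCoeff (σ := σ) (R := K)) * Ideal.span (Set.range f) := by
  classical
  intro h
  obtain ⟨y, hy, z, hz, hyz⟩ := Submodule.mem_sup.mp h
  obtain ⟨a, rfl⟩ := mem_span_image_rep f _ hy
  obtain ⟨b, hb0, rfl⟩ := mem_maxIdeal_mul_span f hz
  apply hfmin i
  have hcomp : homogeneousComponent (d i) (f i) = f i := by
    rw [homogeneousComponent_of_mem ((mem_homogeneousSubmodule _ _).mpr (hf i)), if_pos rfl]
  rw [← hcomp, ← hyz, map_add, map_sum, map_sum]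
  apply Submodule.add_mem
  · apply Submodule.sum_mem
    rintro ⟨x, hx⟩ _
    rw [homogComp_mul (hf x)]
    split
    · exact Ideal.mul_mem_left _ _ (Ideal.subset_span ⟨x, hx, rfl⟩)
    · exact Submodule.zero_mem _
  · apply Submodule.sum_mem
    intro j _
    by_cases hj : j = i
    · subst hj
      rw [homogComp_mul (hf j), if_pos le_rfl, Nat.sub_self,
        homogeneousComponent_zero, ← constantCoeff_eq, hb0 j, map_zero, zero_mul]
      exact Submodule.zero_mem _
    · rw [homogComp_mul (hf j)]
      split
      · exact Ideal.mul_mem_left _ _ (Ideal.subset_span ⟨j, hj, rfl⟩)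
      · exact Submodule.zero_mem _

/-- any generating family of the ideal has at least `card ι` elements -/
lemma card_le_of_span_eq {ι : Type*} [Fintype ι] (f : ι → MvPolynomial σ K) (d : ι → ℕ)
    (hf : ∀ i, (f i).IsHomogeneous (d i))
    (hfmin : ∀ i, f i ∉ Ideal.span (f '' {i' | i' ≠ i}))
    {n : ℕ} (h : Fin n → MvPolynomial σ K)
    (hh : Ideal.span (Set.range f) = Ideal.span (Set.range h)) :
    Fintype.card ι ≤ n := by
  classical
  set N : Ideal (MvPolynomial σ K) :=
    RingHom.ker (constantCoeff (σ := σ) (R := K)) * Ideal.span (Set.range f) with hN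
  let mk : MvPolynomial σ K →ₐ[K] (MvPolynomial σ K ⧸ N) := Ideal.Quotient.mkₐ K N
  have hind : LinearIndependent K (fun i => mk (f i)) := by
    rw [Fintype.linearIndependent_iff]
    intro c hc
    by_contra hcon
    push_neg at hcon
    obtain ⟨i, hi⟩ := hcon
    have hz : (∑ j, c j • f j) ∈ N := by
      have h0 : mk (∑ j, c j • f j) = 0 := by
        rw [map_sum]; simp_rw [map_smul]; exact hc
      rwa [Ideal.Quotient.mkₐ_eq_mk, Ideal.Quotient.eq_zero_iff_mem] at h0
    apply strong_min f d hf hfmin i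
    have key : f i = (c i)⁻¹ • (∑ j, c j • f j)
        - ∑ j ∈ Finset.univ.erase i, ((c i)⁻¹ * c j) • f j := by
      rw [← Finset.add_sum_erase _ _ (Finset.mem_univ i), smul_add]
      rw [smul_smul, inv_mul_cancel₀ hi, one_smul, Finset.smul_sum]
      simp_rw [smul_smul]
      abel
    rw [key]
    apply sub_mem
    · exact Submodule.mem_sup_right (Submodule.smul_of_tower_mem _ _ hz)
    · apply Submodule.mem_sup_left
      apply Submodule.sum_mem
      intro j hj
      exact Submodule.smul_of_tower_mem _ _
        (Ideal.subset_span ⟨j, Finset.ne_of_mem_erase hj, rfl⟩)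
  have hspan : ∀ i, mk (f i) ∈ Submodule.span K (Set.range fun k => mk (h k)) := by
    intro i
    have hfi : f i ∈ Ideal.span (Set.range h) := by
      rw [← hh]; exact Ideal.subset_span (Set.mem_range_self i)
    obtain ⟨c, hc⟩ := Ideal.mem_span_range_iff_exists_fun.mp hfi
    have heq : mk (f i) = ∑ k, constantCoeff (c k) • mk (h k) := by
      rw [← hc, map_sum]
      refine Finset.sum_congr rfl fun k _ => ?_
      have hmem : c k * h k - constantCoeff (c k) • h k ∈ N := by
        have e1 : c k * h k - constantCoeff (c k) • h k
            = (c k - C (constantCoeff (c k))) * h k := by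
          rw [sub_mul, smul_eq_C_mul]
        rw [e1, hN]
        apply Ideal.mul_mem_mul
        · rw [RingHom.mem_ker, map_sub, constantCoeff_C, sub_self]
        · rw [hh]; exact Ideal.subset_span (Set.mem_range_self k)
      have h0 : mk (c k * h k - constantCoeff (c k) • h k) = 0 := by
        rw [Ideal.Quotient.mkₐ_eq_mk, Ideal.Quotient.eq_zero_iff_mem]; exact hmem
      rw [map_sub, sub_eq_zero] at h0
      rw [h0, map_smul]
    rw [heq]
    exact Submodule.sum_mem _ fun k _ =>
      Submodule.smul_mem _ _ (Submodule.subset_span (Set.mem_range_self k))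
  set P := Submodule.span K (Set.range fun k => mk (h k)) with hP
  haveI : FiniteDimensional K P := FiniteDimensional.span_of_finite K (Set.finite_range _)
  let v : ι → P := fun i => ⟨mk (f i), hspan i⟩
  have hv : LinearIndependent K v := LinearIndependent.of_comp P.subtype hind
  calc Fintype.card ι ≤ Module.finrank K P := hv.fintype_card_le_finrank
    _ ≤ Fintype.card (Fin n) := finrank_range_le_card _
    _ = n := Fintype.card_fin n

/-- `μ(I)` equals the cardinality of a minimal homogeneous generating family -/
lemma mu_eq {ι : Type*} [Fintype ι] (f : ι → MvPolynomial σ K) (d : ι → ℕ)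
    (hf : ∀ i, (f i).IsHomogeneous (d i))
    (hfmin : ∀ i, f i ∉ Ideal.span (f '' {i' | i' ≠ i}))
    (I : Ideal (MvPolynomial σ K)) (hI : I = Ideal.span (Set.range f)) :
    mu I = Fintype.card ι := by
  have hwit : Fintype.card ι ∈
      {n | ∃ g : Fin n → MvPolynomial σ K, I = Ideal.span (Set.range g)} := by
    refine ⟨f ∘ (Fintype.equivFin ι).symm, ?_⟩
    rw [hI, Set.range_comp, (Fintype.equivFin ι).symm.surjective.range_eq, Set.image_univ]
  apply le_antisymm
  · exact Nat.sInf_le hwit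
  · apply le_csInf ⟨_, hwit⟩
    rintro n ⟨h, hn⟩
    exact card_le_of_span_eq f d hf hfmin h (by rw [← hI, hn])

/-- small-degree elements of the ideal lie in the span of the small-degree generators -/
lemma lowdeg_mem {ι : Type*} [Fintype ι] (f : ι → MvPolynomial σ K) (d : ι → ℕ)
    (hf : ∀ i, (f i).IsHomogeneous (d i)) (i0 : ι) {dd : ℕ} (hdd : dd < d i0)
    {p : MvPolynomial σ K} (hp : p ∈ Ideal.span (Set.range f))
    (hdeg : p.totalDegree ≤ dd) :
    p ∈ Ideal.span (f '' {i' | i' ≠ i0}) := by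
  obtain ⟨a, ha⟩ := Ideal.mem_span_range_iff_exists_fun.mp hp
  rw [← sum_homogeneousComponent p]
  apply Submodule.sum_mem
  intro e he
  simp only [Finset.mem_range] at he
  have he' : e ≤ dd := by omega
  rw [← ha, map_sum]
  apply Submodule.sum_mem
  intro i _
  rw [homogComp_mul (hf i)]
  split
  · rename_i hle
    have hi : i ≠ i0 := by rintro rfl; omega
    exact Ideal.mul_mem_left _ _ (Ideal.subset_span ⟨i, hi, rfl⟩)
  · exact Submodule.zero_mem _

lemma maxGenDeg_eq {ι : Type*} [Fintype ι] [Nonempty ι] (f : ι → MvPolynomial σ K)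
    (d : ι → ℕ) (hf : ∀ i, (f i).IsHomogeneous (d i))
    (hfmin : ∀ i, f i ∉ Ideal.span (f '' {i' | i' ≠ i}))
    (I : Ideal (MvPolynomial σ K)) (hI : I = Ideal.span (Set.range f)) :
    maxGenDeg I = Finset.univ.sup d := by
  have hmemD : I = Ideal.span {p | p ∈ I ∧ p.totalDegree ≤ Finset.univ.sup d} := by
    apply le_antisymm
    · rw [hI]
      apply Ideal.span_le.mpr
      rintro _ ⟨i, rfl⟩
      apply Ideal.subset_span
      refine ⟨Ideal.subset_span (Set.mem_range_self i),
        (hf i).totalDegree_le.trans (Finset.le_sup (Finset.mem_univ i))⟩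
    · apply Ideal.span_le.mpr
      intro p hp
      exact hp.1
  apply le_antisymm
  · exact Nat.sInf_le (Set.mem_setOf.mpr hmemD)
  · apply le_csInf ⟨Finset.univ.sup d, Set.mem_setOf.mpr hmemD⟩
    intro dd hdd
    by_contra hcon
    push_neg at hcon
    obtain ⟨i0, _, hi0⟩ := Finset.exists_mem_eq_sup Finset.univ Finset.univ_nonempty d
    apply hfmin i0
    have h1 : f i0 ∈ Ideal.span {p | p ∈ I ∧ p.totalDegree ≤ dd} := by
      rw [← hdd, hI]
      exact Ideal.subset_span (Set.mem_range_self i0)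
    refine Ideal.span_le.mpr ?_ h1
    intro p hp
    exact lowdeg_mem f d hf i0 (hi0 ▸ hcon) (by rw [← hI]; exact hp.1) hp.2

end Auxiliary

section LamSection

variable {K : Type*} [Field K] {s u : ℕ}

noncomputable def Lam (lam : MvPolynomial (Fin u) K →ₗ[K] K) :
    MvPolynomial (Fin s) (MvPolynomial (Fin u) K) → MvPolynomial (Fin s) K :=
  fun p => AddMonoidAlgebra.ofCoeff (Finsupp.mapRange (fun r => lam r) (map_zero lam) (AddMonoidAlgebra.coeff p))

lemma Lam_coeff (lam : MvPolynomial (Fin u) K →ₗ[K] K)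
    (p : MvPolynomial (Fin s) (MvPolynomial (Fin u) K)) (m : (Fin s) →₀ ℕ) :
    coeff m (Lam lam p) = lam (coeff m p) := rfl

lemma Lam_add (lam : MvPolynomial (Fin u) K →ₗ[K] K)
    (p q : MvPolynomial (Fin s) (MvPolynomial (Fin u) K)) :
    Lam lam (p + q) = Lam lam p + Lam lam q := by
  apply MvPolynomial.ext
  intro m
  rw [Lam_coeff, coeff_add, coeff_add, Lam_coeff, Lam_coeff, map_add]

lemma Lam_zero (lam : MvPolynomial (Fin u) K →ₗ[K] K) :
    Lam (s := s) lam 0 = 0 := by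
  apply MvPolynomial.ext
  intro m
  rw [Lam_coeff, coeff_zero, coeff_zero, map_zero]

lemma Lam_sum (lam : MvPolynomial (Fin u) K →ₗ[K] K) {α : Type*} (t : Finset α)
    (F : α → MvPolynomial (Fin s) (MvPolynomial (Fin u) K)) :
    Lam lam (∑ x ∈ t, F x) = ∑ x ∈ t, Lam lam (F x) := by
  classical
  induction t using Finset.induction_on with
  | empty => simp [Lam_zero]
  | insert a t' hx ih => rw [Finset.sum_insert hx, Finset.sum_insert hx, Lam_add, ih]

lemma Lam_mapC_mul (lam : MvPolynomial (Fin u) K →ₗ[K] K)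
    (p : MvPolynomial (Fin s) K) (z : MvPolynomial (Fin s) (MvPolynomial (Fin u) K)) :
    Lam lam ((map (C : K →+* MvPolynomial (Fin u) K) p) * z) = p * Lam lam z := by
  apply MvPolynomial.ext
  intro m
  rw [Lam_coeff, coeff_mul, coeff_mul, map_sum]
  refine Finset.sum_congr rfl fun x _ => ?_
  rw [coeff_map, Lam_coeff, ← smul_eq_C_mul, map_smul, smul_eq_mul]

lemma Lam_mul_C (lam : MvPolynomial (Fin u) K →ₗ[K] K)
    (b : MvPolynomial (Fin s) (MvPolynomial (Fin u) K)) (r : MvPolynomial (Fin u) K)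
    (hv : ∀ q : MvPolynomial (Fin u) K, lam (q * r) = 0) :
    Lam lam (b * C r) = 0 := by
  apply MvPolynomial.ext
  intro m
  rw [Lam_coeff, coeff_zero]
  have h1 : coeff m (b * C r) = coeff m b * r := by
    rw [mul_comm, coeff_C_mul, mul_comm]
  rw [h1, hv]

lemma Lam_C (lam : MvPolynomial (Fin u) K →ₗ[K] K) (r : MvPolynomial (Fin u) K) :
    Lam (s := s) lam (C r) = C (lam r) := by
  apply MvPolynomial.ext
  intro m
  rw [Lam_coeff, coeff_C, coeff_C]
  split <;> simp

set_option synthInstance.maxHeartbeats 1000000 in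
/-- the products of minimal generators are minimal generators of the product -/
lemma F_min {t w : ℕ} (f : Fin t → MvPolynomial (Fin s) K) (g : Fin w → MvPolynomial (Fin u) K)
    (df : Fin t → ℕ) (dg : Fin w → ℕ)
    (hf : ∀ i, (f i).IsHomogeneous (df i)) (hg : ∀ j, (g j).IsHomogeneous (dg j))
    (hfmin : ∀ i, f i ∉ Ideal.span (f '' {i' | i' ≠ i}))
    (hgmin : ∀ j, g j ∉ Ideal.span (g '' {j' | j' ≠ j}))
    (q0 : Fin t × Fin w) :
    (rename Sum.inl (f q0.1) * rename Sum.inr (g q0.2) : MvPolynomial (Fin s ⊕ Fin u) K) ∉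
      Ideal.span ((fun ij : Fin t × Fin w =>
        (rename Sum.inl (f ij.1) * rename Sum.inr (g ij.2) : MvPolynomial (Fin s ⊕ Fin u) K))
          '' {q' | q' ≠ q0}) := by
  classical
  obtain ⟨i0, j0⟩ := q0
  intro hmem
  set U : Ideal (MvPolynomial (Fin u) K) :=
    Ideal.span (g '' {j' | j' ≠ j0}) +
      RingHom.ker (constantCoeff (σ := Fin u) (R := K)) * Ideal.span (Set.range g) with hU
  have hg0 : g j0 ∉ U := strong_min g dg hg hgmin j0
  set W := Submodule.restrictScalars K (U : Submodule (MvPolynomial (Fin u) K)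
      (MvPolynomial (Fin u) K)) with hW
  have hx0 : W.mkQ (g j0) ≠ 0 := by
    simp only [Submodule.mkQ_apply]
    intro h
    rw [Submodule.Quotient.mk_eq_zero] at h
    exact hg0 h
  obtain ⟨φ, hφ⟩ : ∃ φ : Module.Dual K (MvPolynomial (Fin u) K ⧸ W), φ (W.mkQ (g j0)) ≠ 0 := by
    by_contra hcon
    push_neg at hcon
    exact hx0 ((Module.forall_dual_apply_eq_zero_iff K _).mp hcon)
  set lam : MvPolynomial (Fin u) K →ₗ[K] K :=
    (φ (W.mkQ (g j0)))⁻¹ • (φ.comp W.mkQ) with hlam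
  have hlam0 : ∀ y ∈ U, lam y = 0 := by
    intro y hy
    have : W.mkQ y = 0 := by
      rw [Submodule.mkQ_apply, Submodule.Quotient.mk_eq_zero]
      exact hy
    simp [hlam, this]
  have hlam1 : lam (g j0) = 1 := by
    rw [hlam]
    simp only [LinearMap.smul_apply, LinearMap.coe_comp, Function.comp_apply, smul_eq_mul]
    exact inv_mul_cancel₀ hφ
  set ι : MvPolynomial (Fin s ⊕ Fin u) K ≃ₐ[K] MvPolynomial (Fin s) (MvPolynomial (Fin u) K) :=
    sumAlgEquiv K (Fin s) (Fin u) with hι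
  have hinl : ∀ p : MvPolynomial (Fin s) K,
      ι (rename Sum.inl p) = map (C : K →+* MvPolynomial (Fin u) K) p := by
    intro p
    have h2 := AlgHom.congr_fun (sumAlgEquiv_comp_rename_inl (R := K) (S₁ := Fin s)
      (S₂ := Fin u)) p
    exact h2
  have hinr : ∀ r : MvPolynomial (Fin u) K,
      ι (rename Sum.inr r) = (C r : MvPolynomial (Fin s) (MvPolynomial (Fin u) K)) := by
    intro r
    have h2 := AlgHom.congr_fun (sumAlgEquiv_comp_rename_inr (R := K) (S₁ := Fin s)
      (S₂ := Fin u)) r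
    simpa [algebraMap_eq] using h2
  obtain ⟨a, ha⟩ := mem_span_image_rep _ _ hmem
  have lhs : Lam lam (ι (rename Sum.inl (f i0) * rename Sum.inr (g j0))) = f i0 := by
    rw [map_mul, hinl, hinr, Lam_mapC_mul, Lam_C, hlam1, map_one, mul_one]
  apply hfmin i0
  rw [← lhs, ha, map_sum, Lam_sum]
  apply Submodule.sum_mem
  rintro ⟨⟨i', j'⟩, hq'⟩ _
  simp only
  have hterm : ι (a ⟨(i', j'), hq'⟩ * (rename Sum.inl (f i') * rename Sum.inr (g j')))
      = map (C : K →+* MvPolynomial (Fin u) K) (f i')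
        * (ι (a ⟨(i', j'), hq'⟩) * C (g j')) := by
    rw [map_mul, map_mul, hinl, hinr]; ring
  rw [hterm, Lam_mapC_mul]
  by_cases hj : j' = j0
  · subst hj
    have hi : i' ≠ i0 := by
      rintro rfl
      exact hq' rfl
    exact Ideal.mul_mem_right _ _ (Ideal.subset_span ⟨i', hi, rfl⟩)
  · rw [Lam_mul_C]
    · rw [mul_zero]; exact Submodule.zero_mem _
    · intro q
      apply hlam0
      exact Submodule.mem_sup_left (Ideal.mul_mem_left _ _
        (Ideal.subset_span ⟨j', hj, rfl⟩))

end LamSection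

/-- if `{f_i}` and `{g_j}` are minimal homogeneous generating sets of
ideals `I ⊆ K[X]` and `J ⊆ K[Y]` in disjoint sets of variables, then `{f_i g_j}` is a
minimal generating set of `IJ ⊆ K[X,Y]`; in particular `μ(IJ) = μ(I)μ(J)` and
`d(IJ) = d(I) + d(J)`. -/
theorem product_of_ideals_disjoint_variables
    {K : Type*} [Field K] (s u t w : ℕ)
    (f : Fin t → MvPolynomial (Fin s) K) (g : Fin w → MvPolynomial (Fin u) K)
    (df : Fin t → ℕ) (dg : Fin w → ℕ)
    (hf : ∀ i, (f i).IsHomogeneous (df i)) (hg : ∀ j, (g j).IsHomogeneous (dg j))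
    (I : Ideal (MvPolynomial (Fin s) K)) (hI : I = Ideal.span (Set.range f))
    (J : Ideal (MvPolynomial (Fin u) K)) (hJ : J = Ideal.span (Set.range g))
    (hIne : I ≠ ⊥) (hIpr : I ≠ ⊤) (hJne : J ≠ ⊥) (hJpr : J ≠ ⊤)
    (hfmin : ∀ i, f i ∉ Ideal.span (f '' {i' | i' ≠ i}))
    (hgmin : ∀ j, g j ∉ Ideal.span (g '' {j' | j' ≠ j}))
    (IJ : Ideal (MvPolynomial (Fin s ⊕ Fin u) K))
    (hIJ : IJ = Ideal.map (rename (Sum.inl : Fin s → Fin s ⊕ Fin u)) I *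
                Ideal.map (rename (Sum.inr : Fin u → Fin s ⊕ Fin u)) J)
    (F : Fin t × Fin w → MvPolynomial (Fin s ⊕ Fin u) K)
    (hF : F = fun ij => rename Sum.inl (f ij.1) * rename Sum.inr (g ij.2)) :
    IJ = Ideal.span (Set.range F) ∧
    (∀ q : Fin t × Fin w, F q ∉ Ideal.span (F '' {q' | q' ≠ q})) ∧
    mu IJ = mu I * mu J ∧
    maxGenDeg IJ = maxGenDeg I + maxGenDeg J := by
  subst hF
  -- nonemptiness of the index types
  have ht : 0 < t := by
    rcases Nat.eq_zero_or_pos t with h0 | h; swap; · exact h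
    exfalso; apply hIne
    subst h0
    rw [hI, Set.range_eq_empty, Ideal.span_empty]
  have hw : 0 < w := by
    rcases Nat.eq_zero_or_pos w with h0 | h; swap; · exact h
    exfalso; apply hJne
    subst h0
    rw [hJ, Set.range_eq_empty, Ideal.span_empty]
  haveI : Nonempty (Fin t) := Fin.pos_iff_nonempty.mp ht
  haveI : Nonempty (Fin w) := Fin.pos_iff_nonempty.mp hw
  -- part 1
  have part1 : IJ = Ideal.span (Set.range fun ij : Fin t × Fin w =>
      rename Sum.inl (f ij.1) * rename Sum.inr (g ij.2)) := by
    rw [hIJ, hI, hJ, Ideal.map_span, Ideal.map_span, Ideal.span_mul_span']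
    congr 1
    ext z
    constructor
    · rintro ⟨x, ⟨_, ⟨i, rfl⟩, rfl⟩, y, ⟨_, ⟨j, rfl⟩, rfl⟩, rfl⟩
      exact ⟨(i, j), rfl⟩
    · rintro ⟨⟨i, j⟩, rfl⟩
      exact ⟨rename Sum.inl (f i), ⟨f i, ⟨i, rfl⟩, rfl⟩,
        rename Sum.inr (g j), ⟨g j, ⟨j, rfl⟩, rfl⟩, rfl⟩
  -- homogeneity and minimality of the family F
  have hFhom : ∀ q : Fin t × Fin w,
      ((fun ij : Fin t × Fin w => rename Sum.inl (f ij.1) * rename Sum.inr (g ij.2)) q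
        : MvPolynomial (Fin s ⊕ Fin u) K).IsHomogeneous (df q.1 + dg q.2) := by
    rintro ⟨i, j⟩
    exact ((hf i).rename_isHomogeneous).mul ((hg j).rename_isHomogeneous)
  have part2 := F_min f g df dg hf hg hfmin hgmin
  -- part 3
  have hmuI : mu I = t := by
    rw [mu_eq f df hf hfmin I hI, Fintype.card_fin]
  have hmuJ : mu J = w := by
    rw [mu_eq g dg hg hgmin J hJ, Fintype.card_fin]
  have hmuIJ : mu IJ = t * w := by
    rw [mu_eq _ (fun q : Fin t × Fin w => df q.1 + dg q.2) hFhom part2 IJ part1]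
    simp [Fintype.card_prod]
  -- part 4
  have hsup : (Finset.univ.sup fun q : Fin t × Fin w => df q.1 + dg q.2)
      = Finset.univ.sup df + Finset.univ.sup dg := by
    apply le_antisymm
    · apply Finset.sup_le
      rintro ⟨i, j⟩ _
      exact add_le_add (Finset.le_sup (Finset.mem_univ i)) (Finset.le_sup (Finset.mem_univ j))
    · obtain ⟨i0, _, hi0⟩ := Finset.exists_mem_eq_sup Finset.univ Finset.univ_nonempty df
      obtain ⟨j0, _, hj0⟩ := Finset.exists_mem_eq_sup Finset.univ Finset.univ_nonempty dg
      rw [hi0, hj0]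
      exact Finset.le_sup (f := fun q : Fin t × Fin w => df q.1 + dg q.2)
        (Finset.mem_univ (i0, j0))
  have hdI : maxGenDeg I = Finset.univ.sup df := maxGenDeg_eq f df hf hfmin I hI
  have hdJ : maxGenDeg J = Finset.univ.sup dg := maxGenDeg_eq g dg hg hgmin J hJ
  have hdIJ : maxGenDeg IJ = Finset.univ.sup df + Finset.univ.sup dg := by
    rw [maxGenDeg_eq _ (fun q : Fin t × Fin w => df q.1 + dg q.2) hFhom part2 IJ part1, hsup]
  exact ⟨part1, part2, by rw [hmuI, hmuJ, hmuIJ], by rw [hdIJ, hdI, hdJ]⟩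
end

section
/- Let I be a monomial ideal of K[X_1,...,X_s] and δ(I) the maximal ℓ¹-norm of a vertex of the Newton polyhedron NP(I). Then d(I^n) ≥ δ(I)·n for all n ≥ 1. -/
open MvPolynomial Pointwise

/-- The Newton polyhedron `NP(I) = conv(E(I))` of a monomial ideal: the convex hull of
the set of exponents of monomials belonging to `I`. -/
def newtonPolyhedron {K : Type*} [Field K] (s : ℕ)
    (I : Ideal (MvPolynomial (Fin s) K)) : Set (Fin s → ℝ) :=
  convexHull ℝ {x | ∃ α : Fin s →₀ ℕ, monomial α (1 : K) ∈ I ∧ x = fun i => (α i : ℝ)}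

/-- Every exponent in the support of an element of the ideal generated by `S` is dominated
by an exponent occurring in some member of `S`. -/
lemma support_span_aux {K : Type*} [Field K] {σ : Type*} {Q : (σ →₀ ℕ) → Prop}
    {S : Set (MvPolynomial σ K)}
    (hS : ∀ g ∈ S, ∀ β ∈ g.support, Q β)
    {p : MvPolynomial σ K} (hp : p ∈ Ideal.span S) :
    ∀ β ∈ p.support, ∃ β₀ γ, Q β₀ ∧ β = γ + β₀ := by
  classical
  induction hp using Submodule.span_induction with
  | mem g hg => exact fun β hβ => ⟨β, 0, hS g hg β hβ, (zero_add β).symm⟩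
  | zero => intro β hβ; simp at hβ
  | add x y hx hy ihx ihy =>
    intro β hβ
    rcases Finset.mem_union.1 (MvPolynomial.support_add hβ) with h | h
    · exact ihx β h
    · exact ihy β h
  | smul a x hx ih =>
    intro β hβ
    rw [smul_eq_mul] at hβ
    have h0 : MvPolynomial.coeff β (a * x) ≠ 0 := MvPolynomial.mem_support_iff.1 hβ
    rw [MvPolynomial.coeff_mul] at h0
    obtain ⟨c, hc, hc0⟩ := Finset.exists_ne_zero_of_sum_ne_zero h0
    have hx2 : c.2 ∈ x.support := MvPolynomial.mem_support_iff.2 (right_ne_zero_of_mul hc0)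
    obtain ⟨β₀, γ, hQ, hβ₀⟩ := ih c.2 hx2
    exact ⟨β₀, c.1 + γ, hQ, by rw [← Finset.HasAntidiagonal.mem_antidiagonal.1 hc, hβ₀, add_assoc]⟩

lemma prod_monomial_one {K : Type*} [Field K] {σ : Type*} {ι : Type*} (t : Finset ι)
    (τ : ι → (σ →₀ ℕ)) :
    ∏ i ∈ t, monomial (τ i) (1 : K) = monomial (∑ i ∈ t, τ i) 1 := by
  classical
  induction t using Finset.induction with
  | empty => simp
  | insert _ _ h ih =>
    rw [Finset.prod_insert h, Finset.sum_insert h, ih, MvPolynomial.monomial_mul, one_mul]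

/-- if `δ(I)` is the maximal ℓ¹-norm of a vertex of the Newton polyhedron
of a monomial ideal `I`, then `d(I^n) ≥ δ(I)·n` for all `n ≥ 1`. -/
theorem maxGenDeg_ge_delta_mul
    {K : Type*} [Field K] (s : ℕ) (I : Ideal (MvPolynomial (Fin s) K))
    (hI : IsMonomialIdeal I) (hne : I ≠ ⊥) (hpr : I ≠ ⊤)
    (δ : ℕ)
    (hδ : IsGreatest ((fun x : Fin s → ℝ => ∑ i, x i) ''
      Set.extremePoints ℝ (newtonPolyhedron s I)) (δ : ℝ)) :
    ∀ n : ℕ, 1 ≤ n → δ * n ≤ maxGenDeg (I ^ n) := by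
  classical
  intro n hn
  obtain ⟨S, hIS⟩ := hI
  obtain ⟨v, hv, hvsum⟩ := hδ.1
  have hv' : v ∈ Set.extremePoints ℝ
      (convexHull ℝ {x | ∃ α : Fin s →₀ ℕ, monomial α (1 : K) ∈ I ∧
        x = fun i => (α i : ℝ)}) := hv
  obtain ⟨α, hαI, rfl⟩ := extremePoints_convexHull_subset hv'
  have hvsum' : (∑ i, ((α i : ℕ) : ℝ)) = (δ : ℝ) := hvsum
  have hαsum : ∑ i, α i = δ := by exact_mod_cast hvsum'
  have hnR : (0:ℝ) < n := by exact_mod_cast hn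
  -- lower bound: any `d` in the defining set satisfies `δ * n ≤ d`.
  have hlb : ∀ d : ℕ, (I ^ n = Ideal.span {f | f ∈ I ^ n ∧ f.totalDegree ≤ d}) →
      δ * n ≤ d := by
    intro d hd
    -- `I ^ n` is generated by products of `n` monomials of `I`.
    have hPn : I ^ n = Ideal.span (((fun α => monomial α (1 : K)) '' S) ^ n) := by
      rw [hIS, Ideal.span, Submodule.span_pow]
    have hgen : ∀ g ∈ ((fun α => monomial α (1 : K)) '' S) ^ n,
        ∀ β ∈ g.support, ∃ f : Fin n → (Fin s →₀ ℕ),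
          (∀ i, monomial (f i) (1 : K) ∈ I) ∧ β = ∑ i, f i := by
      intro g hg β hβ
      obtain ⟨f, hf⟩ := Set.mem_pow.1 hg
      choose τ hτS hτ using fun i => (f i).2
      have hg' : g = monomial (∑ i, τ i) (1 : K) := by
        rw [← hf, List.prod_ofFn, ← prod_monomial_one]
        exact Finset.prod_congr rfl fun i _ => (hτ i).symm
      rw [hg'] at hβ
      rw [MvPolynomial.support_monomial] at hβ
      simp only [one_ne_zero, if_false, Finset.mem_singleton] at hβ
      subst hβ
      refine ⟨τ, fun i => ?_, rfl⟩
      rw [hIS]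
      exact Ideal.subset_span ⟨τ i, hτS i, rfl⟩
    -- property of the degree-`d` generating set
    set Q : (Fin s →₀ ℕ) → Prop := fun β =>
      (∑ i, β i ≤ d) ∧ ∃ (f : Fin n → (Fin s →₀ ℕ)) (γ' : Fin s →₀ ℕ),
        (∀ i, monomial (f i) (1 : K) ∈ I) ∧ β = γ' + ∑ i, f i with hQdef
    have hQ : ∀ g ∈ {f : MvPolynomial (Fin s) K | f ∈ I ^ n ∧ f.totalDegree ≤ d},
        ∀ β ∈ g.support, Q β := by
      intro g hg β hβ
      constructor
      · have h1 : β.sum (fun _ e => e) ≤ g.totalDegree := MvPolynomial.le_totalDegree hβ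
        have h2 : β.sum (fun _ e => e) = ∑ i, β i :=
          Finsupp.sum_fintype _ _ (fun _ => rfl)
        calc ∑ i, β i = β.sum (fun _ e => e) := h2.symm
          _ ≤ g.totalDegree := h1
          _ ≤ d := hg.2
      · obtain ⟨β₀, γ', hβ₀, hβeq⟩ := support_span_aux hgen (hPn ▸ hg.1) β hβ
        obtain ⟨f, hfI, hfeq⟩ := hβ₀
        exact ⟨f, γ', hfI, by rw [hβeq, hfeq]⟩
    -- the monomial `X^{nα}` lies in `I ^ n`
    have hmono : (monomial (n • α) (1 : K)) ∈
        Ideal.span {f : MvPolynomial (Fin s) K | f ∈ I ^ n ∧ f.totalDegree ≤ d} := by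
      rw [← hd]
      have hpow : monomial α (1 : K) ^ n = monomial (n • α) 1 := by
        rw [MvPolynomial.monomial_pow, one_pow]
      exact hpow ▸ Ideal.pow_mem_pow hαI n
    have hsupp : n • α ∈ (monomial (n • α) (1 : K)).support := by
      rw [MvPolynomial.support_monomial]
      simp
    obtain ⟨β, γ, hQβ, hnα⟩ := support_span_aux hQ hmono (n • α) hsupp
    obtain ⟨hβd, f, γ', hfI, hβeq⟩ := hQβ
    -- `n • α = (γ + γ') + ∑ i, f i`
    have heq : n • α = (γ + γ') + ∑ i, f i := by
      rw [hnα, hβeq]; abel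
    set w : Fin s →₀ ℕ := γ + γ' with hw
    -- points of the Newton polyhedron
    have hu : (fun i => (((α + w) i : ℕ) : ℝ)) ∈ newtonPolyhedron s I := by
      apply subset_convexHull ℝ _
      refine ⟨α + w, ?_, rfl⟩
      have : monomial w (1 : K) * monomial α 1 ∈ I := Ideal.mul_mem_left _ _ hαI
      rwa [MvPolynomial.monomial_mul, one_mul, add_comm w α] at this
    have hc : (∑ i : Fin n, (n : ℝ)⁻¹ • (fun j => (((f i) j : ℕ) : ℝ)))
        ∈ newtonPolyhedron s I := by
      apply (convex_convexHull ℝ _).sum_mem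
      · intro i _; positivity
      · rw [Finset.sum_const, Finset.card_univ, Fintype.card_fin, nsmul_eq_mul]
        field_simp
      · intro i _
        exact subset_convexHull ℝ _ ⟨f i, hfI i, rfl⟩
    -- `α` is a nontrivial convex combination of `u` and `c`
    have hseg : (fun i => ((α i : ℕ) : ℝ)) ∈ openSegment ℝ
        (fun i => (((α + w) i : ℕ) : ℝ))
        (∑ i : Fin n, (n : ℝ)⁻¹ • (fun j => (((f i) j : ℕ) : ℝ))) := by
      refine ⟨((n : ℝ) + 1)⁻¹, (n : ℝ) * ((n : ℝ) + 1)⁻¹, by positivity, by positivity,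
        by field_simp; ring, ?_⟩
      funext j
      have hj0 := DFunLike.congr_fun heq j
      rw [Finsupp.smul_apply, Finsupp.add_apply, Finsupp.finset_sum_apply] at hj0
      have hj : (n : ℝ) * (α j : ℕ) = ((w j : ℕ) : ℝ) + ∑ i, (((f i) j : ℕ) : ℝ) := by
        exact_mod_cast congrArg (Nat.cast : ℕ → ℝ) (by
          simpa [smul_eq_mul] using hj0)
      simp only [Pi.add_apply, Pi.smul_apply, smul_eq_mul, Finset.sum_apply,
        Finsupp.add_apply, Nat.cast_add]
      rw [← Finset.mul_sum]
      have hnn : (n:ℝ) ≠ 0 := ne_of_gt hnR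
      have hn1 : ((n:ℝ)+1) ≠ 0 := by positivity
      field_simp
      linear_combination (-1 : ℝ) * hj
    -- extremality forces `w = 0`
    have hext := hv.2 hu hc hseg
    have hweq : ∀ j, ((α + w) j : ℕ) = α j := by
      intro j
      have := congrFun hext j
      exact_mod_cast this
    have hw0 : ∀ j, w j = 0 := by
      intro j
      have := hweq j
      rw [Finsupp.add_apply] at this
      omega
    have hγ0 : ∀ j, γ j = 0 ∧ γ' j = 0 := by
      intro j
      have := hw0 j
      rw [hw, Finsupp.add_apply] at this
      omega
    -- hence `n • α = β` and `δ * n = ∑ (n • α) i ≤ d`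
    have hβα : ∀ j, (n • α) j = β j := by
      intro j
      have h1 := DFunLike.congr_fun hnα j
      rw [Finsupp.add_apply] at h1
      have := (hγ0 j).1
      omega
    calc δ * n = ∑ i, (n • α) i := by
          simp only [Finsupp.smul_apply, smul_eq_mul, ← Finset.mul_sum, hαsum]
          ring
      _ = ∑ i, β i := Finset.sum_congr rfl fun i _ => hβα i
      _ ≤ d := hβd
  -- the defining set is nonempty, by Noetherianity
  have hfg : (I ^ n).FG := IsNoetherian.noetherian _
  obtain ⟨T, hT⟩ := hfg
  set d₀ := T.sup MvPolynomial.totalDegree with hd₀def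
  have hd₀ : I ^ n = Ideal.span {f | f ∈ I ^ n ∧ f.totalDegree ≤ d₀} := by
    apply le_antisymm
    · rw [← hT]
      apply Ideal.span_mono
      intro g hg
      exact ⟨hT ▸ Ideal.subset_span hg, Finset.le_sup hg⟩
    · rw [Ideal.span_le]
      exact fun g hg => hg.1
  exact le_csInf ⟨d₀, hd₀⟩ fun d hd => hlb d hd
end

section
/- Let s ≥ 3 and δ ≥ s+1 be integers. Define v_i ∈ ℕ^s by v_i = (δ−1)e_i + e_{i+1} for 1 ≤ i ≤ s−1 and v_s = e_1 + (δ−1)e_s, and let v = (δ−s+1, 1, 1, ..., 1). Then v lies in the convex hull of {v_1,...,v_s}; moreover the unique coefficients α_1,...,α_s with Σα_i = 1 and Σα_i v_i = v are all strictly positive. -/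
set_option maxHeartbeats 1000000


/-- for `s ≥ 3` and `δ ≥ s+1`, the vector `v = (δ−s+1, 1, ..., 1)` lies in
the convex hull of `v_1, ..., v_s` where `v_i = (δ−1)e_i + e_{i+1}` (cyclically); and the
unique coefficients `α_i` with `Σα_i = 1` and `Σα_i v_i = v` are all strictly positive. -/
theorem v_in_convex_hull_with_positive_coefficients
    (s : ℕ) [NeZero s] (hs : 3 ≤ s) (δ : ℕ) (hδ : s + 1 ≤ δ)
    (v : Fin s → Fin s → ℝ)
    (hvi : v = fun i j => if j = i then (δ : ℝ) - 1 else if j = i + 1 then 1 else 0)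
    (w : Fin s → ℝ)
    (hw : w = fun j => if j = 0 then (δ : ℝ) - s + 1 else 1) :
    ∃ α : Fin s → ℝ,
      (∀ i, 0 < α i) ∧ (∑ i, α i = 1) ∧ (∀ j, ∑ i, α i * v i j = w j) ∧
      ∀ β : Fin s → ℝ, (∀ i, 0 ≤ β i) → (∑ i, β i = 1) →
        (∀ j, ∑ i, β i * v i j = w j) → β = α := by
  subst hvi hw
  obtain ⟨m, rfl⟩ : ∃ m, s = m + 1 := ⟨s - 1, by omega⟩
  have hm : 2 ≤ m := by omega
  simp only [Nat.cast_add, Nat.cast_one]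
  obtain ⟨t, ht_def⟩ : ∃ t : ℝ, t = (δ : ℝ) - 1 := ⟨_, rfl⟩
  have hsR : (3 : ℝ) ≤ ((m : ℝ) + 1) := by exact_mod_cast hs
  have hts : ((m : ℝ) + 1) ≤ t := by
    have : ((m + 1 : ℕ) : ℝ) + 1 ≤ (δ : ℝ) := by exact_mod_cast hδ
    rw [ht_def]; push_cast at this ⊢; linarith
  have ht0 : (0 : ℝ) < t := by linarith
  have ht1 : (1 : ℝ) < t := by linarith
  obtain ⟨x, hx_def⟩ : ∃ x : ℝ, x = -1 / t := ⟨_, rfl⟩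
  have hxabs : |x| = 1 / t := by
    rw [hx_def, abs_div, abs_neg, abs_one, abs_of_pos ht0]
  have hxle1 : |x| ≤ 1 := by rw [hxabs]; rw [div_le_one ht0]; linarith
  have hxm2 : |x ^ m| ≤ 1 / t ^ 2 := by
    rw [abs_pow, hxabs]
    have h1 : (1 / t) ^ m ≤ (1 / t) ^ 2 :=
      pow_le_pow_of_le_one (by positivity) (by rw [div_le_one ht0]; linarith) hm
    exact h1.trans_eq (by rw [div_pow, one_pow])
  have hxm_lb : -(1 / t ^ 2) ≤ x ^ m := by
    have := neg_abs_le (x ^ m); linarith [hxm2]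
  have hxm_ub : x ^ m ≤ 1 / t ^ 2 := le_trans (le_abs_self _) hxm2
  obtain ⟨D, hD_def⟩ : ∃ D : ℝ, D = t + x ^ m := ⟨_, rfl⟩
  have hD0 : 0 < D := by
    have h2 : 1 / t ^ 2 < t := by
      rw [div_lt_iff₀ (by positivity)]; nlinarith
    rw [hD_def]; nlinarith
  have hDne : D ≠ 0 := ne_of_gt hD0
  obtain ⟨c, hc_def⟩ : ∃ c : ℝ, c = (t - ((m : ℝ) + 1) + 1) / D := ⟨_, rfl⟩
  have hnum_pos : 0 < t - ((m : ℝ) + 1) + 1 := by linarith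
  have hc0 : 0 < c := by rw [hc_def]; exact div_pos hnum_pos hD0
  have hδ0 : (0 : ℝ) < t + 1 := by linarith
  obtain ⟨p, hp_def⟩ : ∃ p : ℝ, p = 1 / (t + 1) := ⟨_, rfl⟩
  have hp0 : 0 < p := by rw [hp_def]; positivity
  obtain ⟨α, hα_def⟩ : ∃ α : Fin (m + 1) → ℝ, α = fun i : Fin (m + 1) => p + c * x ^ (i : ℕ) := ⟨_, rfl⟩
  have h10 : (1 : Fin (m + 1)) ≠ 0 := by
    simp [Fin.ext_iff, Fin.val_one, Nat.mod_eq_of_lt (by omega : 1 < m + 1)]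
  -- row sum lemma
  have hrow : ∀ (γ : Fin (m + 1) → ℝ) (j : Fin (m + 1)),
      (∑ i, γ i * (if j = i then t else if j = i + 1 then 1 else 0))
        = t * γ j + γ (j - 1) := by
    intro γ j
    have hjne : j ≠ j - 1 := by
      intro h
      exact h10 (sub_eq_self.mp h.symm)
    have key : ∀ i : Fin (m + 1),
        γ i * (if j = i then t else if j = i + 1 then 1 else 0)
          = (if i = j then t * γ j else 0) + (if i = j - 1 then γ (j - 1) else 0) := by
      intro i
      by_cases hij : i = j
      · subst hij
        rw [if_pos rfl, if_pos rfl, if_neg hjne]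
        ring
      · by_cases hij1 : i = j - 1
        · have hji : j ≠ i := fun h => hij h.symm
          have : j = i + 1 := by rw [hij1]; exact (sub_add_cancel j 1).symm
          rw [if_neg hji, if_pos this, if_neg hij, if_pos hij1, hij1]
          ring
        · have hji : j ≠ i := fun h => hij h.symm
          have hji1 : j ≠ i + 1 := by
            intro h
            exact hij1 (by rw [h]; exact (add_sub_cancel_right i 1).symm)
          rw [if_neg hji, if_neg hji1, if_neg hij, if_neg hij1]
          ring
    rw [Finset.sum_congr rfl (fun i _ => key i), Finset.sum_add_distrib]
    simp
  -- column sums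
  have hcol : ∀ i : Fin (m + 1),
      (∑ j, (if j = i then t else if j = i + 1 then 1 else 0)) = t + 1 := by
    intro i
    have hii : i ≠ i + 1 := by
      intro h
      exact h10 (add_eq_left.mp h.symm)
    have key : ∀ j : Fin (m + 1),
        (if j = i then t else if j = i + 1 then 1 else 0)
          = (if j = i then t else 0) + (if j = i + 1 then 1 else 0) := by
      intro j
      by_cases hji : j = i
      · rw [if_pos hji, if_pos hji, if_neg (hji ▸ hii)]; ring
      · rw [if_neg hji, if_neg hji]; ring
    rw [Finset.sum_congr rfl (fun j _ => key j), Finset.sum_add_distrib]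
    simp
  -- the key recurrence values of α
  have hval0 : (((0 : Fin (m + 1)) - 1) : Fin (m + 1)).val = m := by
    rw [Fin.coe_sub_one, if_pos rfl]
  have hvalsucc : ∀ (k : ℕ) (h : k + 1 < m + 1),
      ((⟨k + 1, h⟩ : Fin (m + 1)) - 1) = ⟨k, by omega⟩ := by
    intro k h
    apply Fin.ext
    rw [Fin.coe_sub_one, if_neg (by simp [Fin.ext_iff])]
    simp
  have hcD : c * D = t - ((m : ℝ) + 1) + 1 := by
    rw [hc_def]; field_simp
  have heq : ∀ j : Fin (m + 1), t * α j + α (j - 1)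
      = (if j = 0 then (δ : ℝ) - ((m : ℝ) + 1) + 1 else 1) := by
    intro j
    by_cases hj : j = 0
    · subst hj
      rw [if_pos rfl]
      simp only [hα_def, Fin.val_zero, pow_zero, hval0]
      have : t * (p + c * 1) + (p + c * x ^ m) = (t + 1) * p + c * D := by
        rw [hD_def]; ring
      rw [this, hcD, hp_def]
      have h1 : (t + 1) * (1 / (t + 1)) = 1 := by field_simp
      rw [h1, ht_def]
      push_cast
      ring
    · rw [if_neg hj]
      obtain ⟨k, hk⟩ : ∃ k, (j : ℕ) = k + 1 := by
        have : (j : ℕ) ≠ 0 := fun h => hj (Fin.ext h)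
        exact ⟨(j : ℕ) - 1, by omega⟩
      have hj_eq : j = ⟨k + 1, hk ▸ j.isLt⟩ := Fin.ext hk
      rw [hj_eq, hvalsucc k _]
      simp only [hα_def]
      have htx : t * x = -1 := by rw [hx_def]; field_simp
      have : t * (p + c * x ^ (k + 1)) + (p + c * x ^ k)
          = (t + 1) * p + c * x ^ k * (t * x + 1) := by ring
      rw [this, htx, hp_def]
      field_simp
      ring
  -- third property
  have h3 : ∀ j : Fin (m + 1), (∑ i, α i *
      (if j = i then t else if j = i + 1 then 1 else 0))
        = (if j = 0 then (δ : ℝ) - ((m : ℝ) + 1) + 1 else 1) := by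
    intro j
    rw [hrow α j, heq j]
  -- sum of w
  have hwsum : (∑ j : Fin (m + 1), (if j = 0 then (δ : ℝ) - ((m : ℝ) + 1) + 1 else 1))
      = (δ : ℝ) := by
    have key : ∀ j : Fin (m + 1), (if j = 0 then (δ : ℝ) - ((m : ℝ) + 1) + 1 else 1)
        = (if j = 0 then (δ : ℝ) - ((m : ℝ) + 1) else 0) + 1 := by
      intro j
      by_cases hj : j = 0 <;> simp [hj]
    rw [Finset.sum_congr rfl (fun j _ => key j), Finset.sum_add_distrib]
    simp only [Finset.sum_ite_eq', Finset.mem_univ, if_true, Finset.sum_const,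
      Finset.card_univ, Fintype.card_fin, nsmul_eq_mul, mul_one]
    push_cast
    ring
  -- second property
  have hδR : t + 1 = (δ : ℝ) := by rw [ht_def]; ring
  have h2 : ∑ i, α i = 1 := by
    have hswap : (∑ j : Fin (m + 1), ∑ i, α i *
        (if j = i then t else if j = i + 1 then 1 else 0)) = (δ : ℝ) := by
      rw [Finset.sum_congr rfl (fun j _ => h3 j), hwsum]
    rw [Finset.sum_comm] at hswap
    have : (∑ i : Fin (m + 1), α i * (t + 1)) = (δ : ℝ) := by
      rw [← hswap]
      apply Finset.sum_congr rfl
      intro i _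
      rw [← Finset.mul_sum, hcol i]
    rw [← Finset.sum_mul, hδR] at this
    have hδne : (δ : ℝ) ≠ 0 := by
      have : (0:ℝ) < (δ:ℝ) := by exact_mod_cast (by omega : 0 < δ)
      exact ne_of_gt this
    exact mul_right_cancel₀ hδne (by rw [this, one_mul])
  -- positivity
  have hc_lt : c < t / (t + 1) := by
    rw [hc_def, div_lt_div_iff₀ hD0 hδ0, hD_def]
    have h1t : -(1 / t) ≤ t * x ^ m := by
      have h := mul_le_mul_of_nonneg_left hxm_lb ht0.le
      have he : t * (1 / t ^ 2) = 1 / t := by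
        field_simp
      rw [mul_neg, he] at h
      exact h
    have hm2 : (2 : ℝ) ≤ (m : ℝ) := by exact_mod_cast hm
    have h2m : 2 * (t + 1) ≤ (m : ℝ) * (t + 1) := by nlinarith
    have hone : 1 / t < 1 := by rw [div_lt_one ht0]; linarith
    nlinarith [h1t, h2m, hone]
  have h1 : ∀ i, 0 < α i := by
    intro i
    have hxk : -(1 / t) ≤ x ^ (i : ℕ) := by
      rcases Nat.eq_zero_or_pos (i : ℕ) with h | h
      · rw [h, pow_zero]
        have : 0 < 1 / t := by positivity
        linarith
      · have h1 : |x ^ (i : ℕ)| ≤ 1 / t := by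
          rw [abs_pow, hxabs]
          calc (1 / t) ^ (i : ℕ) ≤ (1 / t) ^ 1 :=
            pow_le_pow_of_le_one (by positivity) (by rw [div_le_one ht0]; linarith) h
            _ = 1 / t := pow_one _
        linarith [neg_abs_le (x ^ (i : ℕ))]
    have hge : p + c * (-(1 / t)) ≤ α i := by
      simp only [hα_def]
      have := mul_le_mul_of_nonneg_left hxk hc0.le
      linarith
    have hpos : 0 < p + c * (-(1 / t)) := by
      have h1 : c * (1 / t) < (t / (t + 1)) * (1 / t) := by
        apply mul_lt_mul_of_pos_right hc_lt (by positivity)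
      have h2 : (t / (t + 1)) * (1 / t) = p := by
        rw [hp_def]; field_simp; try ring
      rw [h2] at h1
      have hrw : c * (-(1 / t)) = -(c * (1 / t)) := by ring
      rw [hrw]
      linarith
    linarith
  -- uniqueness
  rw [← ht_def]
  refine ⟨α, h1, h2, h3, ?_⟩
  intro β _ _ hβ3
  have hβrow : ∀ j : Fin (m + 1), t * β j + β (j - 1)
      = (if j = 0 then (δ : ℝ) - ((m : ℝ) + 1) + 1 else 1) := by
    intro j
    rw [← hrow β j]
    exact hβ3 j
  obtain ⟨d, hd_def⟩ : ∃ d : Fin (m + 1) → ℝ, d = fun i => β i - α i := ⟨_, rfl⟩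
  have hd : ∀ j : Fin (m + 1), t * d j + d (j - 1) = 0 := by
    intro j
    have := hβrow j
    rw [← heq j] at this
    simp only [hd_def]
    linarith
  have claim : ∀ (k : ℕ) (h : k < m + 1), d ⟨k, h⟩ = d 0 * x ^ k := by
    intro k
    induction k with
    | zero => intro h; simp
    | succ k ih =>
      intro h
      have hk : k < m + 1 := by omega
      have hdj := hd ⟨k + 1, h⟩
      rw [hvalsucc k h] at hdj
      rw [ih hk] at hdj
      have htne : t ≠ 0 := ne_of_gt ht0
      have : d ⟨k + 1, h⟩ = -(d 0 * x ^ k) / t := by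
        field_simp at hdj ⊢
        linarith
      rw [this, pow_succ, hx_def]
      field_simp
      try ring
  have hd0 : d 0 = 0 := by
    have hdj := hd 0
    have h01 : ((0 : Fin (m + 1)) - 1) = ⟨m, by omega⟩ := Fin.ext hval0
    rw [h01, claim m (by omega)] at hdj
    have : d 0 * D = 0 := by rw [hD_def]; linarith
    exact (mul_eq_zero.mp this).resolve_right hDne
  funext i
  have : d i = 0 := by
    have h := claim (i : ℕ) i.isLt
    rw [Fin.eta] at h
    rw [h, hd0, zero_mul]
  have := this
  simp only [hd_def] at this
  linarith
end

section
/- Let s ≥ 3, δ ≥ s+1, and consider the monomial ideal I = (M_1,...,M_s, M) in K[X_1,...,X_s,Y], where M_i = X^{v_i} with v_i = (δ−1)e_i + e_{i+1} (indices mod s, i.e., v_s = e_1 + (δ−1)e_s) and M = X_1^{δ−s+1}X_2⋯X_s·Y. Let J = (M_1,...,M_s). Then the reduction number r(I) = min{t ≥ 1 : M^t ∈ J^t} − 1 satisfies (δ−1)^{s−2} < r(I) ≤ (δ−1)^s. -/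
open MvPolynomial

lemma prod_monomial_pow {K : Type*} [CommSemiring K] {σ : Type*} {ι : Type*} (s : Finset ι)
    (d : ι → (σ →₀ ℕ)) (a : ι → ℕ) :
    (∏ i ∈ s, (monomial (d i) (1:K)) ^ a i) = monomial (∑ i ∈ s, a i • d i) 1 := by
  classical
  induction s using Finset.induction_on with
  | empty => simp
  | @insert x s' hx ih =>
    rw [Finset.prod_insert hx, Finset.sum_insert hx, ih, monomial_pow, monomial_mul]
    simp


section Aux
variable (s δ : ℕ) [NeZero s]

noncomputable def dv (i : Fin s) : Fin (s+1) →₀ ℕ :=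
  Finsupp.single i.castSucc (δ-1) + Finsupp.single (i+1).castSucc 1

noncomputable def emv : Fin (s+1) →₀ ℕ :=
  Finsupp.single 0 (δ-s) + (∑ i : Fin s, Finsupp.single i.castSucc 1) +
    Finsupp.single (Fin.last s) 1

lemma sum_dv_apply (a : Fin s → ℕ) (j : Fin s) :
    (∑ i, a i • dv s δ i) (Fin.castSucc j) = (δ-1) * a j + a (j - 1) := by
  classical
  rw [Finset.sum_apply']
  simp only [dv, Finsupp.smul_apply, Finsupp.add_apply, Finsupp.single_apply,
    Fin.castSucc_inj, smul_eq_mul]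
  simp_rw [← eq_sub_iff_add_eq]
  simp [mul_add, Finset.sum_add_distrib, mul_ite, Finset.sum_ite_eq', mul_comm]

lemma sum_dv_apply_last (a : Fin s → ℕ) :
    (∑ i, a i • dv s δ i) (Fin.last s) = 0 := by
  classical
  rw [Finset.sum_apply']
  simp [dv, Finsupp.single_apply, (Fin.castSucc_lt_last _).ne]

lemma emv_apply (j : Fin s) :
    emv s δ (Fin.castSucc j) = (if j = 0 then δ - s else 0) + 1 := by
  classical
  simp only [emv, Finsupp.add_apply, Finsupp.single_apply, Finset.sum_apply',
    Fin.castSucc_inj]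
  rw [Finset.sum_ite_eq' Finset.univ j (fun _ => 1)]
  have h0 : ((0 : Fin (s+1)) = Fin.castSucc j) ↔ j = 0 := by
    have hs := NeZero.ne s
    simp only [Fin.ext_iff, Fin.coe_castSucc, Fin.val_zero]
    omega
  have hl : ¬ (Fin.last s = Fin.castSucc j) := (Fin.castSucc_lt_last _).ne'
  simp [h0, hl]

lemma emv_apply_last : emv s δ (Fin.last s) = 1 := by
  classical
  have : ∀ i : Fin s, ¬ (Fin.castSucc i = Fin.last s) := fun i => (Fin.castSucc_lt_last _).ne
  have h0 : ((0 : Fin (s+1)) = Fin.last s) ↔ False := by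
    have hs := NeZero.ne s
    simp only [Fin.ext_iff, Fin.val_zero, Fin.val_last, iff_false]
    omega
  simp [emv, Finsupp.single_apply, Finset.sum_apply', this, h0]

lemma le_emv_iff (a : Fin s → ℕ) (t : ℕ) :
    (∑ i, a i • dv s δ i) ≤ t • emv s δ ↔
      ∀ j : Fin s, (δ-1) * a j + a (j - 1) ≤ t * ((if j = 0 then δ - s else 0) + 1) := by
  rw [Finsupp.le_def]
  constructor
  · intro h j
    have := h (Fin.castSucc j)
    rwa [sum_dv_apply, Finsupp.smul_apply, emv_apply, smul_eq_mul] at this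
  · intro h x
    induction x using Fin.lastCases with
    | last => simp [sum_dv_apply_last]
    | cast j =>
      rw [sum_dv_apply, Finsupp.smul_apply, emv_apply, smul_eq_mul]
      exact h j

variable {K : Type*} [Field K]

def Eset (t : ℕ) : Set (Fin (s+1) →₀ ℕ) :=
  {e | ∃ a : Fin s → ℕ, (∑ i, a i) = t ∧ (∑ i, a i • dv s δ i) = e}

lemma mgen_eq (i : Fin s) :
    (X (Fin.castSucc i) ^ (δ - 1) * X (Fin.castSucc (i+1)) : MvPolynomial (Fin (s+1)) K)
      = monomial (dv s δ i) 1 := by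
  rw [X_pow_eq_monomial, X, monomial_mul, dv, one_mul]

lemma m_eq :
    (X (0 : Fin (s + 1)) ^ (δ - s) * (∏ i : Fin s, X (Fin.castSucc i)) *
      X (Fin.last s) : MvPolynomial (Fin (s+1)) K) = monomial (emv s δ) 1 := by
  have h : (∏ i : Fin s, (X (Fin.castSucc i) : MvPolynomial (Fin (s+1)) K))
      = monomial (∑ i : Fin s, Finsupp.single i.castSucc 1) 1 := by
    have := prod_monomial_pow (K := K) Finset.univ
      (fun i : Fin s => Finsupp.single i.castSucc 1) (fun _ => 1)
    simpa [X] using this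
  rw [X_pow_eq_monomial, h, X, monomial_mul, monomial_mul, emv]
  ring_nf


lemma span_pow_eq (t : ℕ) :
    (Ideal.span ((fun e => monomial e (1:K)) '' Set.range (dv s δ))) ^ t
      = Ideal.span ((fun e => monomial e (1:K)) '' Eset s δ t) := by
  classical
  induction t with
  | zero =>
    rw [pow_zero, Ideal.one_eq_top, eq_comm, Ideal.eq_top_iff_one]
    refine Ideal.subset_span ⟨0, ⟨fun _ => 0, by simp⟩, by simp⟩
  | succ t ih =>
    rw [pow_succ, ih, Ideal.span_mul_span']
    congr 1
    ext x
    constructor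
    · rintro ⟨u, ⟨e, ⟨a, hsum, hval⟩, rfl⟩, v, ⟨f, ⟨i, rfl⟩, rfl⟩, rfl⟩
      refine ⟨e + dv s δ i, ⟨fun j => a j + if j = i then 1 else 0, ?_, ?_⟩, ?_⟩
      · simp [Finset.sum_add_distrib, hsum]
      · simp only [add_smul, Finset.sum_add_distrib, hval, ite_smul, one_smul, zero_smul]
        simp
      · simp [monomial_mul]
    · rintro ⟨e, ⟨a, hsum, hval⟩, rfl⟩
      have hne : ∃ i, a i ≠ 0 := by
        by_contra h
        push_neg at h
        simp [funext h] at hsum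
      obtain ⟨i, hi⟩ := hne
      set a' : Fin s → ℕ := fun j => if j = i then a i - 1 else a j with ha'
      have haeq : a = fun j => a' j + if j = i then 1 else 0 := by
        funext j
        by_cases hj : j = i <;> simp [ha', hj] <;> omega
      have hsum' : (∑ j, a' j) = t := by
        have := hsum
        rw [haeq] at this
        simp [Finset.sum_add_distrib] at this
        omega
      have hval' : (∑ j, a j • dv s δ j) = (∑ j, a' j • dv s δ j) + dv s δ i := by
        rw [haeq]
        simp only [add_smul, Finset.sum_add_distrib, ite_smul, one_smul, zero_smul]
        simp
      refine ⟨monomial (∑ j, a' j • dv s δ j) 1, ⟨_, ⟨a', hsum', rfl⟩, rfl⟩,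
        monomial (dv s δ i) 1, ⟨_, ⟨i, rfl⟩, rfl⟩, ?_⟩
      show monomial _ 1 * monomial _ 1 = _
      rw [monomial_mul, one_mul, ← hval', hval]


lemma mem_iff_cond (t : ℕ)
    (hspan : (Ideal.span ((fun e => monomial e (1:K)) '' Set.range (dv s δ))) ^ t
      = Ideal.span ((fun e => monomial e (1:K)) '' Eset s δ t)) :
    (monomial (t • emv s δ) (1:K))
        ∈ (Ideal.span ((fun e => monomial e (1:K)) '' Set.range (dv s δ))) ^ t ↔
      ∃ a : Fin s → ℕ, (∑ i, a i) = t ∧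
        ∀ j : Fin s, (δ-1) * a j + a (j - 1) ≤ t * ((if j = 0 then δ - s else 0) + 1) := by
  classical
  rw [hspan, mem_ideal_span_monomial_image]
  have hsupp : (monomial (t • emv s δ) (1:K)).support = {t • emv s δ} := by
    rw [support_monomial, if_neg one_ne_zero]
  rw [hsupp]
  constructor
  · intro h
    obtain ⟨si, ⟨a, h1, h2⟩, h3⟩ := h _ (Finset.mem_singleton_self _)
    exact ⟨a, h1, (le_emv_iff s δ a t).mp (h2 ▸ h3)⟩
  · rintro ⟨a, h1, h2⟩ xi hxi
    rw [Finset.mem_singleton] at hxi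
    subst hxi
    exact ⟨_, ⟨a, h1, rfl⟩, (le_emv_iff s δ a t).mpr h2⟩

end Aux


lemma SIkey (s : ℕ) (Q : ℤ) (hs : 3 ≤ s) (hQ : (s:ℤ) ≤ Q) :
    (Q+1) * (Q - s + 1) * (Q^(s-2)+1) < Q^s - 1 := by
  obtain ⟨e, rfl⟩ : ∃ e, s = e + 2 := ⟨s-2, by omega⟩
  have he : 1 ≤ e := by omega
  have hQ3 : (3:ℤ) ≤ Q := by
    have : ((e:ℤ)+2) ≤ Q := by exact_mod_cast hQ
    have : (1:ℤ) ≤ (e:ℤ) := by exact_mod_cast he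
    linarith
  have h2 : (e + 2) - 2 = e := by omega
  rw [h2, pow_add]
  have hQe : Q ≤ Q^e := by
    calc Q = Q^1 := (pow_one Q).symm
    _ ≤ Q^e := pow_le_pow_right₀ (by linarith) he
  have h1 : Q*Q ≤ Q*Q^e := mul_le_mul_of_nonneg_left hQe (by linarith)
  have h3 : Q*Q^e ≤ (e:ℤ)*(Q*Q^e) := le_mul_of_one_le_left (by nlinarith) (by exact_mod_cast he)
  have hse : ((e:ℤ)+2 : ℤ) ≤ Q := by exact_mod_cast hQ
  have h4 : (0:ℤ) ≤ Q^e := by positivity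
  push_cast
  nlinarith [h1, h3, h4, he]

set_option maxHeartbeats 2000000 in
open Fin.CommRing in
lemma arith_lower (s δ t : ℕ) [NeZero s] (hs : 3 ≤ s) (hδ : s + 1 ≤ δ) (ht : 1 ≤ t)
    (a : Fin s → ℕ) (hsum : (∑ i, a i) = t)
    (hc : ∀ j : Fin s, (δ-1) * a j + a (j - 1) ≤ t * ((if j = 0 then δ - s else 0) + 1)) :
    (δ-1)^(s-2) + 2 ≤ t := by
  classical
  set Q : ℤ := (δ:ℤ) - 1 with hQdef
  have hQs : (s:ℤ) ≤ Q := by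
    have : (s:ℤ) + 1 ≤ (δ:ℤ) := by exact_mod_cast hδ
    omega
  have hs3 : (3:ℤ) ≤ (s:ℤ) := by exact_mod_cast hs
  set A : Fin s → ℤ := fun i => (a i : ℤ) with hAdef
  have hA0 : ∀ i, 0 ≤ A i := fun i => Int.natCast_nonneg _
  have hAsum : (∑ i, A i) = (t:ℤ) := by
    rw [hAdef, ← hsum, Nat.cast_sum]
  -- cast constraints
  have hcast : ∀ j : Fin s, Q * A j + A (j - 1)
      ≤ (t:ℤ) * ((if j = 0 then Q - (s:ℤ) + 1 else 0) + 1) := by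
    intro j
    have h := hc j
    have h2 : (((δ-1) * a j + a (j - 1) : ℕ) : ℤ)
        ≤ ((t * ((if j = 0 then δ - s else 0) + 1) : ℕ) : ℤ) := by exact_mod_cast h
    push_cast at h2
    rw [Nat.cast_sub (by omega : 1 ≤ δ)] at h2
    by_cases hj : j = 0
    · simp only [hj, if_true] at h2 ⊢
      rw [Nat.cast_sub (by omega : s ≤ δ)] at h2
      push_cast at h2
      convert h2 using 2 <;> push_cast <;> ring
    · simp only [hj, if_false] at h2 ⊢
      push_cast at h2
      convert h2 using 2 <;> push_cast <;> ring
  have hc0 : Q * A 0 + A (0 - 1) ≤ (t:ℤ) * (Q - (s:ℤ) + 2) := by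
    have := hcast 0
    simp only [if_true] at this
    linarith [this]
  have hcj : ∀ j : Fin s, j ≠ 0 → Q * A j + A (j - 1) ≤ (t:ℤ) := by
    intro j hj
    have := hcast j
    simp only [hj, if_false] at this
    linarith [this]
  -- sums over erase 0
  have hper : (∑ j : Fin s, A (j - 1)) = ∑ j : Fin s, A j :=
    Fintype.sum_equiv (Equiv.subRight (1 : Fin s)) _ _ (fun j => rfl)
  have hs1 : (∑ j ∈ Finset.univ.erase 0, A j) = (t:ℤ) - A 0 := by
    have := Finset.add_sum_erase Finset.univ A (Finset.mem_univ (0 : Fin s))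
    rw [hAsum] at this  -- careful
    linarith [this]
  have hs2 : (∑ j ∈ Finset.univ.erase 0, A (j - 1)) = (t:ℤ) - A (0 - 1) := by
    have h := Finset.add_sum_erase Finset.univ (fun j => A (j - 1)) (Finset.mem_univ (0 : Fin s))
    rw [hper, hAsum] at h
    linarith [h]
  have hcard : (Finset.univ.erase (0:Fin s)).card = s - 1 := by
    rw [Finset.card_erase_of_mem (Finset.mem_univ _), Finset.card_univ, Fintype.card_fin]
  have hstep : (∑ j ∈ Finset.univ.erase 0, (Q * A j + A (j - 1))) ≤ ((s:ℤ) - 1) * t := by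
    calc (∑ j ∈ Finset.univ.erase 0, (Q * A j + A (j - 1)))
        ≤ ∑ _j ∈ Finset.univ.erase (0:Fin s), (t:ℤ) :=
          Finset.sum_le_sum (fun j hj => hcj j (Finset.ne_of_mem_erase hj))
      _ = ((s:ℤ) - 1) * t := by
          rw [Finset.sum_const, hcard, nsmul_eq_mul]
          rw [Nat.cast_sub (by omega : 1 ≤ s)]
          push_cast; ring
  have hexp : (∑ j ∈ Finset.univ.erase 0, (Q * A j + A (j - 1)))
      = Q * ((t:ℤ) - A 0) + ((t:ℤ) - A (0 - 1)) := by
    rw [Finset.sum_add_distrib, ← Finset.mul_sum, hs1, hs2]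
  -- equalities
  have heq0 : Q * A 0 + A (0 - 1) = (t:ℤ) * (Q - (s:ℤ) + 2) := by
    rw [hexp] at hstep; nlinarith [hstep, hc0]
  have hsumeq : (∑ j ∈ Finset.univ.erase 0, (Q * A j + A (j - 1))) = ((s:ℤ) - 1) * t := by
    rw [hexp]; nlinarith [heq0, hc0, hstep, hexp]
  have htight : ∀ j : Fin s, j ≠ 0 → Q * A j + A (j - 1) = (t:ℤ) := by
    have hz : (∑ j ∈ Finset.univ.erase 0, ((t:ℤ) - (Q * A j + A (j - 1)))) = 0 := by
      rw [Finset.sum_sub_distrib, hsumeq, Finset.sum_const, hcard, nsmul_eq_mul,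
        Nat.cast_sub (by omega : 1 ≤ s)]
      push_cast; ring
    intro j hj
    have := (Finset.sum_eq_zero_iff_of_nonneg (fun i hi => by
      have := hcj i (Finset.ne_of_mem_erase hi); linarith)).mp hz j
      (Finset.mem_erase.mpr ⟨hj, Finset.mem_univ j⟩)
    linarith [this]
  -- the chain
  set b : ℕ → ℤ := fun k => A ((k : ℕ) : Fin s) with hbdef
  have hb0 : b 0 = A 0 := by simp [hbdef]
  have hbl : b (s-1) = A (0 - 1) := by
    have h1 : (((s-1 : ℕ)) : Fin s) = 0 - 1 := by
      rw [Nat.cast_sub (by omega : 1 ≤ s), Fin.natCast_self, Nat.cast_one]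
    simp only [hbdef, h1]
  have hbk : ∀ k, 1 ≤ k → k ≤ s - 1 → Q * b k + b (k - 1) = (t:ℤ) := by
    intro k h1 h2
    have hne : ((k : ℕ) : Fin s) ≠ 0 := by
      rw [Ne, Fin.natCast_eq_zero]
      intro hdvd
      have := Nat.le_of_dvd (by omega) hdvd
      omega
    have hsub : (((k - 1 : ℕ)) : Fin s) = ((k : ℕ) : Fin s) - 1 := by
      rw [Nat.cast_sub (by omega : 1 ≤ k), Nat.cast_one]
    have := htight ((k : ℕ) : Fin s) hne
    rw [← hsub] at this
    exact this
  have hchain : ∀ k, k ≤ s - 1 →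
      b (s-1-k) = (∑ j ∈ Finset.range k, (-Q)^j) * (t:ℤ) + (-Q)^k * b (s-1) := by
    intro k
    induction k with
    | zero => intro _; simp
    | succ k ih =>
      intro hk1
      have hk : k ≤ s - 1 := by omega
      have hrel := hbk (s-1-k) (by omega) (by omega)
      have hidx : s - 1 - k - 1 = s - 1 - (k+1) := by omega
      rw [hidx, ih hk] at hrel
      have hgoal : b (s-1-(k+1)) = (t:ℤ)
          - Q * ((∑ j ∈ Finset.range k, (-Q)^j) * (t:ℤ) + (-Q)^k * b (s-1)) := by
        linarith [hrel]
      rw [hgoal, geom_sum_succ, pow_succ]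
      ring
  have hfin : A 0 = (∑ j ∈ Finset.range (s-1), (-Q)^j) * (t:ℤ) + (-Q)^(s-1) * A (0-1) := by
    have := hchain (s-1) le_rfl
    rw [Nat.sub_self, hb0, hbl] at this
    exact this
  -- geometric sum identities
  have hT : (∑ j ∈ Finset.range s, (-Q)^j)
      = (∑ j ∈ Finset.range (s-1), (-Q)^j) + (-Q)^(s-1) := by
    have h := Finset.sum_range_succ (fun j => (-Q)^j) (s-1)
    rw [show s - 1 + 1 = s from by omega] at h
    exact h
  have hpow : (-Q)^s = (-Q)^(s-1) * (-Q) := by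
    have h := pow_succ (-Q) (s-1)
    rw [show s - 1 + 1 = s from by omega] at h
    exact h
  have hgeom : (∑ j ∈ Finset.range s, (-Q)^j) * (Q+1) = 1 - (-Q)^s := by
    linear_combination (-1 : ℤ) * geom_sum_mul (-Q) s
  have heqn : (∑ j ∈ Finset.range s, (-Q)^j) * ((Q+1) * A (0-1) - (t:ℤ))
      = (Q - (s:ℤ) + 1) * (t:ℤ) := by
    linear_combination heq0 - Q * hfin + Q*(t:ℤ)*hT + ((t:ℤ) - A (0-1))*hpow
      + (A (0-1) - (t:ℤ))*hgeom
  set T : ℤ := ∑ j ∈ Finset.range s, (-Q)^j with hTdef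
  have hdvd : T ∣ (Q - (s:ℤ) + 1) * (t:ℤ) := ⟨_, heqn.symm⟩
  have hpos : (0:ℤ) < (Q - (s:ℤ) + 1) * (t:ℤ) := by
    have h1 : (1:ℤ) ≤ (t:ℤ) := by exact_mod_cast ht
    nlinarith [hQs]
  have hTle : |T| ≤ (Q - (s:ℤ) + 1) * (t:ℤ) := Int.le_of_dvd hpos ((abs_dvd _ _).mpr hdvd)
  have h5 : |T| * (Q+1) = |1 - (-Q)^s| := by
    rw [← abs_of_pos (show (0:ℤ) < Q+1 by linarith), ← abs_mul, hgeom]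
  have habs : |(-Q)^s| = Q^s := by
    rw [abs_pow, abs_neg, abs_of_nonneg (by linarith : (0:ℤ) ≤ Q)]
  have h6 : Q^s - 1 ≤ |1 - (-Q)^s| := by
    calc Q^s - 1 = |(-Q)^s| - |(1:ℤ)| := by rw [habs]; simp
    _ ≤ |(-Q)^s - 1| := abs_sub_abs_le_abs_sub _ _
    _ = |1 - (-Q)^s| := abs_sub_comm _ _
  have hTbig : Q^s - 1 ≤ |T| * (Q+1) := by rw [h5]; exact h6
  -- conclude
  by_contra hcon
  push_neg at hcon
  have htle : (t:ℤ) ≤ Q^(s-2) + 1 := by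
    have h7 : t ≤ (δ-1)^(s-2) + 1 := by omega
    have h8 : ((t:ℕ):ℤ) ≤ (((δ-1)^(s-2) + 1 : ℕ) : ℤ) := by exact_mod_cast h7
    push_cast at h8
    rw [Nat.cast_sub (by omega : 1 ≤ δ)] at h8
    exact_mod_cast h8
  have h9 : |T| ≤ (Q - (s:ℤ) + 1) * (Q^(s-2) + 1) := by
    calc |T| ≤ (Q - (s:ℤ) + 1) * (t:ℤ) := hTle
    _ ≤ (Q - (s:ℤ) + 1) * (Q^(s-2) + 1) :=
        mul_le_mul_of_nonneg_left htle (by linarith [hQs])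
  have h10 := SIkey s Q hs hQs
  nlinarith [h9, h10, hTbig, abs_nonneg T]

set_option maxHeartbeats 2000000 in
open Fin.CommRing in
lemma arith_upper (s δ : ℕ) [NeZero s] (hs : 3 ≤ s) (hδ : s + 1 ≤ δ) :
    ∃ t, 1 ≤ t ∧ t ≤ (δ-1)^s + 1 ∧ ∃ a : Fin s → ℕ, (∑ i, a i) = t ∧
      ∀ j : Fin s, (δ-1) * a j + a (j - 1) ≤ t * ((if j = 0 then δ - s else 0) + 1) := by
  classical
  set Q : ℤ := (δ:ℤ) - 1 with hQdef
  have hQs : (s:ℤ) ≤ Q := by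
    have : (s:ℤ) + 1 ≤ (δ:ℤ) := by exact_mod_cast hδ
    omega
  have hs3 : (3:ℤ) ≤ (s:ℤ) := by exact_mod_cast hs
  have hQ1 : (3:ℤ) ≤ Q := le_trans hs3 hQs
  set T : ℤ := ∑ j ∈ Finset.range s, (-Q)^j with hTdef
  set ε : ℤ := (-1)^(s-1) with hεdef
  have hε : ε = 1 ∨ ε = -1 := by
    rcases Nat.even_or_odd (s-1) with h|h
    · left; exact h.neg_one_pow
    · right; exact h.neg_one_pow
  have hε2 : ε * ε = 1 := by rcases hε with h|h <;> rw [h] <;> norm_num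
  have hεabs : ε ≤ 1 ∧ -1 ≤ ε := by rcases hε with h|h <;> rw [h] <;> norm_num
  have hεs : ((-1:ℤ))^s = -ε := by
    have h := pow_succ (-1:ℤ) (s-1)
    rw [show s - 1 + 1 = s from by omega] at h
    rw [h, hεdef]; ring
  have hgeom : T * (Q+1) = 1 - (-Q)^s := by
    rw [hTdef]; linear_combination (-1 : ℤ) * geom_sum_mul (-Q) s
  have h1 : T * (Q+1) = 1 + ε * Q^s := by
    rw [hgeom, neg_pow, hεs]; ring
  set Nz : ℤ := ε * T with hNzdef
  have KID : (Q+1) * Nz = Q^s + ε := by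
    rw [hNzdef]; linear_combination ε * h1 + Q^s * hε2
  have hQs2 : Q ≤ Q^s := le_self_pow₀ (by linarith) (by omega)
  have hNzpos : 1 ≤ Nz := by nlinarith [KID, hQs2, hεabs.1, hεabs.2]
  have hSI := SIkey s Q hs hQs
  have hNzbig : (Q - s + 1) * (Q^(s-2) + 1) < Nz := by
    have h2 : (Q+1) * ((Q - s + 1) * (Q^(s-2)+1)) < (Q+1) * Nz := by
      rw [KID]; nlinarith [hSI, hεabs.2]
    exact lt_of_mul_lt_mul_left h2 (by linarith)
  set azn : ℕ → ℤ := fun k => Nz + (-1)^k * (Q - s + 1) * Q^(s-1-k) with hazndef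
  have hnn : ∀ k, k ≤ s-1 → 0 ≤ azn k := by
    intro k hk
    rcases Nat.even_or_odd k with h|h
    · have : ((-1:ℤ))^k = 1 := h.neg_one_pow
      simp only [hazndef, this]
      have : (0:ℤ) ≤ Q^(s-1-k) := by positivity
      nlinarith [hQs, hNzpos]
    · have hm1 : ((-1:ℤ))^k = -1 := h.neg_one_pow
      have hk1 : 1 ≤ k := h.pos
      have hp : Q^(s-1-k) ≤ Q^(s-2) := pow_le_pow_right₀ (by linarith) (by omega)
      simp only [hazndef, hm1]
      have h3 : (Q - s + 1) * Q^(s-1-k) ≤ (Q - s + 1) * Q^(s-2) :=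
        mul_le_mul_of_nonneg_left hp (by linarith)
      have h4 : (0:ℤ) ≤ Q^(s-2) := by positivity
      nlinarith [hNzbig, h3, h4]
  -- sum identity
  have hrefl : (∑ k ∈ Finset.range s, (-1:ℤ)^k * Q^(s-1-k)) = ε * T := by
    have h := Finset.sum_range_reflect (fun j => (-1:ℤ)^(s-1-j) * Q^j) s
    have h5 : (∑ j ∈ Finset.range s, (-1:ℤ)^(s-1-(s-1-j)) * Q^(s-1-j))
        = ∑ k ∈ Finset.range s, (-1:ℤ)^k * Q^(s-1-k) := by
      apply Finset.sum_congr rfl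
      intro j hj
      rw [Finset.mem_range] at hj
      rw [show s-1-(s-1-j) = j from by omega]
    rw [h5] at h
    rw [h, hTdef, hεdef, Finset.mul_sum]
    apply Finset.sum_congr rfl
    intro j hj
    rw [Finset.mem_range] at hj
    have h6 : ((-1:ℤ))^(s-1-j) * (-1)^j = (-1)^(s-1) := by
      rw [← pow_add, show s-1-j+j = s-1 from by omega]
    have h7 : ((-1:ℤ))^j * (-1)^j = 1 := by
      rw [← pow_add, ← two_mul, pow_mul]; norm_num
    have h8 : ((-Q):ℤ)^j = (-1)^j * Q^j := by rw [neg_pow]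
    rw [h8]
    linear_combination (Q^j * (-1:ℤ)^j) * h6 - (Q^j * (-1:ℤ)^(s-1-j)) * h7
  have hsum : (∑ k ∈ Finset.range s, azn k) = (Q+1) * Nz := by
    simp only [hazndef]
    rw [Finset.sum_add_distrib, Finset.sum_const, Finset.card_range]
    have h9 : (∑ k ∈ Finset.range s, (-1:ℤ)^k * (Q - s + 1) * Q^(s-1-k))
        = (Q - s + 1) * ∑ k ∈ Finset.range s, (-1:ℤ)^k * Q^(s-1-k) := by
      rw [Finset.mul_sum]; apply Finset.sum_congr rfl; intros; ring
    rw [h9, hrefl, ← hNzdef, nsmul_eq_mul]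
    ring
  -- constraints
  have hcon1 : ∀ k, 1 ≤ k → k ≤ s-1 → Q * azn k + azn (k-1) = (Q+1) * Nz := by
    intro k h1k h2k
    simp only [hazndef]
    have hp : Q^(s-1-(k-1)) = Q^(s-1-k) * Q := by
      rw [← pow_succ, show s-1-k+1 = s-1-(k-1) from by omega]
    have hm : ((-1:ℤ))^k = (-1)^(k-1) * (-1) := by
      rw [← pow_succ, show k-1+1 = k from by omega]
    rw [hp, hm]
    ring
  have hcon0 : Q * azn 0 + azn (s-1) = ((Q - (s:ℤ) + 1) + 1) * ((Q+1) * Nz) := by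
    simp only [hazndef]
    rw [Nat.sub_self, Nat.sub_zero, pow_zero, pow_zero, ← hεdef]
    have hp : Q^(s-1) * Q = Q^s := by
      rw [← pow_succ, show s-1+1 = s from by omega]
    linear_combination (-(Q - (s:ℤ) + 1)) * KID + (Q - (s:ℤ) + 1) * hp
  -- transfer to ℕ
  refine ⟨((Q+1) * Nz).toNat, ?_, ?_, fun i => (azn i.val).toNat, ?_, ?_⟩
  · have : (1:ℤ) ≤ (Q+1) * Nz := by nlinarith [hNzpos]
    omega
  · have h10 : (Q+1) * Nz ≤ Q^s + 1 := by nlinarith [KID, hεabs.1]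
    have h11 : ((((δ:ℕ)-1)^s + 1 : ℕ) : ℤ) = Q^s + 1 := by
      push_cast [Nat.cast_sub (show 1 ≤ δ by omega)]
      ring
    omega
  · show (∑ i : Fin s, (azn i.val).toNat) = ((Q+1) * Nz).toNat
    have h12 : ∀ i : Fin s, ((azn i.val).toNat : ℤ) = azn i.val := by
      intro i
      exact Int.toNat_of_nonneg (hnn i.val (by omega))
    have h13 : (1:ℤ) ≤ (Q+1) * Nz := by nlinarith [hNzpos]
    have h14 : (((Q+1) * Nz).toNat : ℤ) = (Q+1) * Nz := Int.toNat_of_nonneg (by linarith)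
    have h15 : ((∑ i : Fin s, (azn i.val).toNat : ℕ) : ℤ) = (Q+1) * Nz := by
      push_cast
      rw [Finset.sum_congr rfl (fun i _ => h12 i)]
      rw [Fin.sum_univ_eq_sum_range (fun k => azn k) s]
      exact hsum
    omega
  · intro j
    have h12 : ∀ k, k ≤ s - 1 → ((azn k).toNat : ℤ) = azn k :=
      fun k hk => Int.toNat_of_nonneg (hnn k hk)
    have h14 : (((Q+1) * Nz).toNat : ℤ) = (Q+1) * Nz :=
      Int.toNat_of_nonneg (by nlinarith [hNzpos])
    have hd1 : (((δ:ℕ) - 1 : ℕ) : ℤ) = Q := by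
      rw [Nat.cast_sub (show 1 ≤ δ by omega)]; push_cast; ring
    by_cases hj : j = 0
    · subst hj
      have hval : ((0:Fin s) - 1).val = s - 1 := by
        have h16 : ((0:Fin s) - 1) = ((s-1 : ℕ) : Fin s) := by
          rw [Nat.cast_sub (show 1 ≤ s by omega), Fin.natCast_self, Nat.cast_one]
        rw [h16, Fin.val_natCast, Nat.mod_eq_of_lt (by omega)]
      simp only [if_true, Fin.val_zero, hval, eq_self_iff_true, if_pos rfl]
      rw [← Nat.cast_le (α := ℤ)]
      push_cast [hd1, Nat.cast_sub (show s ≤ δ by omega)]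
      rw [h12 0 (by omega), h12 (s-1) le_rfl, h14]
      have h18 : Q * azn 0 + azn (s-1) = (Q+1) * Nz * ((δ:ℤ) - ↑s + 1) := by
        linear_combination hcon0 + ((Q+1)*Nz)*hQdef
      exact le_of_eq h18
    · have hv1 : 1 ≤ j.val := by
        rcases Nat.eq_zero_or_pos j.val with h|h
        · exact absurd (Fin.ext h : j = 0) hj
        · omega
      have hval : (j - 1).val = j.val - 1 := by
        have h16 : j - 1 = ((j.val - 1 : ℕ) : Fin s) := by
          rw [Nat.cast_sub hv1, Fin.cast_val_eq_self, Nat.cast_one]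
        rw [h16, Fin.val_natCast, Nat.mod_eq_of_lt (by omega)]
      simp only [hj, if_false]
      rw [← Nat.cast_le (α := ℤ)]
      push_cast [hd1]
      rw [hval, h12 j.val (by omega), h12 (j.val - 1) (by omega), h14]
      have := hcon1 j.val hv1 (by omega)
      nlinarith [this]


/-- for `s ≥ 3`, `δ ≥ s+1`, `I = (M_1,...,M_s, M)` in `K[X_1,...,X_s,Y]`
with `M_i = X_i^{δ−1}X_{i+1}` (cyclically) and `M = X_1^{δ−s+1}X_2⋯X_s·Y`, the reduction
number `r(I) = min{t ≥ 1 : M^t ∈ J^t} − 1` with `J = (M_1,...,M_s)` satisfies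
`(δ−1)^{s−2} < r(I) ≤ (δ−1)^s`. -/
theorem reduction_number_exponential_bounds
    {K : Type*} [Field K] (s : ℕ) [NeZero s] (hs : 3 ≤ s) (δ : ℕ) (hδ : s + 1 ≤ δ)
    (Mgen : Fin s → MvPolynomial (Fin (s + 1)) K)
    (hMgen : Mgen = fun i =>
      X (Fin.castSucc i) ^ (δ - 1) * X (Fin.castSucc (i + 1)))
    (M : MvPolynomial (Fin (s + 1)) K)
    (hM : M = X (0 : Fin (s + 1)) ^ (δ - s) * (∏ i : Fin s, X (Fin.castSucc i)) *
      X (Fin.last s))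
    (J I : Ideal (MvPolynomial (Fin (s + 1)) K))
    (hJ : J = Ideal.span (Set.range Mgen))
    (hI : I = J ⊔ Ideal.span {M})
    (r : ℕ) (hr : r = sInf {t | 1 ≤ t ∧ M ^ t ∈ J ^ t} - 1) :
    (δ - 1) ^ (s - 2) < r ∧ r ≤ (δ - 1) ^ s := by
  have hMgen' : Mgen = fun i => monomial (dv s δ i) (1:K) := by
    rw [hMgen]; funext i; exact mgen_eq s δ i
  have hJ' : J = Ideal.span ((fun e => monomial e (1:K)) '' Set.range (dv s δ)) := by
    rw [hJ, hMgen']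
    congr 1
    exact Set.range_comp (fun e => monomial e (1:K)) (dv s δ)
  have hM' : M = monomial (emv s δ) (1:K) := by rw [hM]; exact m_eq s δ
  have hMpow : ∀ t : ℕ, M ^ t = monomial (t • emv s δ) (1:K) := by
    intro t
    rw [hM', monomial_pow, one_pow]
  have hchar : ∀ t : ℕ, (M ^ t ∈ J ^ t) ↔
      ∃ a : Fin s → ℕ, (∑ i, a i) = t ∧
        ∀ j : Fin s, (δ-1) * a j + a (j - 1) ≤ t * ((if j = 0 then δ - s else 0) + 1) := by
    intro t
    rw [hMpow t, hJ']
    exact mem_iff_cond s δ t (span_pow_eq s δ t)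
  obtain ⟨t0, ht01, ht0u, ha0⟩ := arith_upper s δ hs hδ
  have ht0S : t0 ∈ {t | 1 ≤ t ∧ M ^ t ∈ J ^ t} := ⟨ht01, (hchar t0).mpr ha0⟩
  have hne : {t | 1 ≤ t ∧ M ^ t ∈ J ^ t}.Nonempty := ⟨t0, ht0S⟩
  have hmem := Nat.sInf_mem hne
  obtain ⟨hinf1, hinfmem⟩ := hmem
  obtain ⟨a, hasum, hac⟩ := (hchar _).mp hinfmem
  have hlow := arith_lower s δ _ hs hδ hinf1 a hasum hac
  have hup : sInf {t | 1 ≤ t ∧ M ^ t ∈ J ^ t} ≤ t0 := Nat.sInf_le ht0S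
  subst hr
  omega
end
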